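/- arXiv:2201.13375 — 9 statements merged into one kernel-verified Lean document; each statement's English description precedes it below -/
import Mathlib

section
/- Let n ≥ 1, let A ∈ ℝ^{n×n} be invertible, let b₀ ∈ ℝⁿ with b₀ ≥ 0 entrywise, and let η, k_i, k_p, μ, θ > 0 with r := μ/θ. Assume g₁ := −eₙᵀA⁻¹e₁ > 0 and g_n := −eₙᵀA⁻¹eₙ > 0, and set g₀ := −eₙᵀA⁻¹b₀ (so g₀ ≥ 0 under the sign assumptions). Then the quadratic polynomial P₁(z) := η g₁ k_i z² + (g₀ − r) η z − g_n k_p μ r has exactly one positive real root z₁*. Moreover, setting z₂* := μ/(η z₁*) and x* := −A⁻¹(e₁ k_i z₁* − eₙ r k_p z₂* + b₀), the triple (x*, z₁*, z₂*) satisfies the closed-loop equilibrium equations A x* + e₁ k_i z₁* − eₙ (eₙᵀx*) k_p z₂* + b₀ = 0, μ − η z₁* z₂* = 0, θ (eₙᵀx*) − η z₁* z₂* = 0, and eₙᵀx* = r; and any triple (x, z₁, z₂) ∈ ℝⁿ × ℝ_{>0} × ℝ satisfying these three equations equals (x*, z₁*, z₂*). -/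
open Matrix

private lemma quad_unique (a b c z w : ℝ) (ha : 0 < a) (hc : c < 0)
    (hz : 0 < z) (hw : 0 < w) (h1 : a*z^2+b*z+c=0) (h2 : a*w^2+b*w+c=0) : z = w := by
  by_contra hne
  have key : (z - w) * (a*(z+w)+b) = 0 := by linear_combination h1 - h2
  have h3 : a*(z+w)+b = 0 := by
    rcases mul_eq_zero.mp key with h | h
    · exact absurd (sub_eq_zero.mp h) hne
    · exact h
  have hcz : c = a*z*w := by linear_combination h1 - z*h3
  nlinarith [mul_pos ha (mul_pos hz hw)]

/-- Equilibrium analysis of the closed-loop AIRC system (Proposition 1 of the paper):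
existence and uniqueness of the positive root of `P₁` and of the equilibrium triple. -/
theorem stmt0 (n : ℕ) (A : Matrix (Fin (n+1)) (Fin (n+1)) ℝ) (hA : IsUnit A)
    (b₀ : Fin (n+1) → ℝ) (hb₀ : ∀ i, 0 ≤ b₀ i)
    (η ki kp μ θ : ℝ) (hη : 0 < η) (hki : 0 < ki) (hkp : 0 < kp) (hμ : 0 < μ) (hθ : 0 < θ)
    (r g₀ g₁ gn : ℝ) (hr : r = μ / θ)
    (hg₁ : g₁ = -(A⁻¹ (Fin.last n) 0)) (hg₁pos : 0 < g₁)
    (hgn : gn = -(A⁻¹ (Fin.last n) (Fin.last n))) (hgnpos : 0 < gn)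
    (hg₀ : g₀ = -((A⁻¹ *ᵥ b₀) (Fin.last n))) :
    ∃ z₁s : ℝ, 0 < z₁s ∧
      η * g₁ * ki * z₁s ^ 2 + (g₀ - r) * η * z₁s - gn * kp * μ * r = 0 ∧
      (∀ z : ℝ, 0 < z → η * g₁ * ki * z ^ 2 + (g₀ - r) * η * z - gn * kp * μ * r = 0 → z = z₁s) ∧
      ∀ z₂s : ℝ, ∀ xs : Fin (n+1) → ℝ, z₂s = μ / (η * z₁s) →
        xs = -(A⁻¹ *ᵥ ((ki * z₁s) • (Pi.single 0 1 : Fin (n+1) → ℝ)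
                - (r * kp * z₂s) • (Pi.single (Fin.last n) 1 : Fin (n+1) → ℝ) + b₀)) →
        (A *ᵥ xs + (ki * z₁s) • (Pi.single 0 1 : Fin (n+1) → ℝ)
            - (kp * z₂s * xs (Fin.last n)) • (Pi.single (Fin.last n) 1 : Fin (n+1) → ℝ) + b₀ = 0) ∧
        μ - η * z₁s * z₂s = 0 ∧
        θ * xs (Fin.last n) - η * z₁s * z₂s = 0 ∧
        xs (Fin.last n) = r ∧
        ∀ (x : Fin (n+1) → ℝ) (z₁ z₂ : ℝ), 0 < z₁ →
          (A *ᵥ x + (ki * z₁) • (Pi.single 0 1 : Fin (n+1) → ℝ)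
              - (kp * z₂ * x (Fin.last n)) • (Pi.single (Fin.last n) 1 : Fin (n+1) → ℝ) + b₀ = 0) →
          μ - η * z₁ * z₂ = 0 →
          θ * x (Fin.last n) - η * z₁ * z₂ = 0 →
          x = xs ∧ z₁ = z₁s ∧ z₂ = z₂s := by
  have hrpos : 0 < r := by rw [hr]; positivity
  set a : ℝ := η * g₁ * ki with ha_def
  set b : ℝ := (g₀ - r) * η with hb_def
  set c : ℝ := -(gn * kp * μ * r) with hc_def
  have hapos : 0 < a := by positivity
  have hcneg : c < 0 := by
    have : 0 < gn * kp * μ * r := by positivity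
    simp [hc_def]; linarith
  set D : ℝ := b^2 - 4*a*c with hD_def
  have hDpos : 0 < D := by nlinarith [sq_nonneg b]
  set s := Real.sqrt D with hs_def
  have hs2 : s^2 = D := Real.sq_sqrt hDpos.le
  have hsnn : 0 ≤ s := Real.sqrt_nonneg D
  have hbs : b < s := by nlinarith [sq_nonneg (b + s), sq_nonneg (b - s)]
  set z₁s : ℝ := (s - b) / (2*a) with hz₁s_def
  have hz₁pos : 0 < z₁s := by
    apply div_pos (by linarith) (by linarith)
  have hroot : a * z₁s^2 + b * z₁s + c = 0 := by
    have key : a * z₁s^2 + b * z₁s + c = (s^2 - (b^2 - 4*a*c)) / (4*a) := by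
      rw [hz₁s_def]; field_simp; ring
    rw [key, hs2, hD_def, sub_self, zero_div]
  refine ⟨z₁s, hz₁pos, by linear_combination hroot, ?_, ?_⟩
  · intro z hzpos hz
    exact quad_unique a b c z z₁s hapos hcneg hzpos hz₁pos (by linear_combination hz) hroot
  -- matrix part
  have hdet : IsUnit A.det := (Matrix.isUnit_iff_isUnit_det A).mp hA
  have hAA : A * A⁻¹ = 1 := Matrix.mul_nonsing_inv A hdet
  have hA'A : A⁻¹ * A = 1 := Matrix.nonsing_inv_mul A hdet
  have hentry : ∀ α β : ℝ,
      (A⁻¹ *ᵥ (α • (Pi.single 0 1 : Fin (n+1) → ℝ)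
        - β • (Pi.single (Fin.last n) 1 : Fin (n+1) → ℝ) + b₀)) (Fin.last n)
      = α * A⁻¹ (Fin.last n) 0 - β * A⁻¹ (Fin.last n) (Fin.last n)
        + (A⁻¹ *ᵥ b₀) (Fin.last n) := by
    intro α β
    simp [Matrix.mulVec_add, Matrix.mulVec_sub, Matrix.mulVec_smul, Matrix.mulVec_single,
      smul_eq_mul]
  intro z₂s xs hz₂s hxs
  have hηz₁ : η * z₁s ≠ 0 := by positivity
  have hμz : η * z₁s * z₂s = μ := by
    rw [hz₂s]; field_simp
  have hz₂pos : 0 < z₂s := by rw [hz₂s]; positivity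
  have hxn : xs (Fin.last n) = r := by
    rw [hxs]
    simp only [Pi.neg_apply]
    rw [hentry]
    have e1 : A⁻¹ (Fin.last n) 0 = -g₁ := by rw [hg₁]; ring
    have e2 : A⁻¹ (Fin.last n) (Fin.last n) = -gn := by rw [hgn]; ring
    have e3 : (A⁻¹ *ᵥ b₀) (Fin.last n) = -g₀ := by rw [hg₀]; ring
    rw [e1, e2, e3]
    have key : (g₁ * ki * z₁s - gn * (r * kp * z₂s) + g₀ - r) * (η * z₁s) = 0 := by
      linear_combination hroot - gn * kp * r * hμz
    have h2 := (mul_eq_zero.mp key).resolve_right hηz₁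
    linear_combination h2
  have hAxs : A *ᵥ xs = -((ki * z₁s) • (Pi.single 0 1 : Fin (n+1) → ℝ)
      - (r * kp * z₂s) • (Pi.single (Fin.last n) 1 : Fin (n+1) → ℝ) + b₀) := by
    rw [hxs, Matrix.mulVec_neg, Matrix.mulVec_mulVec, hAA, Matrix.one_mulVec]
  refine ⟨?_, by linear_combination -hμz, ?_, hxn, ?_⟩
  · rw [hAxs, hxn]
    funext i
    simp only [Pi.add_apply, Pi.sub_apply, Pi.neg_apply, Pi.smul_apply, Pi.zero_apply,
      smul_eq_mul]
    ring
  · rw [hxn, hr]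
    have hth : θ * (μ / θ) = μ := by field_simp
    linear_combination hth - hμz
  · intro x z₁ z₂ hz₁p heq1 heq2 heq3
    have hμz' : η * z₁ * z₂ = μ := by linarith
    have hxnx : x (Fin.last n) = r := by
      have : θ * x (Fin.last n) = μ := by linarith
      rw [hr]; field_simp; linarith
    have hAx1 : A *ᵥ x = -((ki * z₁) • (Pi.single 0 1 : Fin (n+1) → ℝ)
        - (kp * z₂ * x (Fin.last n)) • (Pi.single (Fin.last n) 1 : Fin (n+1) → ℝ) + b₀) := by
      funext i
      have h := congrFun heq1 i
      simp only [Pi.add_apply, Pi.sub_apply, Pi.smul_apply, Pi.neg_apply, Pi.zero_apply,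
        smul_eq_mul] at h ⊢
      linarith
    have hx : x = -(A⁻¹ *ᵥ ((ki * z₁) • (Pi.single 0 1 : Fin (n+1) → ℝ)
        - (kp * z₂ * x (Fin.last n)) • (Pi.single (Fin.last n) 1 : Fin (n+1) → ℝ) + b₀)) := by
      have hxw : x = A⁻¹ *ᵥ (A *ᵥ x) := by
        rw [Matrix.mulVec_mulVec, hA'A, Matrix.one_mulVec]
      conv_lhs => rw [hxw, hAx1, Matrix.mulVec_neg]
    have hxentry : x (Fin.last n) = -((ki * z₁) * A⁻¹ (Fin.last n) 0
        - (kp * z₂ * x (Fin.last n)) * A⁻¹ (Fin.last n) (Fin.last n)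
        + (A⁻¹ *ᵥ b₀) (Fin.last n)) := by
      conv_lhs => rw [hx]
      simp only [Pi.neg_apply]
      rw [hentry]
    have hG : g₁ * (ki * z₁) - gn * (kp * z₂ * r) + g₀ - r = 0 := by
      rw [hxnx] at hxentry
      rw [hg₁, hgn, hg₀]; linarith
    have hrootz : a * z₁^2 + b * z₁ + c = 0 := by
      rw [ha_def, hb_def, hc_def]
      linear_combination (η * z₁) * hG + gn * kp * r * hμz'
    have hz1eq : z₁ = z₁s := quad_unique a b c z₁ z₁s hapos hcneg hz₁p hz₁pos hrootz hroot
    have hz2eq : z₂ = z₂s := by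
      rw [hz₂s, ← hz1eq]
      field_simp
      linarith [hμz']
    refine ⟨?_, hz1eq, hz2eq⟩
    have harg : (ki * z₁) • (Pi.single 0 1 : Fin (n+1) → ℝ)
        - (kp * z₂ * x (Fin.last n)) • (Pi.single (Fin.last n) 1 : Fin (n+1) → ℝ) + b₀
        = (ki * z₁s) • (Pi.single 0 1 : Fin (n+1) → ℝ)
        - (r * kp * z₂s) • (Pi.single (Fin.last n) 1 : Fin (n+1) → ℝ) + b₀ := by
      rw [hz1eq, hz2eq, hxnx]
      funext i
      simp only [Pi.add_apply, Pi.sub_apply, Pi.smul_apply, smul_eq_mul]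
      ring
    rw [hx, harg, ← hxs]
end

section
/- Let g₁ > 0, g_n > 0, g₀ ≥ 0, and k_i, k_p, μ, θ > 0 with r := μ/θ > 0. For each η > 0 let z₁*(η) denote the unique positive real root of the quadratic P₁(z) := η g₁ k_i z² + (g₀ − r) η z − g_n k_p μ r. Then: (1) if r > g₀, then z₁*(η) → (r − g₀)/(g₁ k_i) and μ/(η z₁*(η)) → 0 as η → ∞; (2) if r < g₀, then z₁*(η) → 0 and μ/(η z₁*(η)) → (g₀ − r)/(g_n r k_p) as η → ∞. -/
open Filter Topology

/-- Switching behavior of the AIRC equilibrium in the strong binding limit η → ∞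
(Proposition 2 of the paper, cases r > g₀ and r < g₀). -/
theorem stmt1 (g₀ g₁ gn ki kp μ θ r : ℝ)
    (hg₁ : 0 < g₁) (hgn : 0 < gn) (hg₀ : 0 ≤ g₀)
    (hki : 0 < ki) (hkp : 0 < kp) (hμ : 0 < μ) (hθ : 0 < θ)
    (hr : r = μ / θ) (hrpos : 0 < r)
    (z : ℝ → ℝ)
    (hz : ∀ η : ℝ, 0 < η → 0 < z η ∧
      η * g₁ * ki * (z η) ^ 2 + (g₀ - r) * η * (z η) - gn * kp * μ * r = 0) :
    (r > g₀ → Tendsto z atTop (𝓝 ((r - g₀) / (g₁ * ki))) ∧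
      Tendsto (fun η : ℝ => μ / (η * z η)) atTop (𝓝 0)) ∧
    (r < g₀ → Tendsto z atTop (𝓝 0) ∧
      Tendsto (fun η : ℝ => μ / (η * z η)) atTop (𝓝 ((g₀ - r) / (gn * r * kp)))) := by
  have hapos : 0 < g₁ * ki := mul_pos hg₁ hki
  have hcpos : 0 < gn * kp * μ * r := mul_pos (mul_pos (mul_pos hgn hkp) hμ) hrpos
  -- key factorization: η z (a z + b) = c
  have hfac : ∀ η : ℝ, 0 < η →
      η * z η * (g₁ * ki * z η + (g₀ - r)) = gn * kp * μ * r := by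
    intro η hη
    obtain ⟨_, heq⟩ := hz η hη
    linear_combination heq
  have hX : ∀ η : ℝ, 0 < η → 0 < g₁ * ki * z η + (g₀ - r) := by
    intro η hη
    obtain ⟨hzpos, _⟩ := hz η hη
    by_contra h
    push_neg at h
    nlinarith [hfac η hη, mul_pos hη hzpos]
  -- closed form for z
  have hform : ∀ η : ℝ, 0 < η →
      z η = (-(g₀ - r) + Real.sqrt ((g₀ - r) ^ 2 + 4 * (g₁ * ki) * (gn * kp * μ * r) / η))
        / (2 * (g₁ * ki)) := by
    intro η hη
    obtain ⟨hzpos, heq⟩ := hz η hη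
    have hpos2 : 0 < 2 * (g₁ * ki) * z η + (g₀ - r) := by
      have := hX η hη
      nlinarith [mul_pos hapos hzpos]
    have hsq : (2 * (g₁ * ki) * z η + (g₀ - r)) ^ 2
        = (g₀ - r) ^ 2 + 4 * (g₁ * ki) * (gn * kp * μ * r) / η := by
      field_simp
      linear_combination (4 * (g₁ * ki)) * heq
    have hs : Real.sqrt ((g₀ - r) ^ 2 + 4 * (g₁ * ki) * (gn * kp * μ * r) / η)
        = 2 * (g₁ * ki) * z η + (g₀ - r) := by
      rw [← hsq, Real.sqrt_sq hpos2.le]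
    rw [hs]
    field_simp
    ring
  -- limit of the sqrt expression
  have h0 : Tendsto (fun η : ℝ => (g₀ - r) ^ 2 + 4 * (g₁ * ki) * (gn * kp * μ * r) / η)
      atTop (𝓝 ((g₀ - r) ^ 2)) := by
    have h1 := (tendsto_const_nhds
        (x := (4 * (g₁ * ki) * (gn * kp * μ * r) : ℝ)) (f := atTop (α := ℝ))).div_atTop
      (tendsto_id (α := ℝ))
    simpa using (tendsto_const_nhds (x := ((g₀ - r) ^ 2 : ℝ))).add h1
  have hsqrt : Tendsto
      (fun η : ℝ => Real.sqrt ((g₀ - r) ^ 2 + 4 * (g₁ * ki) * (gn * kp * μ * r) / η))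
      atTop (𝓝 |g₀ - r|) := by
    have := (Real.continuous_sqrt.tendsto ((g₀ - r) ^ 2)).comp h0
    simpa [Real.sqrt_sq_eq_abs, Function.comp_def] using this
  have hzlim : Tendsto z atTop (𝓝 ((-(g₀ - r) + |g₀ - r|) / (2 * (g₁ * ki)))) := by
    refine ((tendsto_const_nhds.add hsqrt).div_const _).congr' ?_
    filter_upwards [eventually_gt_atTop (0 : ℝ)] with η hη
    exact (hform η hη).symm
  -- μ/(η z η) = μ * (a z η + b) / c
  have hform2 : ∀ η : ℝ, 0 < η →
      μ / (η * z η) = μ * (g₁ * ki * z η + (g₀ - r)) / (gn * kp * μ * r) := by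
    intro η hη
    obtain ⟨hzpos, _⟩ := hz η hη
    have h1 := hfac η hη
    have h2 : η * z η ≠ 0 := by positivity
    rw [div_eq_div_iff h2 hcpos.ne']
    linear_combination -μ * h1
  have hratio : Tendsto (fun η : ℝ => μ / (η * z η)) atTop
      (𝓝 (μ * (g₁ * ki * ((-(g₀ - r) + |g₀ - r|) / (2 * (g₁ * ki))) + (g₀ - r))
        / (gn * kp * μ * r))) := by
    refine Tendsto.congr' ?_
      ((((hzlim.const_mul (g₁ * ki)).add_const (g₀ - r)).const_mul μ).div_const
        (gn * kp * μ * r))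
    filter_upwards [eventually_gt_atTop (0 : ℝ)] with η hη
    exact (hform2 η hη).symm
  constructor
  · intro hgt
    have habs : |g₀ - r| = r - g₀ := by rw [abs_of_neg (by linarith)]; ring
    refine ⟨?_, ?_⟩
    · have h : (-(g₀ - r) + |g₀ - r|) / (2 * (g₁ * ki)) = (r - g₀) / (g₁ * ki) := by
        rw [habs]
        field_simp
        ring
      rwa [h] at hzlim
    · have h : μ * (g₁ * ki * ((-(g₀ - r) + |g₀ - r|) / (2 * (g₁ * ki))) + (g₀ - r))
          / (gn * kp * μ * r) = 0 := by
        rw [habs]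
        field_simp
        ring
      rwa [h] at hratio
  · intro hlt
    have habs : |g₀ - r| = g₀ - r := abs_of_pos (by linarith)
    refine ⟨?_, ?_⟩
    · have h : (-(g₀ - r) + |g₀ - r|) / (2 * (g₁ * ki)) = 0 := by
        rw [habs]; ring_nf
      rwa [h] at hzlim
    · have h : μ * (g₁ * ki * ((-(g₀ - r) + |g₀ - r|) / (2 * (g₁ * ki))) + (g₀ - r))
          / (gn * kp * μ * r) = (g₀ - r) / (gn * r * kp) := by
        rw [habs]
        rw [show -(g₀ - r) + (g₀ - r) = 0 by ring]
        field_simp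
        ring
      rwa [h] at hratio
end

section
/- Let n ≥ 1, let A ∈ ℝ^{n×n} be invertible, b₀ ∈ ℝⁿ with b₀ ≥ 0, and let η, k_p, μ, θ > 0 with r := μ/θ > 0. Set g₀ := −eₙᵀA⁻¹b₀ and g_n := −eₙᵀA⁻¹eₙ, and assume g_n > 0. Consider the equilibrium equations of the p-type antithetic integral controller: A x − eₙ (eₙᵀx) k_p z₂ + b₀ = 0, μ − k_p η z₁ z₂ = 0, θ (eₙᵀx) − k_p η z₁ z₂ = 0. These equations admit a solution (x, z₁, z₂) ∈ ℝⁿ × ℝ_{>0} × ℝ_{>0} if and only if r < g₀; and in that case the solution is unique and given by x* = −A⁻¹(−eₙ r u* + b₀), z₁* = μ/(η u*), z₂* = u*/k_p, where u* := (g₀ − r)/(g_n r). -/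
open Matrix

/-- Equilibrium of the p-type AIC closed-loop system (Proposition 3 of the paper):
a positive equilibrium exists iff r < g₀, in which case it is unique and explicit. -/
theorem stmt3 (n : ℕ) (A : Matrix (Fin (n+1)) (Fin (n+1)) ℝ) (hA : IsUnit A)
    (b₀ : Fin (n+1) → ℝ) (hb₀ : ∀ i, 0 ≤ b₀ i)
    (η kp μ θ : ℝ) (hη : 0 < η) (hkp : 0 < kp) (hμ : 0 < μ) (hθ : 0 < θ)
    (r g₀ gn : ℝ) (hr : r = μ / θ) (hrpos : 0 < r)
    (hg₀ : g₀ = -((A⁻¹ *ᵥ b₀) (Fin.last n)))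
    (hgn : gn = -(A⁻¹ (Fin.last n) (Fin.last n))) (hgnpos : 0 < gn) :
    ((∃ (x : Fin (n+1) → ℝ) (z₁ z₂ : ℝ), 0 < z₁ ∧ 0 < z₂ ∧
        (A *ᵥ x - (kp * z₂ * x (Fin.last n)) • (Pi.single (Fin.last n) 1 : Fin (n+1) → ℝ)
          + b₀ = 0) ∧
        μ - kp * η * z₁ * z₂ = 0 ∧
        θ * x (Fin.last n) - kp * η * z₁ * z₂ = 0) ↔ r < g₀) ∧
    (∀ (x : Fin (n+1) → ℝ) (z₁ z₂ : ℝ), 0 < z₁ → 0 < z₂ →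
      (A *ᵥ x - (kp * z₂ * x (Fin.last n)) • (Pi.single (Fin.last n) 1 : Fin (n+1) → ℝ)
        + b₀ = 0) →
      μ - kp * η * z₁ * z₂ = 0 →
      θ * x (Fin.last n) - kp * η * z₁ * z₂ = 0 →
      x = -(A⁻¹ *ᵥ ((-(r * ((g₀ - r) / (gn * r)))) • (Pi.single (Fin.last n) 1 : Fin (n+1) → ℝ)
          + b₀)) ∧
      z₁ = μ / (η * ((g₀ - r) / (gn * r))) ∧
      z₂ = ((g₀ - r) / (gn * r)) / kp) := by
  have hdet : IsUnit A.det := (Matrix.isUnit_iff_isUnit_det A).mp hA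
  have hAiA : A⁻¹ * A = 1 := Matrix.nonsing_inv_mul A hdet
  have hAAi : A * A⁻¹ = 1 := Matrix.mul_nonsing_inv A hdet
  set P : Fin (n+1) → ℝ := Pi.single (Fin.last n) 1 with hP
  have hgn' : A⁻¹ (Fin.last n) (Fin.last n) = -gn := by rw [hgn]; ring
  have hg₀' : (A⁻¹ *ᵥ b₀) (Fin.last n) = -g₀ := by rw [hg₀]; ring
  have hentry : ∀ c : ℝ, (A⁻¹ *ᵥ (c • P)) (Fin.last n)
      = c * A⁻¹ (Fin.last n) (Fin.last n) := by
    intro c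
    simp [hP, Matrix.mulVec, dotProduct, Pi.single_apply, mul_ite, mul_comm]
  set u : ℝ := (g₀ - r) / (gn * r) with hu
  have hgr : gn * r ≠ 0 := ne_of_gt (mul_pos hgnpos hrpos)
  have key : ∀ (x : Fin (n+1) → ℝ) (z₁ z₂ : ℝ), 0 < z₁ → 0 < z₂ →
      (A *ᵥ x - (kp * z₂ * x (Fin.last n)) • P + b₀ = 0) →
      μ - kp * η * z₁ * z₂ = 0 →
      θ * x (Fin.last n) - kp * η * z₁ * z₂ = 0 →
      kp * z₂ = u ∧ x = -(A⁻¹ *ᵥ ((-(r * u)) • P + b₀)) ∧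
        z₁ = μ / (η * u) ∧ z₂ = u / kp := by
    intro x z₁ z₂ hz₁ hz₂ h1 h2 h3
    have hxn : x (Fin.last n) = r := by
      have h4 : θ * x (Fin.last n) = μ := by linarith
      rw [hr]; field_simp; linarith
    have hAx : A *ᵥ x = (kp * z₂ * x (Fin.last n)) • P - b₀ := by
      rw [← sub_eq_zero,
        show A *ᵥ x - ((kp * z₂ * x (Fin.last n)) • P - b₀)
          = A *ᵥ x - (kp * z₂ * x (Fin.last n)) • P + b₀ by module]
      exact h1
    have hx : x = A⁻¹ *ᵥ ((kp * z₂ * r) • P - b₀) := by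
      rw [← hxn, ← hAx, Matrix.mulVec_mulVec, hAiA, Matrix.one_mulVec]
    have hxnval : x (Fin.last n) = -(kp * z₂ * r) * gn + g₀ := by
      rw [hx, Matrix.mulVec_sub]
      simp only [Pi.sub_apply, hentry, hgn', hg₀']
      ring
    have heq : r = -(kp * z₂ * r) * gn + g₀ := by
      have h := hxnval; rw [hxn] at h; exact h
    have hkz : kp * z₂ = u := by
      rw [hu, eq_div_iff hgr]
      linear_combination heq
    have hupos : 0 < u := hkz ▸ mul_pos hkp hz₂
    refine ⟨hkz, ?_, ?_, ?_⟩
    · rw [hx, ← Matrix.mulVec_neg,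
        show -((-(r * u)) • P + b₀) = (u * r) • P - b₀ from by module, ← hkz]
    · rw [eq_div_iff (ne_of_gt (mul_pos hη hupos))]
      linear_combination (-η * z₁) * hkz - h2
    · rw [eq_div_iff (ne_of_gt hkp)]
      linear_combination hkz
  constructor
  · constructor
    · rintro ⟨x, z₁, z₂, hz₁, hz₂, h1, h2, h3⟩
      obtain ⟨hkz, -, -, -⟩ := key x z₁ z₂ hz₁ hz₂ h1 h2 h3
      have hupos : 0 < u := hkz ▸ mul_pos hkp hz₂
      have h := mul_pos hupos (mul_pos hgnpos hrpos)
      rw [hu, div_mul_cancel₀ _ hgr] at h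
      linarith
    · intro hlt
      have hupos : 0 < u := div_pos (sub_pos.mpr hlt) (mul_pos hgnpos hrpos)
      have hxnval : (-(A⁻¹ *ᵥ ((-(r * u)) • P + b₀))) (Fin.last n) = r := by
        simp only [Pi.neg_apply, Matrix.mulVec_add, Pi.add_apply, hentry, hgn', hg₀']
        rw [hu]
        field_simp
        ring
      refine ⟨-(A⁻¹ *ᵥ ((-(r * u)) • P + b₀)), μ / (η * u), u / kp,
        div_pos hμ (mul_pos hη hupos), div_pos hupos hkp, ?_, ?_, ?_⟩
      · have hAw : A *ᵥ (A⁻¹ *ᵥ ((-(r * u)) • P + b₀)) = (-(r * u)) • P + b₀ := by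
          rw [Matrix.mulVec_mulVec, hAAi, Matrix.one_mulVec]
        rw [Matrix.mulVec_neg, hAw, hxnval,
          show kp * (u / kp) * r = r * u by field_simp]
        module
      · field_simp
        ring
      · rw [hxnval, hr]
        field_simp
        ring
  · intro x z₁ z₂ hz₁ hz₂ h1 h2 h3
    obtain ⟨-, hx, hz1, hz2⟩ := key x z₁ z₂ hz₁ hz₂ h1 h2 h3
    exact ⟨hx, hz1, hz2⟩
end

section
/- Let n ≥ 1, Ā ∈ ℝ^{n×n} be Metzler and Hurwitz stable, and let k_p, μ, r, u* > 0. Assume furthermore that the (n+1)×(n+1) matrix [[Ā, −k_p r eₙ], [eₙᵀ, 0]] is Hurwitz stable. For η > 0 define M(η) := [[Ā, 0, −k_p r eₙ], [0, −η u*, −μ k_p/u*], [eₙᵀ, −η u*, −μ k_p/u*]]. Then there exists N > 0 such that M(η) is Hurwitz stable for all η > N. -/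
open Matrix

/-- A real square matrix is Metzler if all its off-diagonal entries are nonnegative. -/
def Metzler {m : Type*} [Fintype m] (M : Matrix m m ℝ) : Prop :=
  ∀ i j, i ≠ j → 0 ≤ M i j

/-- A real square matrix is Hurwitz stable if all its (complex) eigenvalues have
negative real part. -/
def HurwitzStable {m : Type*} [Fintype m] [DecidableEq m] (M : Matrix m m ℝ) : Prop :=
  ∀ z ∈ spectrum ℂ (M.map Complex.ofReal), z.re < 0

set_option maxHeartbeats 1000000 in
lemma mem_spectrum_iff_eig {m : Type*} [Fintype m] [DecidableEq m]
    (A : Matrix m m ℂ) (z : ℂ) :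
    z ∈ spectrum ℂ A ↔ ∃ v : m → ℂ, v ≠ 0 ∧ A.mulVec v = z • v := by
  rw [spectrum.mem_iff, Algebra.algebraMap_eq_smul_one]
  have hdet : ¬ IsUnit (z • (1 : Matrix m m ℂ) - A) ↔ (z • (1 : Matrix m m ℂ) - A).det = 0 := by
    rw [Matrix.isUnit_iff_isUnit_det, isUnit_iff_ne_zero, not_not]
  rw [hdet, ← Matrix.exists_mulVec_eq_zero_iff]
  constructor
  · rintro ⟨v, hv0, hv⟩
    refine ⟨v, hv0, ?_⟩
    rw [Matrix.sub_mulVec, Matrix.smul_mulVec, Matrix.one_mulVec, sub_eq_zero] at hv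
    rw [← hv]
  · rintro ⟨v, hv0, hv⟩
    exact ⟨v, hv0, by rw [Matrix.sub_mulVec, Matrix.smul_mulVec, Matrix.one_mulVec, hv, sub_self]⟩


set_option maxHeartbeats 1000000 in
/-- Proposition 6 of the paper: if in addition the reduced (n+1)×(n+1) matrix
[[Ā, −k_p r eₙ], [eₙᵀ, 0]] is Hurwitz stable, then the closed-loop Jacobian of the
p-type AIC is Hurwitz stable for all sufficiently large η. -/
theorem stmt6 (n : ℕ) (Abar : Matrix (Fin (n+1)) (Fin (n+1)) ℝ)
    (hMetz : Metzler Abar) (hHur : HurwitzStable Abar)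
    (kp μ r u : ℝ) (hkp : 0 < kp) (hμ : 0 < μ) (hr : 0 < r) (hu : 0 < u)
    (hred : HurwitzStable (Matrix.fromBlocks Abar
        (Matrix.of fun (i : Fin (n+1)) (_ : Fin 1) =>
          -(kp * r) * (Pi.single (Fin.last n) 1 : Fin (n+1) → ℝ) i)
        (Matrix.of fun (_ : Fin 1) (j : Fin (n+1)) =>
          (Pi.single (Fin.last n) 1 : Fin (n+1) → ℝ) j)
        (0 : Matrix (Fin 1) (Fin 1) ℝ))) :
    ∃ N > 0, ∀ η : ℝ, N < η →
      HurwitzStable (Matrix.fromBlocks Abar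
        (Matrix.of fun (i : Fin (n+1)) (j : Fin 2) =>
          if j = 1 then -(kp * r) * (Pi.single (Fin.last n) 1 : Fin (n+1) → ℝ) i else 0)
        (Matrix.of fun (i : Fin 2) (j : Fin (n+1)) =>
          if i = 1 then (Pi.single (Fin.last n) 1 : Fin (n+1) → ℝ) j else 0)
        !![-(η * u), -(μ * kp / u); -(η * u), -(μ * kp / u)]) := by
  classical
  set Ac : Matrix (Fin (n+1)) (Fin (n+1)) ℂ := Abar.map Complex.ofReal with hAc
  set c' : ℝ := μ * kp / u with hc'def
  have hc' : 0 < c' := by positivity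
  set Ainf : ℝ := ∑ i, ∑ j, ‖Abar i j‖ with hAinf
  have hAinf0 : 0 ≤ Ainf := by positivity
  set R : ℝ := Ainf + c' + kp * r + 1 with hRdef
  have hR : 0 < R := by positivity
  set Mred : Matrix (Fin (n+1) ⊕ Fin 1) (Fin (n+1) ⊕ Fin 1) ℝ := Matrix.fromBlocks Abar
        (Matrix.of fun (i : Fin (n+1)) (_ : Fin 1) =>
          -(kp * r) * (Pi.single (Fin.last n) 1 : Fin (n+1) → ℝ) i)
        (Matrix.of fun (_ : Fin 1) (j : Fin (n+1)) =>
          (Pi.single (Fin.last n) 1 : Fin (n+1) → ℝ) j)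
        (0 : Matrix (Fin 1) (Fin 1) ℝ) with hMreddef
  set Mc : Matrix (Fin (n+1) ⊕ Fin 1) (Fin (n+1) ⊕ Fin 1) ℂ := Mred.map Complex.ofReal with hMc
  have hdetS : ∀ l : ℂ, 0 ≤ l.re → (l • (1 : Matrix (Fin (n+1) ⊕ Fin 1) (Fin (n+1) ⊕ Fin 1) ℂ) - Mc).det ≠ 0 := by
    intro l hl hdet
    have : l ∈ spectrum ℂ Mc := by
      rw [spectrum.mem_iff, Algebra.algebraMap_eq_smul_one, Matrix.isUnit_iff_isUnit_det,
        isUnit_iff_ne_zero, not_not]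
      exact hdet
    exact absurd (hred l this) (not_lt.mpr hl)
  set H : ℂ → ℂ := fun l => ((l • (1 : Matrix (Fin (n+1) ⊕ Fin 1) (Fin (n+1) ⊕ Fin 1) ℂ) - Mc).det)⁻¹
      * (l • (1 : Matrix (Fin (n+1) ⊕ Fin 1) (Fin (n+1) ⊕ Fin 1) ℂ) - Mc).adjugate (Sum.inr 0) (Sum.inr 0) with hHdef
  set S : Set ℂ := {l : ℂ | 0 ≤ l.re ∧ ‖l‖ ≤ R} with hSdef
  have hScompact : IsCompact S := by
    apply Metric.isCompact_of_isClosed_isBounded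
    · exact (isClosed_le continuous_const Complex.continuous_re).inter
        (isClosed_le continuous_norm continuous_const)
    · exact Metric.isBounded_closedBall.subset fun l hl => by
        rw [Metric.mem_closedBall, dist_zero_right]; exact hl.2
  have hSne : S.Nonempty := ⟨0, by simp [hSdef]; positivity⟩
  have hMlcont : Continuous (fun l : ℂ => l • (1 : Matrix (Fin (n+1) ⊕ Fin 1) (Fin (n+1) ⊕ Fin 1) ℂ) - Mc) :=
    (continuous_id.smul continuous_const).sub continuous_const
  have hHcont : ContinuousOn (fun l => ‖H l‖) S := by
    apply ContinuousOn.norm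
    apply ContinuousOn.mul
    · exact ContinuousOn.inv₀ hMlcont.matrix_det.continuousOn fun l hl => hdetS l hl.1
    · exact (hMlcont.matrix_adjugate.matrix_elem _ _).continuousOn
  obtain ⟨l0, hl0S, hC'⟩ := hScompact.exists_isMaxOn hSne hHcont
  have hC : ∀ l ∈ S, ‖H l‖ ≤ ‖H l0‖ := hC'
  set C : ℝ := ‖H l0‖ with hCdef
  have hC0 : 0 ≤ C := norm_nonneg _
  refine ⟨1 + c' * R * C / u, by positivity, ?_⟩
  intro η hη lam hlam
  by_contra hre
  push_neg at hre
  have hηpos : 0 < η := lt_trans (by positivity) hη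
  obtain ⟨v, hv0, hv⟩ := (mem_spectrum_iff_eig _ lam).mp hlam
  set x0 : Fin (n+1) → ℂ := fun i => v (Sum.inl i) with hx0
  set zz : Fin 2 → ℂ := fun k => v (Sum.inr k) with hzz
  have hveq : v = Sum.elim x0 zz := funext fun i => by cases i <;> rfl
  rw [hveq, Matrix.fromBlocks_map, Matrix.fromBlocks_mulVec] at hv
  have heqx : ∀ i, (Ac *ᵥ x0) i + (↑(-(kp*r) * (Pi.single (Fin.last n) 1 : Fin (n+1) → ℝ) i) : ℂ) * zz 1 = lam * x0 i := by
    intro i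
    have := congrFun hv (Sum.inl i)
    simp only [Sum.elim_inl, Pi.add_apply, Pi.smul_apply, smul_eq_mul] at this
    rw [← this]
    congr 1
    simp [Matrix.mulVec, dotProduct, Fin.sum_univ_two, Matrix.map_apply]
  have heq0 : (↑(-(η*u)) : ℂ) * zz 0 + (↑(-c') : ℂ) * zz 1 = lam * zz 0 := by
    have := congrFun hv (Sum.inr 0)
    simp only [Sum.elim_inr, Pi.add_apply, Pi.smul_apply, smul_eq_mul] at this
    rw [← this]
    simp [Matrix.mulVec, dotProduct, Fin.sum_univ_two, Matrix.map_apply]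
  have heq1 : (x0 (Fin.last n) : ℂ) + ((↑(-(η*u)) : ℂ) * zz 0 + (↑(-c') : ℂ) * zz 1) = lam * zz 1 := by
    have := congrFun hv (Sum.inr 1)
    simp only [Sum.elim_inr, Pi.add_apply, Pi.smul_apply, smul_eq_mul] at this
    rw [← this]
    congr 1
    · simp [Matrix.mulVec, dotProduct, Matrix.map_apply, Pi.single_apply, apply_ite,
        ite_mul, Finset.sum_ite_eq']
    · simp [Matrix.mulVec, dotProduct, Fin.sum_univ_two, Matrix.map_apply]
  have hlamη : lam + (↑(η*u) : ℂ) ≠ 0 := by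
    intro h
    have : (lam + (↑(η*u) : ℂ)).re = 0 := by rw [h]; simp
    rw [Complex.add_re, Complex.ofReal_re] at this
    nlinarith [mul_pos hηpos hu]
  by_cases hz1 : zz 1 = 0
  · -- case z1 = 0 : lam is an eigenvalue of Abar
    have hz0 : zz 0 = 0 := by
      have h1 : (lam + (↑(η*u) : ℂ)) * zz 0 = 0 := by
        rw [hz1] at heq0; push_cast at heq0 ⊢; linear_combination -heq0
      exact (mul_eq_zero.mp h1).resolve_left hlamη
    have hx0ne : x0 ≠ 0 := by
      intro h
      apply hv0
      funext i
      cases i with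
      | inl i => exact congrFun h i
      | inr k => fin_cases k
                 · exact hz0
                 · exact hz1
    have hAx : Ac *ᵥ x0 = lam • x0 := by
      funext i
      have := heqx i
      rw [hz1, mul_zero, add_zero] at this
      simpa using this
    have : lam ∈ spectrum ℂ Ac := (mem_spectrum_iff_eig Ac lam).mpr ⟨x0, hx0ne, hAx⟩
    exact absurd (hHur lam this) (not_lt.mpr hre)
  · -- case z1 ≠ 0
    set y : Fin (n+1) → ℂ := (zz 1)⁻¹ • x0 with hy
    have heqy : ∀ i, (Ac *ᵥ y) i + (↑(-(kp*r) * (Pi.single (Fin.last n) 1 : Fin (n+1) → ℝ) i) : ℂ) = lam * y i := by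
      intro i
      have h := heqx i
      have hAy : (Ac *ᵥ y) i = (zz 1)⁻¹ * (Ac *ᵥ x0) i := by
        rw [hy, Matrix.mulVec_smul]; simp
      rw [hAy, hy]
      simp only [Pi.smul_apply, smul_eq_mul]
      push_cast at h ⊢
      field_simp
      ring_nf
      ring_nf at h
      linear_combination h
    set ε : ℂ := lam * (↑c' : ℂ) / (lam + (↑(η*u) : ℂ)) with hε
    have hεmul : ε * (lam + (↑(η*u) : ℂ)) = lam * (↑c' : ℂ) := by
      rw [hε]; exact div_mul_cancel₀ _ hlamη
    have hylast : y (Fin.last n) = lam + ε := by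
      have hx0last : x0 (Fin.last n) = lam * (zz 1 - zz 0) := by
        linear_combination heq1 - heq0
      have hz0v : (lam + (↑(η*u) : ℂ)) * zz 0 = -(↑c' : ℂ) * zz 1 := by
        simp only [Complex.ofReal_neg] at heq0
        linear_combination -heq0
      have key : x0 (Fin.last n) * (lam + (↑(η*u) : ℂ)) = ((lam + ε) * zz 1) * (lam + (↑(η*u) : ℂ)) := by
        linear_combination (lam + (↑(η*u) : ℂ)) * hx0last - lam * hz0v - zz 1 * hεmul
      have key2 : x0 (Fin.last n) = (lam + ε) * zz 1 := mul_right_cancel₀ hlamη key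
      rw [hy]
      simp only [Pi.smul_apply, smul_eq_mul]
      rw [key2, mul_comm (lam + ε), ← mul_assoc, inv_mul_cancel₀ hz1, one_mul]
    have hεnorm : ‖ε‖ * ‖lam + (↑(η*u) : ℂ)‖ = ‖lam‖ * c' := by
      have := congrArg norm hεmul
      rw [norm_mul, norm_mul] at this
      rw [this]
      congr 1
      rw [Complex.norm_real, Real.norm_of_nonneg (le_of_lt hc')]
    have hge1 : ‖lam‖ ≤ ‖lam + (↑(η*u) : ℂ)‖ := by
      have h1 : Complex.normSq lam ≤ Complex.normSq (lam + (↑(η*u) : ℂ)) := by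
        simp only [Complex.normSq_apply, Complex.add_re, Complex.add_im, Complex.ofReal_re,
          Complex.ofReal_im, add_zero]
        nlinarith [mul_pos hηpos hu, mul_nonneg hre (le_of_lt (mul_pos hηpos hu))]
      rw [Complex.norm_def, Complex.norm_def]
      exact Real.sqrt_le_sqrt h1
    have hge2 : η * u ≤ ‖lam + (↑(η*u) : ℂ)‖ := by
      calc η * u ≤ (lam + (↑(η*u) : ℂ)).re := by
            rw [Complex.add_re, Complex.ofReal_re]; linarith
        _ ≤ ‖lam + (↑(η*u) : ℂ)‖ := Complex.re_le_norm _
    have hnormpos : 0 < ‖lam + (↑(η*u) : ℂ)‖ := lt_of_lt_of_le (mul_pos hηpos hu) hge2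
    have hεle : ‖ε‖ ≤ μ*kp/u := by
      nlinarith [norm_nonneg ε, mul_le_mul_of_nonneg_left hge1 (le_of_lt hc'), hc']
    have hlamR : ‖lam‖ ≤ R := by
      by_contra hcon
      push_neg at hcon
      obtain ⟨i0, -, hmax⟩ := Finset.exists_max_image Finset.univ (fun i => ‖y i‖)
        ⟨Fin.last n, Finset.mem_univ _⟩
      have hmax' : ∀ j, ‖y j‖ ≤ ‖y i0‖ := fun j => hmax j (Finset.mem_univ j)
      have hm0 : 0 ≤ ‖y i0‖ := norm_nonneg _
      have hbound : ‖lam‖ * ‖y i0‖ ≤ Ainf * ‖y i0‖ + kp * r := by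
        have h := heqy i0
        have h1 : ‖lam * y i0‖ ≤ ‖(Ac *ᵥ y) i0‖ + ‖(↑(-(kp*r) * (Pi.single (Fin.last n) 1 : Fin (n+1) → ℝ) i0) : ℂ)‖ := by
          rw [← h]; exact norm_add_le _ _
        have h2 : ‖(Ac *ᵥ y) i0‖ ≤ Ainf * ‖y i0‖ := by
          have h3 : ‖(Ac *ᵥ y) i0‖ ≤ ∑ j, ‖Abar i0 j‖ * ‖y i0‖ := by
            calc ‖(Ac *ᵥ y) i0‖ = ‖∑ j, Ac i0 j * y j‖ := rfl
              _ ≤ ∑ j, ‖Ac i0 j * y j‖ := norm_sum_le _ _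
              _ ≤ ∑ j, ‖Abar i0 j‖ * ‖y i0‖ := by
                  apply Finset.sum_le_sum
                  intro j _
                  rw [norm_mul, hAc, Matrix.map_apply, Complex.norm_real]
                  exact mul_le_mul_of_nonneg_left (hmax' j) (norm_nonneg _)
          calc ‖(Ac *ᵥ y) i0‖ ≤ ∑ j, ‖Abar i0 j‖ * ‖y i0‖ := h3
            _ = (∑ j, ‖Abar i0 j‖) * ‖y i0‖ := by rw [Finset.sum_mul]
            _ ≤ Ainf * ‖y i0‖ := by
                refine mul_le_mul_of_nonneg_right ?_ hm0
                rw [hAinf]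
                exact Finset.single_le_sum (f := fun i => ∑ j, ‖Abar i j‖)
                  (fun i _ => by positivity) (Finset.mem_univ i0)
        have h4 : ‖(↑(-(kp*r) * (Pi.single (Fin.last n) 1 : Fin (n+1) → ℝ) i0) : ℂ)‖ ≤ kp * r := by
          rw [Complex.norm_real, Real.norm_eq_abs, abs_mul, abs_neg, abs_of_pos (mul_pos hkp hr)]
          have : |(Pi.single (Fin.last n) 1 : Fin (n+1) → ℝ) i0| ≤ 1 := by
            rw [Pi.single_apply]
            rcases eq_or_ne i0 (Fin.last n) with hh | hh <;> simp [hh]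
          nlinarith [mul_pos hkp hr]
        rw [norm_mul] at h1
        linarith
      have hmge : ‖lam‖ - c' ≤ ‖y i0‖ := by
        have : ‖lam‖ ≤ ‖y (Fin.last n)‖ + ‖ε‖ := by
          calc ‖lam‖ = ‖(lam + ε) - ε‖ := by ring_nf
            _ ≤ ‖lam + ε‖ + ‖ε‖ := norm_sub_le _ _
            _ = ‖y (Fin.last n)‖ + ‖ε‖ := by rw [hylast]
        linarith [hmax' (Fin.last n), hεle]
      rw [hRdef] at hcon
      nlinarith [mul_pos hkp hr, hc']
    -- reduced matrix relation
    set w : (Fin (n+1) ⊕ Fin 1) → ℂ := Sum.elim y (fun _ => 1) with hw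
    have hweq : (lam • (1 : Matrix (Fin (n+1) ⊕ Fin 1) (Fin (n+1) ⊕ Fin 1) ℂ) - Mc) *ᵥ w
        = Sum.elim (0 : Fin (n+1) → ℂ) (fun _ => -ε) := by
      rw [Matrix.sub_mulVec, Matrix.smul_mulVec, Matrix.one_mulVec]
      rw [hMc, hMreddef, Matrix.fromBlocks_map, hw, Matrix.fromBlocks_mulVec]
      simp only [Sum.elim_comp_inl, Sum.elim_comp_inr]
      funext k
      cases k with
      | inl i =>
        have h := heqy i
        simp only [Pi.sub_apply, Pi.smul_apply, Sum.elim_inl, smul_eq_mul, Pi.add_apply, Pi.zero_apply]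
        have hB : ((Matrix.of fun (i : Fin (n+1)) (_ : Fin 1) =>
            -(kp * r) * (Pi.single (Fin.last n) 1 : Fin (n+1) → ℝ) i).map Complex.ofReal *ᵥ (fun _ => 1)) i
            = (↑(-(kp*r) * (Pi.single (Fin.last n) 1 : Fin (n+1) → ℝ) i) : ℂ) := by
          simp [Matrix.mulVec, dotProduct, Matrix.map_apply]
        rw [hB]
        linear_combination -h
      | inr k =>
        simp only [Pi.sub_apply, Pi.smul_apply, Sum.elim_inr, smul_eq_mul, Pi.add_apply, mul_one]
        have hC1 : ((Matrix.of fun (_ : Fin 1) (j : Fin (n+1)) =>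
            (Pi.single (Fin.last n) 1 : Fin (n+1) → ℝ) j).map Complex.ofReal *ᵥ y) k
            = y (Fin.last n) := by
          simp [Matrix.mulVec, dotProduct, Matrix.map_apply, Pi.single_apply, apply_ite,
            ite_mul, Finset.sum_ite_eq']
        have hzero : (((0 : Matrix (Fin 1) (Fin 1) ℝ)).map Complex.ofReal *ᵥ (fun _ => 1)) k = 0 := by
          simp [Matrix.mulVec, dotProduct, Matrix.map_apply]
        rw [hC1, hzero, hylast]
        ring
    have hunit : IsUnit (lam • (1 : Matrix (Fin (n+1) ⊕ Fin 1) (Fin (n+1) ⊕ Fin 1) ℂ) - Mc).det :=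
      isUnit_iff_ne_zero.mpr (hdetS lam hre)
    have hwinv : w = (lam • (1 : Matrix (Fin (n+1) ⊕ Fin 1) (Fin (n+1) ⊕ Fin 1) ℂ) - Mc)⁻¹ *ᵥ
        Sum.elim (0 : Fin (n+1) → ℂ) (fun _ => -ε) := by
      rw [← hweq, Matrix.mulVec_mulVec, Matrix.nonsing_inv_mul _ hunit, Matrix.one_mulVec]
    have h1eq : (1:ℂ) = (lam • (1 : Matrix (Fin (n+1) ⊕ Fin 1) (Fin (n+1) ⊕ Fin 1) ℂ) - Mc)⁻¹
        (Sum.inr 0) (Sum.inr 0) * (-ε) := by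
      have := congrFun hwinv (Sum.inr 0)
      rw [hw] at this
      simp only [Sum.elim_inr] at this
      rw [this]
      simp [Matrix.mulVec, dotProduct, Fintype.sum_sum_type]
    have hHval : (lam • (1 : Matrix (Fin (n+1) ⊕ Fin 1) (Fin (n+1) ⊕ Fin 1) ℂ) - Mc)⁻¹
        (Sum.inr 0) (Sum.inr 0) = H lam := by
      rw [Matrix.inv_def, hHdef]
      simp [Ring.inverse_eq_inv']
    have hfinal : (1:ℝ) = ‖ε‖ * ‖H lam‖ := by
      have := congrArg norm h1eq
      rw [norm_one, hHval] at this
      rw [this, norm_mul, norm_neg]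
      ring
    have hHle : ‖H lam‖ ≤ C := hC lam ⟨hre, hlamR⟩
    have hεsmall : ‖ε‖ * (η * u) ≤ R * c' := by
      nlinarith [norm_nonneg ε, hεnorm, mul_le_mul_of_nonneg_right hlamR (le_of_lt hc')]
    -- final contradiction
    have hηu : u + c' * R * C < η * u := by
      have := mul_lt_mul_of_pos_right hη hu
      calc u + c' * R * C = (1 + c' * R * C / u) * u := by field_simp
        _ < η * u := by exact this
    have hC0' : 0 < C := by
      rcases lt_or_ge 0 C with h | h
      · exact h
      · exfalso
        have : ‖H lam‖ = 0 := le_antisymm (le_trans hHle h) (norm_nonneg _)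
        rw [this, mul_zero] at hfinal
        norm_num at hfinal
    have : 1 * (η * u) ≤ (R * c') * C := by
      calc 1 * (η * u) = (‖ε‖ * ‖H lam‖) * (η * u) := by rw [← hfinal]
        _ = (‖ε‖ * (η * u)) * ‖H lam‖ := by ring
        _ ≤ (R * c') * C := by
            apply mul_le_mul hεsmall hHle (norm_nonneg _)
            positivity
    nlinarith [mul_pos hμ hkp, hc', hR]
end

section
/- Let n ≥ 2 and let M ∈ ℝ^{n×n} be Metzler and Hurwitz stable. Then the leading principal (n−1)×(n−1) submatrix M₁₁ of M (obtained by deleting the last row and column) is Hurwitz stable, and the bottom-right entry M_{nn} is negative. -/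
open Matrix

open Filter
theorem hurwitz_of_pos_vec {m : Type*} [Fintype m] [DecidableEq m] [Nonempty m]
    (M : Matrix m m ℝ) (hM : Metzler M) (x : m → ℝ) (hx : ∀ i, 0 < x i)
    (hMx : ∀ i, M.mulVec x i < 0) : HurwitzStable M := by
  intro z hz
  rw [spectrum.mem_iff, Matrix.isUnit_iff_isUnit_det, isUnit_iff_ne_zero, not_not,
    ← Matrix.exists_mulVec_eq_zero_iff] at hz
  obtain ⟨v, hv, hveq⟩ := hz
  have heig : ∀ i, (M.map Complex.ofReal).mulVec v i = z * v i := by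
    intro i
    have h0 := congrFun hveq i
    simp only [Matrix.sub_mulVec, Matrix.algebraMap_eq_diagonal, Pi.sub_apply,
      Pi.algebraMap_apply, Algebra.algebraMap_self, RingHom.id_apply,
      Matrix.mulVec_diagonal, Pi.zero_apply, sub_eq_zero] at h0
    exact h0.symm
  classical
  obtain ⟨i₀, -, hi₀⟩ := Finset.exists_max_image Finset.univ
    (fun i => ‖v i‖ / x i) ⟨Classical.arbitrary m, Finset.mem_univ _⟩
  set c : ℝ := ‖v i₀‖ / x i₀ with hc
  have hcb : ∀ j, ‖v j‖ ≤ c * x j := by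
    intro j
    have h1 := hi₀ j (Finset.mem_univ j)
    rw [div_le_iff₀ (hx j)] at h1
    linarith [h1]
  have hcpos : 0 < c := by
    obtain ⟨j, hj⟩ : ∃ j, v j ≠ 0 := by
      by_contra h
      push_neg at h
      exact hv (funext h)
    have h1 : 0 < ‖v j‖ := norm_pos_iff.mpr hj
    have h2 := hi₀ j (Finset.mem_univ j)
    have h3 : 0 < ‖v j‖ / x j := div_pos h1 (hx j)
    linarith
  have hvio : ‖v i₀‖ = c * x i₀ := by
    rw [hc, div_mul_cancel₀ _ (hx i₀).ne']
  have key : (z - (M i₀ i₀ : ℂ)) * v i₀ = ∑ j ∈ Finset.univ.erase i₀, (M i₀ j : ℂ) * v j := by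
    have h1 := heig i₀
    rw [Matrix.mulVec, dotProduct] at h1
    rw [← Finset.add_sum_erase _ _ (Finset.mem_univ i₀)] at h1
    simp only [Matrix.map_apply] at h1
    rw [sub_mul]
    linear_combination h1.symm
  have habs : ‖z - (M i₀ i₀ : ℂ)‖ * (c * x i₀)
      ≤ c * ∑ j ∈ Finset.univ.erase i₀, M i₀ j * x j := by
    rw [← hvio, ← norm_mul, key]
    calc ‖∑ j ∈ Finset.univ.erase i₀, (M i₀ j : ℂ) * v j‖
        ≤ ∑ j ∈ Finset.univ.erase i₀, ‖(M i₀ j : ℂ) * v j‖ := norm_sum_le _ _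
      _ ≤ ∑ j ∈ Finset.univ.erase i₀, M i₀ j * (c * x j) := by
          apply Finset.sum_le_sum
          intro j hj
          rw [norm_mul, Complex.norm_real]
          have hMij : 0 ≤ M i₀ j := hM i₀ j (Finset.ne_of_mem_erase hj).symm
          rw [Real.norm_eq_abs, abs_of_nonneg hMij]
          exact mul_le_mul_of_nonneg_left (hcb j) hMij
      _ = c * ∑ j ∈ Finset.univ.erase i₀, M i₀ j * x j := by
          rw [Finset.mul_sum]; congr 1; ext j; ring
  have hsum : ∑ j ∈ Finset.univ.erase i₀, M i₀ j * x j < - (M i₀ i₀ * x i₀) := by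
    have h1 := hMx i₀
    rw [Matrix.mulVec, dotProduct, ← Finset.add_sum_erase _ _ (Finset.mem_univ i₀)] at h1
    linarith
  have hfin : ‖z - (M i₀ i₀ : ℂ)‖ < - M i₀ i₀ := by
    have h2 : ‖z - (M i₀ i₀ : ℂ)‖ * (c * x i₀) < c * (-(M i₀ i₀ * x i₀)) :=
      lt_of_le_of_lt habs (by nlinarith)
    have h3 : 0 < c * x i₀ := mul_pos hcpos (hx i₀)
    nlinarith
  have h4 : z.re - M i₀ i₀ ≤ ‖z - (M i₀ i₀ : ℂ)‖ := by
    have := Complex.re_le_norm (z - (M i₀ i₀ : ℂ))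
    simpa using this
  linarith

attribute [local instance] Matrix.linftyOpNormedRing Matrix.linftyOpNormedAlgebra

lemma entry_norm_le {m : Type*} [Fintype m] [DecidableEq m] (Z : Matrix m m ℂ) (i j : m) :
    ‖Z i j‖ ≤ ‖Z‖ := by
  have h1 : ‖Z i j‖₊ ≤ ∑ j', ‖Z i j'‖₊ :=
    Finset.single_le_sum (f := fun j' => ‖Z i j'‖₊) (fun j' _ => zero_le)
      (Finset.mem_univ j)
  have h2 : (∑ j', ‖Z i j'‖₊) ≤ ‖Z‖₊ := by
    rw [Matrix.linfty_opNNNorm_def]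
    exact Finset.le_sup (f := fun i => ∑ j', ‖Z i j'‖₊) (Finset.mem_univ i)
  exact_mod_cast h1.trans h2

theorem exists_nonneg_mulVec_neg {m : Type*} [Fintype m] [DecidableEq m] [Nonempty m]
    (M : Matrix m m ℝ) (hM : Metzler M) (hH : HurwitzStable M) :
    ∃ x : m → ℝ, (∀ i, 0 ≤ x i) ∧ ∀ i, M.mulVec x i = -1 := by
  classical
  haveI : CompleteSpace (Matrix m m ℂ) := FiniteDimensional.complete ℂ _
  haveI : Nontrivial (Matrix m m ℂ) := by
    refine ⟨1, 0, fun h => ?_⟩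
    have := congrFun (congrFun h (Classical.arbitrary m)) (Classical.arbitrary m)
    simp [Matrix.one_apply] at this
  set Mc := M.map Complex.ofReal with hMcdef
  have hKc : IsCompact (spectrum ℂ Mc) := spectrum.isCompact Mc
  have hKne : (spectrum ℂ Mc).Nonempty := spectrum.nonempty Mc
  have hcont : ContinuousOn (fun z : ℂ => ‖z‖^2 / (2 * (-z.re))) (spectrum ℂ Mc) := by
    apply ContinuousOn.div
    · fun_prop
    · fun_prop
    · intro z hz
      have := hH z hz
      intro h
      nlinarith
  obtain ⟨z₀, hz₀K, hz₀max⟩ := hKc.exists_isMaxOn hKne hcont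
  have hz₀ : ∀ w ∈ spectrum ℂ Mc, ‖w‖^2 / (2 * (-w.re)) ≤ ‖z₀‖^2 / (2 * (-z₀.re)) :=
    fun w hw => hz₀max hw
  set c : ℝ := ‖z₀‖^2 / (2 * (-z₀.re)) + 1 + ∑ i, |M i i| with hcdef
  have hz₀re : z₀.re < 0 := hH z₀ hz₀K
  have hf0 : 0 ≤ ‖z₀‖^2 / (2 * (-z₀.re)) := div_nonneg (by positivity) (by linarith)
  have hsum0 : 0 ≤ ∑ i, |M i i| := Finset.sum_nonneg fun i _ => abs_nonneg _
  have hcpos : 0 < c := by rw [hcdef]; linarith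
  have hcne : (c:ℂ) ≠ 0 := by exact_mod_cast hcpos.ne'
  have hcdiag : ∀ i, -M i i ≤ c := by
    intro i
    have h1 : |M i i| ≤ ∑ j, |M j j| :=
      Finset.single_le_sum (fun j _ => abs_nonneg (M j j)) (Finset.mem_univ i)
    have h2 : -M i i ≤ |M i i| := neg_le_abs _
    rw [hcdef]; linarith
  have hball : ∀ w ∈ spectrum ℂ Mc, ‖w + (c:ℂ)‖ < c := by
    intro w hw
    have hwre : w.re < 0 := hH w hw
    have hfwc : ‖w‖^2 / (2 * (-w.re)) < c := by
      have := hz₀ w hw; rw [hcdef]; linarith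
    have h3 : ‖w‖^2 < c * (2 * (-w.re)) := by
      rw [div_lt_iff₀ (by linarith)] at hfwc
      linarith
    have h4 : ‖w‖^2 = w.re^2 + w.im^2 := by
      rw [Complex.sq_norm, Complex.normSq_apply]; ring
    have h5 : ‖w + (c:ℂ)‖^2 = (w.re + c)^2 + w.im^2 := by
      rw [Complex.sq_norm, Complex.normSq_apply]
      simp only [Complex.add_re, Complex.add_im, Complex.ofReal_re, Complex.ofReal_im]
      ring
    have h6 : ‖w + (c:ℂ)‖^2 < c^2 := by rw [h5]; nlinarith
    exact lt_of_pow_lt_pow_left₀ 2 hcpos.le h6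
  -- the shifted, scaled matrix
  set a : Matrix m m ℂ := (c:ℂ)⁻¹ • (Mc + (c:ℂ) • 1) with hadef
  have hspec_a : ∀ z ∈ spectrum ℂ a, ‖z‖ < 1 := by
    intro z hz
    rw [spectrum.mem_iff] at hz
    have hdet : ((algebraMap ℂ (Matrix m m ℂ)) z - a).det = 0 := by
      by_contra h
      exact hz ((Matrix.isUnit_iff_isUnit_det _).mpr (isUnit_iff_ne_zero.mpr h))
    have hrel : (algebraMap ℂ (Matrix m m ℂ)) ((c:ℂ) * z - c) - Mc
        = (c:ℂ) • ((algebraMap ℂ (Matrix m m ℂ)) z - a) := by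
      rw [hadef]
      ext i j
      rcases eq_or_ne i j with h | h
      · subst h
        simp only [Matrix.algebraMap_eq_diagonal, Pi.algebraMap_apply, Algebra.algebraMap_self,
          RingHom.id_apply, Matrix.sub_apply, Matrix.diagonal_apply_eq, Matrix.smul_apply,
          Matrix.add_apply, Matrix.one_apply_eq, smul_eq_mul]
        field_simp
        ring
      · simp only [Matrix.algebraMap_eq_diagonal, Pi.algebraMap_apply, Algebra.algebraMap_self,
          RingHom.id_apply, Matrix.sub_apply, Matrix.diagonal_apply_ne _ h, Matrix.smul_apply,
          Matrix.add_apply, Matrix.one_apply_ne h, smul_eq_mul]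
        field_simp
        ring
    have hw : ((c:ℂ) * z - c) ∈ spectrum ℂ Mc := by
      rw [spectrum.mem_iff, Matrix.isUnit_iff_isUnit_det, isUnit_iff_ne_zero, not_not,
        hrel, Matrix.det_smul, hdet, mul_zero]
    have := hball _ hw
    have heq : (c:ℂ) * z - c + c = (c:ℂ) * z := by ring
    rw [heq, norm_mul, Complex.norm_real, Real.norm_eq_abs, abs_of_pos hcpos] at this
    nlinarith [norm_nonneg z]
  -- spectral radius < 1 and aⁿ → 0
  have hsr : spectralRadius ℂ a < 1 := by
    have h1 : spectralRadius ℂ a < ((1:NNReal) : ENNReal) := by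
      apply spectrum.spectralRadius_lt_of_forall_lt
      intro z hz
      have := hspec_a z hz
      rw [← NNReal.coe_lt_coe, coe_nnnorm]
      simpa using this
    simpa using h1
  have htend0 : Tendsto (fun n : ℕ => a ^ n) atTop (nhds 0) := by
    obtain ⟨r, hr1, hr2⟩ := exists_between hsr
    have hrtop : r ≠ ⊤ := ne_top_of_lt hr2
    have hgel := spectrum.pow_nnnorm_pow_one_div_tendsto_nhds_spectralRadius a
    have hev : ∀ᶠ n : ℕ in atTop, (‖a ^ n‖₊ : ENNReal) ^ (1 / (n:ℝ)) < r :=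
      hgel.eventually_lt_const hr1
    set r' : ℝ := r.toReal with hr'def
    have hr'1 : r' < 1 := by
      rw [hr'def]
      exact ENNReal.toReal_lt_of_lt_ofReal (by simpa [ENNReal.ofReal_one] using hr2)
    have hr'0 : 0 ≤ r' := ENNReal.toReal_nonneg
    have hbound : ∀ᶠ n : ℕ in atTop, ‖a ^ n‖ ≤ r' ^ n := by
      filter_upwards [hev, eventually_ge_atTop 1] with n hn hn1
      have hne : (n:ℝ) ≠ 0 := by positivity
      have h1 : ((‖a ^ n‖₊ : ENNReal) ^ (1 / (n:ℝ))) ^ (n:ℝ) ≤ r ^ (n:ℝ) :=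
        ENNReal.rpow_le_rpow hn.le (by positivity)
      rw [← ENNReal.rpow_mul, one_div, inv_mul_cancel₀ hne, ENNReal.rpow_one,
        ENNReal.rpow_natCast] at h1
      have h3 : ‖a ^ n‖₊ ≤ r.toNNReal ^ n := by
        rw [← ENNReal.coe_le_coe]
        rwa [ENNReal.coe_pow, ENNReal.coe_toNNReal hrtop]
      calc ‖a ^ n‖ = ((‖a ^ n‖₊ : NNReal) : ℝ) := rfl
        _ ≤ ((r.toNNReal ^ n : NNReal) : ℝ) := by exact_mod_cast h3
        _ = r' ^ n := by rw [hr'def]; push_cast; rfl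
    have hgeo : Tendsto (fun n : ℕ => r' ^ n) atTop (nhds 0) :=
      tendsto_pow_atTop_nhds_zero_of_lt_one hr'0 hr'1
    exact squeeze_zero_norm' hbound hgeo
  -- 1 - a is a unit
  have hunit : IsUnit ((1 : Matrix m m ℂ) - a) := by
    have h1 : (1:ℂ) ∉ spectrum ℂ a := fun h => by simpa using hspec_a 1 h
    rw [spectrum.notMem_iff] at h1
    simpa using h1
  obtain ⟨u, hu⟩ := hunit
  have hSn : ∀ n : ℕ, (∑ k ∈ Finset.range n, a ^ k)
      = (↑u⁻¹ : Matrix m m ℂ) * (1 - a ^ n) := by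
    intro n
    calc (∑ k ∈ Finset.range n, a ^ k)
        = (↑u⁻¹ : Matrix m m ℂ) * ((u : Matrix m m ℂ) * ∑ k ∈ Finset.range n, a ^ k) := by
          rw [← mul_assoc, Units.inv_mul, one_mul]
      _ = (↑u⁻¹ : Matrix m m ℂ) * (1 - a ^ n) := by rw [hu, mul_neg_geom_sum]
  have htendS : Tendsto (fun n : ℕ => ∑ k ∈ Finset.range n, a ^ k) atTop
      (nhds (↑u⁻¹ : Matrix m m ℂ)) := by
    simp only [hSn]
    have h1 : Tendsto (fun n : ℕ => (↑u⁻¹ : Matrix m m ℂ) * (1 - a ^ n)) atTop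
        (nhds ((↑u⁻¹ : Matrix m m ℂ) * (1 - 0))) :=
      tendsto_const_nhds.mul (tendsto_const_nhds.sub htend0)
    simpa using h1
  -- the real nonnegative matrix B with a = B.map ofReal
  set B : Matrix m m ℝ := c⁻¹ • (M + c • 1) with hBdef
  have hB0 : ∀ i j, 0 ≤ B i j := by
    intro i j
    rcases eq_or_ne i j with h | h
    · subst h
      have h1 := hcdiag i
      have : B i i = c⁻¹ * (M i i + c) := by
        simp [hBdef, Matrix.smul_apply, Matrix.add_apply, Matrix.one_apply_eq, smul_eq_mul]
        ring
      rw [this]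
      have h2 : (0:ℝ) ≤ M i i + c := by linarith
      positivity
    · have hMij : 0 ≤ M i j := hM i j h
      have : B i j = c⁻¹ * M i j := by
        simp [hBdef, Matrix.smul_apply, Matrix.add_apply, Matrix.one_apply_ne h, smul_eq_mul]
      rw [this]
      positivity
  have hBpow : ∀ (k : ℕ) (i j : m), 0 ≤ (B ^ k) i j := by
    intro k
    induction k with
    | zero => intro i j; rcases eq_or_ne i j with h | h <;> simp [Matrix.one_apply, h]
    | succ k ih =>
      intro i j
      rw [pow_succ, Matrix.mul_apply]
      exact Finset.sum_nonneg fun l _ => mul_nonneg (ih i l) (hB0 l j)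
  have haB : a = B.map Complex.ofReal := by
    ext i j
    rcases eq_or_ne i j with h | h
    · subst h
      simp only [hadef, hBdef, Matrix.smul_apply, Matrix.add_apply, Matrix.one_apply_eq,
        Matrix.map_apply, smul_eq_mul, hMcdef]
      push_cast
      ring
    · simp only [hadef, hBdef, Matrix.smul_apply, Matrix.add_apply, Matrix.one_apply_ne h,
        Matrix.map_apply, smul_eq_mul, hMcdef]
      push_cast
      ring
  have hapow : ∀ k : ℕ, a ^ k = (B ^ k).map Complex.ofReal := by
    intro k
    rw [haB]
    exact (map_pow (RingHom.mapMatrix Complex.ofRealHom) B k).symm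
  have hentry : ∀ (n : ℕ) (i j : m), (∑ k ∈ Finset.range n, a ^ k) i j
      = Complex.ofReal (∑ k ∈ Finset.range n, (B ^ k) i j) := by
    intro n i j
    rw [Matrix.sum_apply]
    push_cast
    apply Finset.sum_congr rfl
    intro k _
    rw [hapow k, Matrix.map_apply]
  have hinv_entry : ∀ i j, 0 ≤ ((↑u⁻¹ : Matrix m m ℂ) i j).re
      ∧ ((↑u⁻¹ : Matrix m m ℂ) i j).im = 0 := by
    intro i j
    have htendij : Tendsto (fun n : ℕ => (∑ k ∈ Finset.range n, a ^ k) i j) atTop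
        (nhds ((↑u⁻¹ : Matrix m m ℂ) i j)) := by
      have h1 : Tendsto (fun n : ℕ =>
          ‖(∑ k ∈ Finset.range n, a ^ k) - (↑u⁻¹ : Matrix m m ℂ)‖) atTop (nhds 0) :=
        tendsto_iff_norm_sub_tendsto_zero.mp htendS
      rw [tendsto_iff_norm_sub_tendsto_zero]
      refine squeeze_zero (fun n => norm_nonneg _) (fun n => ?_) h1
      have h2 := entry_norm_le ((∑ k ∈ Finset.range n, a ^ k) - (↑u⁻¹ : Matrix m m ℂ)) i j
      simpa [Matrix.sub_apply] using h2
    have hre : Tendsto (fun n : ℕ => ((∑ k ∈ Finset.range n, a ^ k) i j).re) atTop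
        (nhds (((↑u⁻¹ : Matrix m m ℂ) i j).re)) :=
      (Complex.continuous_re.tendsto _).comp htendij
    have him : Tendsto (fun n : ℕ => ((∑ k ∈ Finset.range n, a ^ k) i j).im) atTop
        (nhds (((↑u⁻¹ : Matrix m m ℂ) i j).im)) :=
      (Complex.continuous_im.tendsto _).comp htendij
    constructor
    · refine ge_of_tendsto' hre fun n => ?_
      rw [hentry n i j]
      simp only [Complex.ofReal_re]
      exact Finset.sum_nonneg fun k _ => hBpow k i j
    · simp only [hentry, Complex.ofReal_im] at him
      exact (tendsto_nhds_unique him tendsto_const_nhds)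
  -- relate u⁻¹ to M⁻¹
  have h1a : (1 : Matrix m m ℂ) - a = (-(c:ℂ)⁻¹) • Mc := by
    ext i j
    rcases eq_or_ne i j with h | h
    · subst h
      simp only [hadef, Matrix.sub_apply, Matrix.smul_apply, Matrix.add_apply,
        Matrix.one_apply_eq, smul_eq_mul]
      field_simp
      ring
    · simp only [hadef, Matrix.sub_apply, Matrix.smul_apply, Matrix.add_apply,
        Matrix.one_apply_ne h, smul_eq_mul]
      field_simp
      ring
  have hMcu : Mc * ((-(c:ℂ)⁻¹) • (↑u⁻¹ : Matrix m m ℂ)) = 1 := by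
    have h2 := u.mul_inv
    rw [hu, h1a, smul_mul_assoc] at h2
    rw [mul_smul_comm]
    exact h2
  have hdetMc : IsUnit Mc.det := Matrix.isUnit_det_of_right_inverse hMcu
  have hdetMc_eq : Mc.det = Complex.ofReal M.det :=
    (RingHom.map_det Complex.ofRealHom M).symm
  have hdetM : IsUnit M.det := by
    rw [isUnit_iff_ne_zero]
    intro h
    rw [isUnit_iff_ne_zero, hdetMc_eq, h] at hdetMc
    simp at hdetMc
  set P := M⁻¹ with hPdef
  have hMP : M * P = 1 := Matrix.mul_nonsing_inv M hdetM
  have hPmap : P.map Complex.ofReal = (-(c:ℂ)⁻¹) • (↑u⁻¹ : Matrix m m ℂ) := by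
    have h3 : Mc * P.map Complex.ofReal = 1 := by
      have h := congrArg (RingHom.mapMatrix Complex.ofRealHom) hMP
      rw [_root_.map_mul, _root_.map_one] at h
      exact h
    have h4 : P.map Complex.ofReal * Mc = 1 := mul_eq_one_comm.mp h3
    calc P.map Complex.ofReal
        = P.map Complex.ofReal * (Mc * ((-(c:ℂ)⁻¹) • (↑u⁻¹ : Matrix m m ℂ))) := by
          rw [hMcu, mul_one]
      _ = (P.map Complex.ofReal * Mc) * ((-(c:ℂ)⁻¹) • (↑u⁻¹ : Matrix m m ℂ)) := by
          rw [mul_assoc]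
      _ = (-(c:ℂ)⁻¹) • (↑u⁻¹ : Matrix m m ℂ) := by rw [h4, one_mul]
  have hPle : ∀ i j, P i j ≤ 0 := by
    intro i j
    have h5 : Complex.ofReal (P i j) = (-(c:ℂ)⁻¹) * ((↑u⁻¹ : Matrix m m ℂ) i j) := by
      have h6 := congrFun (congrFun hPmap i) j
      simpa [Matrix.map_apply, Matrix.smul_apply, smul_eq_mul] using h6
    have h7 : P i j = -(c⁻¹) * ((↑u⁻¹ : Matrix m m ℂ) i j).re := by
      have h8 := congrArg Complex.re h5
      have h9 : (-(c:ℂ)⁻¹) = ((-(c⁻¹) : ℝ) : ℂ) := by push_cast; ring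
      rw [h9, Complex.re_ofReal_mul] at h8
      simpa using h8
    have h10 := (hinv_entry i j).1
    have hcinv : 0 < c⁻¹ := by positivity
    nlinarith
  refine ⟨P.mulVec (fun _ => (-1:ℝ)), ?_, ?_⟩
  · intro i
    rw [Matrix.mulVec, dotProduct]
    apply Finset.sum_nonneg
    intro j _
    nlinarith [hPle i j]
  · intro i
    rw [Matrix.mulVec_mulVec, hMP, Matrix.one_mulVec]

/-- Lemma 1 of the paper (second part): for a Metzler Hurwitz stable matrix, the leading
principal submatrix is Hurwitz stable and the bottom-right entry is negative. -/
theorem stmt9 (n : ℕ) (M : Matrix (Fin (n+2)) (Fin (n+2)) ℝ)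
    (hMetz : Metzler M) (hHur : HurwitzStable M) :
    HurwitzStable (M.submatrix Fin.castSucc Fin.castSucc) ∧
    M (Fin.last (n+1)) (Fin.last (n+1)) < 0 := by
  obtain ⟨x, hx0, hMx⟩ := exists_nonneg_mulVec_neg M hMetz hHur
  -- x is in fact positive
  have hxpos : ∀ i, 0 < x i := by
    intro i
    rcases lt_or_eq_of_le (hx0 i) with h | h
    · exact h
    · exfalso
      have h1 := hMx i
      rw [Matrix.mulVec, dotProduct] at h1
      have h2 : (0:ℝ) ≤ ∑ j, M i j * x j := by
        apply Finset.sum_nonneg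
        intro j _
        rcases eq_or_ne j i with hj | hj
        · subst hj; rw [← h]; simp
        · exact mul_nonneg (hMetz i j (Ne.symm hj)) (hx0 j)
      linarith
  have hMxneg : ∀ i, M.mulVec x i < 0 := fun i => by rw [hMx i]; norm_num
  constructor
  · -- principal submatrix
    set M' : Matrix (Fin (n+1)) (Fin (n+1)) ℝ := M.submatrix Fin.castSucc Fin.castSucc with hM'
    have hMetz' : Metzler M' := by
      intro i j hij
      exact hMetz _ _ (fun h => hij (Fin.castSucc_injective _ h))
    apply hurwitz_of_pos_vec M' hMetz' (fun i => x i.castSucc) (fun i => hxpos _)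
    intro i
    have hsplit : M.mulVec x i.castSucc
        = M'.mulVec (fun j => x j.castSucc) i
          + M i.castSucc (Fin.last (n+1)) * x (Fin.last (n+1)) := by
      rw [Matrix.mulVec, dotProduct, Fin.sum_univ_castSucc, Matrix.mulVec, dotProduct]
      rfl
    have hlastterm : 0 ≤ M i.castSucc (Fin.last (n+1)) * x (Fin.last (n+1)) := by
      apply mul_nonneg _ (hx0 _)
      exact hMetz _ _ (Fin.castSucc_lt_last i).ne
    have := hMxneg i.castSucc
    linarith [hsplit ▸ this]
  · -- bottom-right entry
    have h1 := hMxneg (Fin.last (n+1))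
    rw [Matrix.mulVec, dotProduct, Fin.sum_univ_castSucc] at h1
    have h2 : (0:ℝ) ≤ ∑ j : Fin (n+1), M (Fin.last (n+1)) j.castSucc * x j.castSucc := by
      apply Finset.sum_nonneg
      intro j _
      exact mul_nonneg (hMetz _ _ (Fin.castSucc_lt_last j).ne') (hx0 _)
    have h3 : M (Fin.last (n+1)) (Fin.last (n+1)) * x (Fin.last (n+1)) < 0 := by linarith
    by_contra h
    push_neg at h
    nlinarith [hxpos (Fin.last (n+1))]
end

section
/- Let n ≥ 1 and let M ∈ ℝ^{n×n} be Metzler and Hurwitz stable, and define H(iω) := eₙᵀ(iωI − M)⁻¹eₙ ∈ ℂ for ω ∈ ℝ (with M viewed as a complex matrix). Then: (a) for every ω ∈ ℝ, the matrix iωI − M is invertible and Re[H(iω)] > 0; and (b) lim_{ω→∞} ω² · Re[H(iω)] = −M_{nn} > 0. (In other words, the transfer function eₙᵀ(sI − M)⁻¹eₙ is strictly positive real.) -/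
open Matrix Filter Topology

lemma det_homotopy_ne_zero {n : ℕ} (M : Matrix (Fin (n+1)) (Fin (n+1)) ℝ)
    (hHur : HurwitzStable M) {t : ℝ} (ht : t ∈ Set.Icc (0:ℝ) 1) :
    ((1-t) • (1 : Matrix (Fin (n+1)) (Fin (n+1)) ℝ) - t • M).det ≠ 0 := by
  set N : Matrix (Fin (n+1)) (Fin (n+1)) ℝ := (1-t) • 1 - t • M with hN
  have hmap : N.map Complex.ofReal
      = ((1-t : ℝ) : ℂ) • (1 : Matrix (Fin (n+1)) (Fin (n+1)) ℂ)
        - (t : ℂ) • (M.map Complex.ofReal) := by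
    ext i j
    by_cases h : i = j <;>
      simp [hN, Matrix.map_apply, Matrix.one_apply, h, Complex.ofReal_sub, Complex.ofReal_mul]
  have hdetmap : (N.map Complex.ofReal).det = ((N.det : ℝ) : ℂ) := by
    have : N.map Complex.ofReal = Complex.ofRealHom.mapMatrix N := rfl
    rw [this, ← RingHom.map_det]
    rfl
  intro h0
  have hdetC : (N.map Complex.ofReal).det = 0 := by rw [hdetmap, h0]; simp
  rcases eq_or_lt_of_le ht.1 with h0t | h0t
  · -- t = 0
    rw [← h0t] at hmap
    simp at hmap
    rw [hmap] at hdetC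
    simp at hdetC
  · -- 0 < t
    set c : ℂ := (((1-t)/t : ℝ) : ℂ) with hc
    have htne : (t : ℂ) ≠ 0 := by exact_mod_cast ne_of_gt h0t
    have hfact : N.map Complex.ofReal
        = (t : ℂ) • (c • (1 : Matrix (Fin (n+1)) (Fin (n+1)) ℂ) - M.map Complex.ofReal) := by
      rw [hmap, smul_sub, smul_smul, hc]
      congr 2
      push_cast
      field_simp
    have hunit : IsUnit (c • (1 : Matrix (Fin (n+1)) (Fin (n+1)) ℂ) - M.map Complex.ofReal) := by
      by_contra hnu
      have hmem : c ∈ spectrum ℂ (M.map Complex.ofReal) := by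
        rw [spectrum.mem_iff, Algebra.algebraMap_eq_smul_one]
        exact hnu
      have := hHur c hmem
      rw [hc] at this
      simp only [Complex.ofReal_re] at this
      have : (0:ℝ) ≤ (1-t)/t := div_nonneg (by linarith [ht.2]) (le_of_lt h0t)
      linarith [hHur c hmem, this]
    have : (N.map Complex.ofReal).det ≠ 0 := by
      rw [hfact, Matrix.det_smul]
      refine mul_ne_zero (pow_ne_zero _ htne) ?_
      exact (Matrix.isUnit_iff_isUnit_det _).mp hunit |>.ne_zero
    exact this hdetC

lemma exists_pos_mulVec_neg {n : ℕ} (M : Matrix (Fin (n+1)) (Fin (n+1)) ℝ)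
    (hMetz : Metzler M) (hHur : HurwitzStable M) :
    ∃ ξ : Fin (n+1) → ℝ, (∀ i, 0 < ξ i) ∧ ∀ i, (M *ᵥ ξ) i < 0 := by
  set N : ℝ → Matrix (Fin (n+1)) (Fin (n+1)) ℝ := fun t => (1-t) • 1 - t • M with hNdef
  have hNcont : Continuous N := by
    apply Continuous.sub
    · exact (continuous_sub_left 1).smul continuous_const
    · exact continuous_id.smul continuous_const
  have hdet : ∀ t ∈ Set.Icc (0:ℝ) 1, (N t).det ≠ 0 := fun t ht =>
    det_homotopy_ne_zero M hHur ht
  set ξ : ℝ → (Fin (n+1) → ℝ) := fun t => (N t)⁻¹ *ᵥ (fun _ => 1) with hξdef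
  set Ω : Set ℝ := {t | (N t).det ≠ 0} with hΩdef
  have hΩopen : IsOpen Ω := isOpen_compl_iff.mpr (isClosed_singleton.preimage hNcont.matrix_det)
  have hξAt : ∀ t ∈ Ω, ContinuousAt ξ t := by
    intro t ht
    have h1 : ContinuousAt Inv.inv (N t) := by
      apply continuousAt_matrix_inv
      rw [Ring.inverse_eq_inv']
      exact continuousAt_inv₀ ht
    have h2 : ContinuousAt (fun s => (N s)⁻¹) t := h1.comp hNcont.continuousAt
    have h3 : Continuous (fun A : Matrix (Fin (n+1)) (Fin (n+1)) ℝ => A *ᵥ (fun _ => (1:ℝ))) :=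
      continuous_id.matrix_mulVec continuous_const
    exact h3.continuousAt.comp h2
  have hrow : ∀ t ∈ Set.Icc (0:ℝ) 1, N t *ᵥ ξ t = (fun _ => 1) := by
    intro t ht
    rw [hξdef]
    simp only [Matrix.mulVec_mulVec]
    rw [Matrix.mul_nonsing_inv _ (isUnit_iff_ne_zero.mpr (hdet t ht))]
    simp [Matrix.one_mulVec]
  -- nonneg implies pos on Icc
  have hposA : ∀ t ∈ Set.Icc (0:ℝ) 1, (∀ i, 0 ≤ ξ t i) → ∀ i, 0 < ξ t i := by
    intro t ht hnn i
    have hr := congrFun (hrow t ht) i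
    simp only [Matrix.mulVec, dotProduct] at hr
    have hsplit : N t i i * ξ t i
        = 1 - ∑ j ∈ Finset.univ.erase i, N t i j * ξ t j := by
      rw [← hr, ← Finset.add_sum_erase _ _ (Finset.mem_univ i)]
      ring
    have hterm : ∀ j ∈ Finset.univ.erase i, N t i j * ξ t j ≤ 0 := by
      intro j hj
      have hji : j ≠ i := Finset.ne_of_mem_erase hj
      have : N t i j = - (t * M i j) := by
        simp [hNdef, Matrix.one_apply_ne (Ne.symm hji)]
      rw [this]
      have : 0 ≤ t * M i j := mul_nonneg ht.1 (hMetz i j (Ne.symm hji))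
      exact mul_nonpos_of_nonpos_of_nonneg (by linarith) (hnn j)
    have hsum : ∑ j ∈ Finset.univ.erase i, N t i j * ξ t j ≤ 0 :=
      Finset.sum_nonpos hterm
    have hpos : 0 < N t i i * ξ t i := by rw [hsplit]; linarith
    rcases (hnn i).lt_or_eq with h | h
    · exact h
    · exfalso; rw [← h] at hpos; simp at hpos
  -- connectedness
  set u : Set ℝ := Ω ∩ ξ ⁻¹' {v | ∀ i, 0 < v i} with hudef
  set v : Set ℝ := Ω ∩ ξ ⁻¹' {v | ∃ i, v i < 0} with hvdef
  have hPopen : IsOpen {v : Fin (n+1) → ℝ | ∀ i, 0 < v i} := by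
    have : {v : Fin (n+1) → ℝ | ∀ i, 0 < v i} = ⋂ i, (fun v : Fin (n+1) → ℝ => v i) ⁻¹' Set.Ioi 0 := by
      ext v; simp
    rw [this]
    exact isOpen_iInter_of_finite fun i => isOpen_Ioi.preimage (continuous_apply i)
  have hQopen : IsOpen {v : Fin (n+1) → ℝ | ∃ i, v i < 0} := by
    have : {v : Fin (n+1) → ℝ | ∃ i, v i < 0} = ⋃ i, (fun v : Fin (n+1) → ℝ => v i) ⁻¹' Set.Iio 0 := by
      ext v; simp
    rw [this]
    exact isOpen_iUnion fun i => isOpen_Iio.preimage (continuous_apply i)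
  have hopen : ∀ (P : Set (Fin (n+1) → ℝ)), IsOpen P → IsOpen (Ω ∩ ξ ⁻¹' P) := by
    intro P hP
    rw [isOpen_iff_mem_nhds]
    rintro x ⟨hxΩ, hxP⟩
    exact Filter.inter_mem (hΩopen.mem_nhds hxΩ) ((hξAt x hxΩ).preimage_mem_nhds (hP.mem_nhds hxP))
  have huopen : IsOpen u := hopen _ hPopen
  have hvopen : IsOpen v := hopen _ hQopen
  have hdisj : Disjoint u v := by
    rw [Set.disjoint_iff]
    rintro x ⟨⟨-, hx1⟩, ⟨-, hx2⟩⟩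
    obtain ⟨i, hi⟩ := hx2
    exact absurd (hx1 i) (not_lt.mpr hi.le)
  have hcover : Set.Icc (0:ℝ) 1 ⊆ u ∪ v := by
    intro t ht
    by_cases hneg : ∃ i, ξ t i < 0
    · exact Or.inr ⟨hdet t ht, hneg⟩
    · push_neg at hneg
      exact Or.inl ⟨hdet t ht, hposA t ht (fun i => hneg i)⟩
  have hmem0 : (Set.Icc (0:ℝ) 1 ∩ u).Nonempty := by
    refine ⟨0, Set.mem_Icc.mpr ⟨le_refl _, zero_le_one⟩, ?_, ?_⟩
    · show (N 0).det ≠ 0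
      simp [hNdef]
    · show ∀ i, 0 < ξ 0 i
      intro i
      have : N 0 = 1 := by simp [hNdef]
      simp [hξdef, this, Matrix.one_mulVec]
  have hsub : Set.Icc (0:ℝ) 1 ⊆ u :=
    isPreconnected_Icc.subset_left_of_subset_union huopen hvopen hdisj hcover hmem0
  have h1 : (1:ℝ) ∈ u := hsub (Set.mem_Icc.mpr ⟨zero_le_one, le_refl _⟩)
  refine ⟨ξ 1, h1.2, ?_⟩
  intro i
  have hr := congrFun (hrow 1 (Set.mem_Icc.mpr ⟨zero_le_one, le_refl _⟩)) i
  have hN1 : N 1 = -M := by simp [hNdef]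
  rw [hN1] at hr
  have hneg : ((-M) *ᵥ ξ 1) i = 1 := hr
  rw [Matrix.neg_mulVec] at hneg
  have : (M *ᵥ ξ 1) i = -1 := by
    have : (-(M *ᵥ ξ 1)) i = 1 := hneg
    simpa using congrArg Neg.neg this
  rw [this]; norm_num

lemma hurwitz_transpose {n : ℕ} (M : Matrix (Fin (n+1)) (Fin (n+1)) ℝ)
    (hHur : HurwitzStable M) : HurwitzStable Mᵀ := by
  intro z hz
  apply hHur
  rw [spectrum.mem_iff] at hz ⊢
  intro hunit
  apply hz
  have heq : algebraMap ℂ (Matrix (Fin (n+1)) (Fin (n+1)) ℂ) z - Mᵀ.map Complex.ofReal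
      = (algebraMap ℂ (Matrix (Fin (n+1)) (Fin (n+1)) ℂ) z - M.map Complex.ofReal)ᵀ := by
    ext i j
    by_cases h : i = j
    · simp [Algebra.algebraMap_eq_smul_one, Matrix.map_apply, Matrix.one_apply, h]
    · simp [Algebra.algebraMap_eq_smul_one, Matrix.map_apply, Matrix.one_apply, h, Ne.symm h]
  rw [heq, Matrix.isUnit_iff_isUnit_det, Matrix.det_transpose, ← Matrix.isUnit_iff_isUnit_det]
  exact hunit

lemma quad_core {n : ℕ} (M : Matrix (Fin (n+1)) (Fin (n+1)) ℝ) (hMetz : Metzler M)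
    (ξ ζ : Fin (n+1) → ℝ) (hξ : ∀ i, 0 < ξ i) (hζ : ∀ i, 0 < ζ i)
    (hMξ : ∀ i, (M *ᵥ ξ) i < 0) (hMζ : ∀ i, (Mᵀ *ᵥ ζ) i < 0)
    (x : Fin (n+1) → ℝ) :
    (∑ i, ∑ j, (ζ i / ξ i) * M i j * (x i * x j) ≤ 0) ∧
      (x ≠ 0 → ∑ i, ∑ j, (ζ i / ξ i) * M i j * (x i * x j) < 0) := by
  set u : Fin (n+1) → ℝ := fun i => x i / ξ i with hu
  have hx : ∀ i, x i = ξ i * u i := fun i => by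
    rw [hu]; dsimp only
    rw [mul_comm, div_mul_cancel₀ _ (hξ i).ne']
  set c : Fin (n+1) → Fin (n+1) → ℝ := fun i j => ζ i * M i j * ξ j with hc
  have hterm : ∀ i j, (ζ i / ξ i) * M i j * (x i * x j) = c i j * (u i * u j) := by
    intro i j
    rw [hx i, hx j, hc]
    have hne : ξ i ≠ 0 := (hξ i).ne'
    field_simp
  have hbound : ∀ i j, c i j * (u i * u j) ≤ c i j * ((u i^2 + u j^2)/2) := by
    intro i j
    by_cases h : i = j
    · subst h; apply le_of_eq; ring
    · have hc0 : 0 ≤ c i j := mul_nonneg (mul_nonneg (hζ i).le (hMetz i j h)) (hξ j).le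
      apply mul_le_mul_of_nonneg_left _ hc0
      nlinarith [sq_nonneg (u i - u j)]
  have hdneg : ∀ i, ζ i * (M *ᵥ ξ) i + ξ i * (Mᵀ *ᵥ ζ) i < 0 := by
    intro i
    have h1 : ζ i * (M *ᵥ ξ) i < 0 := mul_neg_of_pos_of_neg (hζ i) (hMξ i)
    have h2 : ξ i * (Mᵀ *ᵥ ζ) i < 0 := mul_neg_of_pos_of_neg (hξ i) (hMζ i)
    linarith
  have hrowsum : ∀ i, ∑ j, c i j = ζ i * (M *ᵥ ξ) i := by
    intro i
    have h1 : ∀ j, c i j = ζ i * (M i j * ξ j) := fun j => by rw [hc]; ring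
    simp only [h1, ← Finset.mul_sum]
    rfl
  have hcolsum : ∀ j, ∑ i, c i j = ξ j * (Mᵀ *ᵥ ζ) j := by
    intro j
    have h1 : ∀ i, c i j = ξ j * (Mᵀ j i * ζ i) := fun i => by
      rw [hc]; simp [Matrix.transpose_apply]; ring
    simp only [h1, ← Finset.mul_sum]
    rfl
  have hsum2 : ∑ i, ∑ j, c i j * ((u i^2 + u j^2)/2)
      = ∑ i, u i^2 * ((ζ i * (M *ᵥ ξ) i + ξ i * (Mᵀ *ᵥ ζ) i) / 2) := by
    have expand : ∀ i j : Fin (n+1), c i j * ((u i^2 + u j^2)/2)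
        = c i j * (u i^2/2) + c i j * (u j^2/2) := fun i j => by ring
    simp only [expand, Finset.sum_add_distrib]
    have hA : ∑ i, ∑ j, c i j * (u i^2/2) = ∑ i, (ζ i * (M *ᵥ ξ) i) * (u i^2/2) := by
      refine Finset.sum_congr rfl fun i _ => ?_
      rw [← Finset.sum_mul, hrowsum]
    have hB : ∑ i, ∑ j, c i j * (u j^2/2) = ∑ j, (ξ j * (Mᵀ *ᵥ ζ) j) * (u j^2/2) := by
      rw [Finset.sum_comm]
      refine Finset.sum_congr rfl fun j _ => ?_
      rw [← Finset.sum_mul, hcolsum]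
    rw [hA, hB, ← Finset.sum_add_distrib]
    refine Finset.sum_congr rfl fun i _ => ?_
    ring
  have hle : ∑ i, ∑ j, (ζ i / ξ i) * M i j * (x i * x j)
      ≤ ∑ i, u i^2 * ((ζ i * (M *ᵥ ξ) i + ξ i * (Mᵀ *ᵥ ζ) i) / 2) := by
    rw [← hsum2]
    simp only [hterm]
    apply Finset.sum_le_sum
    intro i _
    exact Finset.sum_le_sum fun j _ => hbound i j
  have htermnp : ∀ i, u i^2 * ((ζ i * (M *ᵥ ξ) i + ξ i * (Mᵀ *ᵥ ζ) i) / 2) ≤ 0 :=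
    fun i => mul_nonpos_of_nonneg_of_nonpos (sq_nonneg _) (by linarith [hdneg i])
  constructor
  · exact hle.trans (Finset.sum_nonpos fun i _ => htermnp i)
  · intro hxne
    obtain ⟨k, hk⟩ := Function.ne_iff.mp hxne
    have huk : u k ≠ 0 := by
      rw [hu]
      simp only [Pi.zero_apply] at hk
      exact div_ne_zero hk (hξ k).ne'
    have hstrict : ∑ i, u i^2 * ((ζ i * (M *ᵥ ξ) i + ξ i * (Mᵀ *ᵥ ζ) i) / 2) < 0 := by
      have hlt : ∑ i, u i^2 * ((ζ i * (M *ᵥ ξ) i + ξ i * (Mᵀ *ᵥ ζ) i) / 2)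
          < ∑ _i : Fin (n+1), (0:ℝ) := by
        apply Finset.sum_lt_sum (fun i _ => htermnp i)
        refine ⟨k, Finset.mem_univ k, ?_⟩
        have hk2 : 0 < u k^2 := lt_of_le_of_ne (sq_nonneg _) (Ne.symm (pow_ne_zero 2 huk))
        exact mul_neg_of_pos_of_neg hk2 (by linarith [hdneg k])
      simpa using hlt
    exact lt_of_le_of_lt hle hstrict

lemma key_identity {n : ℕ} (M : Matrix (Fin (n+1)) (Fin (n+1)) ℝ) (ω : ℝ)
    (p : Fin (n+1) → ℝ) (y : Fin (n+1) → ℂ)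
    (hy : ((Complex.I * ω) • (1 : Matrix (Fin (n+1)) (Fin (n+1)) ℂ) - M.map Complex.ofReal) *ᵥ y
      = Pi.single (Fin.last n) 1) :
    p (Fin.last n) * (y (Fin.last n)).re
      = - (∑ i, ∑ j, ((p i * M i j : ℝ) : ℂ) * ((starRingEnd ℂ) (y i) * y j)).re := by
  set A := M.map Complex.ofReal with hA
  set X : Matrix (Fin (n+1)) (Fin (n+1)) ℂ := (Complex.I * ω) • 1 - A with hX
  have hXv : ∀ i, (X *ᵥ y) i = Complex.I * ω * y i - ∑ j, ((M i j : ℝ) : ℂ) * y j := by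
    intro i
    simp only [hX, Matrix.mulVec, dotProduct, Matrix.sub_apply, Matrix.smul_apply,
      Matrix.one_apply, hA, Matrix.map_apply, sub_mul, Finset.sum_sub_distrib,
      smul_eq_mul, mul_ite, mul_one, mul_zero, ite_mul, zero_mul]
    rw [Finset.sum_ite_eq (Finset.univ) i (fun j => Complex.I * ↑ω * y j)]
    simp
  have h1 : ∑ i, (starRingEnd ℂ) (y i) * (p i : ℂ) * ((X *ᵥ y) i)
      = (starRingEnd ℂ) (y (Fin.last n)) * (p (Fin.last n) : ℂ) := by
    rw [hy]
    rw [Fintype.sum_eq_single (Fin.last n)]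
    · simp
    · intro b hb
      simp [Pi.single_eq_of_ne hb]
  have h2 : ∑ i, (starRingEnd ℂ) (y i) * (p i : ℂ) * ((X *ᵥ y) i)
      = Complex.I * ω * ((∑ i, p i * Complex.normSq (y i) : ℝ) : ℂ)
        - ∑ i, ∑ j, ((p i * M i j : ℝ) : ℂ) * ((starRingEnd ℂ) (y i) * y j) := by
    have hterm : ∀ i, (starRingEnd ℂ) (y i) * (p i : ℂ) * ((X *ᵥ y) i)
        = Complex.I * ω * (((p i * Complex.normSq (y i) : ℝ)) : ℂ)
          - ∑ j, ((p i * M i j : ℝ) : ℂ) * ((starRingEnd ℂ) (y i) * y j) := by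
      intro i
      rw [hXv i, mul_sub, Finset.mul_sum]
      congr 1
      · have hns : (starRingEnd ℂ) (y i) * y i = ((Complex.normSq (y i) : ℝ) : ℂ) := by
          rw [Complex.normSq_eq_conj_mul_self]
        push_cast
        rw [← hns]
        ring
      · refine Finset.sum_congr rfl fun j _ => ?_
        push_cast
        ring
    rw [Finset.sum_congr rfl fun i _ => hterm i, Finset.sum_sub_distrib, ← Finset.mul_sum]
    congr 2
    push_cast
    rfl
  have hre : ((starRingEnd ℂ) (y (Fin.last n)) * (p (Fin.last n) : ℂ)).re
      = p (Fin.last n) * (y (Fin.last n)).re := by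
    simp [Complex.mul_re]
    ring
  have hre2 : (Complex.I * ω * ((∑ i, p i * Complex.normSq (y i) : ℝ) : ℂ)).re = 0 := by
    simp [Complex.mul_re]
  rw [← hre, ← h1, h2, Complex.sub_re, hre2]
  ring

/-- Theorem 2 of the paper: for a Metzler Hurwitz stable matrix M, the transfer function
H(s) = eₙᵀ(sI − M)⁻¹eₙ is strictly positive real. -/
theorem stmt11 (n : ℕ) (M : Matrix (Fin (n+1)) (Fin (n+1)) ℝ)
    (hMetz : Metzler M) (hHur : HurwitzStable M) :
    (∀ ω : ℝ,
      IsUnit ((Complex.I * ω) • (1 : Matrix (Fin (n+1)) (Fin (n+1)) ℂ) - M.map Complex.ofReal) ∧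
      0 < ((Pi.single (Fin.last n) 1 : Fin (n+1) → ℂ) ⬝ᵥ
        (((Complex.I * ω) • (1 : Matrix (Fin (n+1)) (Fin (n+1)) ℂ) - M.map Complex.ofReal)⁻¹
          *ᵥ (Pi.single (Fin.last n) 1 : Fin (n+1) → ℂ))).re) ∧
    Tendsto (fun ω : ℝ => ω ^ 2 *
        ((Pi.single (Fin.last n) 1 : Fin (n+1) → ℂ) ⬝ᵥ
          (((Complex.I * ω) • (1 : Matrix (Fin (n+1)) (Fin (n+1)) ℂ) - M.map Complex.ofReal)⁻¹
            *ᵥ (Pi.single (Fin.last n) 1 : Fin (n+1) → ℂ))).re)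
      atTop (𝓝 (-(M (Fin.last n) (Fin.last n)))) ∧
    0 < -(M (Fin.last n) (Fin.last n)) := by
  obtain ⟨ξ, hξpos, hMξ⟩ := exists_pos_mulVec_neg M hMetz hHur
  have hMetzT : Metzler Mᵀ := fun i j hij => hMetz j i (Ne.symm hij)
  obtain ⟨ζ, hζpos, hMζ⟩ := exists_pos_mulVec_neg Mᵀ hMetzT (hurwitz_transpose M hHur)
  -- abbreviations (plain defs to keep syntactic match)
  let A : Matrix (Fin (n+1)) (Fin (n+1)) ℂ := M.map Complex.ofReal
  let e : Fin (n+1) → ℂ := Pi.single (Fin.last n) 1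
  let X : ℝ → Matrix (Fin (n+1)) (Fin (n+1)) ℂ :=
    fun ω => (Complex.I * ω) • 1 - M.map Complex.ofReal
  have hXunit : ∀ ω : ℝ, IsUnit (X ω) := by
    intro ω
    by_contra hnu
    have hmem : (Complex.I * ω) ∈ spectrum ℂ (M.map Complex.ofReal) := by
      rw [spectrum.mem_iff, Algebra.algebraMap_eq_smul_one]
      exact hnu
    have hre := hHur _ hmem
    simp [Complex.mul_re] at hre
  have hXy : ∀ ω : ℝ, X ω *ᵥ ((X ω)⁻¹ *ᵥ e) = e := by
    intro ω
    rw [Matrix.mulVec_mulVec,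
      Matrix.mul_nonsing_inv _ ((Matrix.isUnit_iff_isUnit_det _).mp (hXunit ω)),
      Matrix.one_mulVec]
  have hyne : ∀ ω : ℝ, ((X ω)⁻¹ *ᵥ e) ≠ 0 := by
    intro ω h0
    have h := hXy ω
    rw [h0, Matrix.mulVec_zero] at h
    have h2 := congrFun h (Fin.last n)
    simp [e] at h2
  have hdot : ∀ ω : ℝ, (e ⬝ᵥ ((X ω)⁻¹ *ᵥ e)) = ((X ω)⁻¹ *ᵥ e) (Fin.last n) := by
    intro ω
    rw [show e = Pi.single (Fin.last n) (1:ℂ) from rfl, single_dotProduct, one_mul]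
  -- the weighted quadratic form is negative on nonzero complex vectors
  have hquad : ∀ y : Fin (n+1) → ℂ, y ≠ 0 →
      (∑ i, ∑ j, (((ζ i / ξ i) * M i j : ℝ) : ℂ) * ((starRingEnd ℂ) (y i) * y j)).re < 0 := by
    intro y hy0
    have hterm : ∀ i j : Fin (n+1),
        ((((ζ i / ξ i) * M i j : ℝ) : ℂ) * ((starRingEnd ℂ) (y i) * y j)).re
        = (ζ i / ξ i) * M i j * ((y i).re * (y j).re)
          + (ζ i / ξ i) * M i j * ((y i).im * (y j).im) := by
      intro i j
      simp [Complex.mul_re, Complex.mul_im]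
      ring
    have hsplit : (∑ i, ∑ j, (((ζ i / ξ i) * M i j : ℝ) : ℂ) *
          ((starRingEnd ℂ) (y i) * y j)).re
        = (∑ i, ∑ j, (ζ i / ξ i) * M i j * ((fun k => (y k).re) i * (fun k => (y k).re) j))
          + ∑ i, ∑ j, (ζ i / ξ i) * M i j * ((fun k => (y k).im) i * (fun k => (y k).im) j) := by
      rw [Complex.re_sum]
      simp only [Complex.re_sum, hterm, Finset.sum_add_distrib]
    rw [hsplit]
    have hre := quad_core M hMetz ξ ζ hξpos hζpos hMξ hMζ (fun k => (y k).re)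
    have him := quad_core M hMetz ξ ζ hξpos hζpos hMξ hMζ (fun k => (y k).im)
    by_cases ha : (fun k => (y k).re) = 0
    · have hb : (fun k => (y k).im) ≠ 0 := by
        intro hb0
        apply hy0
        funext k
        have h1 := congrFun ha k
        have h2 := congrFun hb0 k
        simp only [Pi.zero_apply] at h1 h2
        exact Complex.ext h1 h2
      have := him.2 hb
      linarith [hre.1]
    · have := hre.2 ha
      linarith [him.1]
  -- part (a) positivity
  have hpos : ∀ ω : ℝ, 0 < (((X ω)⁻¹ *ᵥ e) (Fin.last n)).re := by
    intro ω
    have hid := key_identity M ω (fun i => ζ i / ξ i) _ (hXy ω)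
    have hq := hquad _ (hyne ω)
    have hc : 0 < ζ (Fin.last n) / ξ (Fin.last n) :=
      div_pos (hζpos _) (hξpos _)
    nlinarith [hid, hq, hc]
  -- part (c): M_nn < 0
  have hMnn : M (Fin.last n) (Fin.last n) < 0 := by
    have h := hMξ (Fin.last n)
    have hsum : (M *ᵥ ξ) (Fin.last n) = ∑ j, M (Fin.last n) j * ξ j := rfl
    rw [hsum, ← Finset.add_sum_erase _ _ (Finset.mem_univ (Fin.last n))] at h
    have hrest : 0 ≤ ∑ j ∈ Finset.univ.erase (Fin.last n), M (Fin.last n) j * ξ j :=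
      Finset.sum_nonneg fun j hj =>
        mul_nonneg (hMetz _ _ (Ne.symm (Finset.ne_of_mem_erase hj))) (hξpos j).le
    nlinarith [hξpos (Fin.last n)]
  -- part (b): the limit
  let g : (Fin (n+1) → ℂ) → ℝ :=
    fun v => -(∑ i, ∑ j, ((M i j : ℝ) : ℂ) * ((starRingEnd ℂ) (v i) * v j)).re
  have hkey1 : ∀ ω : ℝ, (((X ω)⁻¹ *ᵥ e) (Fin.last n)).re = g ((X ω)⁻¹ *ᵥ e) := by
    intro ω
    have h := key_identity M ω (fun _ => 1) _ (hXy ω)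
    simpa [g] using h
  have hgscale : ∀ (r : ℝ) (v : Fin (n+1) → ℂ), g ((r : ℂ) • v) = r^2 * g v := by
    intro r v
    have hterm : ∀ i j : Fin (n+1),
        ((M i j : ℝ) : ℂ) * ((starRingEnd ℂ) (((r:ℂ) • v) i) * ((r:ℂ) • v) j)
        = ((r^2 : ℝ) : ℂ) * (((M i j : ℝ) : ℂ) * ((starRingEnd ℂ) (v i) * v j)) := by
      intro i j
      simp only [Pi.smul_apply, smul_eq_mul, _root_.map_mul, Complex.conj_ofReal]
      push_cast
      ring
    show -(∑ i, ∑ j, ((M i j : ℝ) : ℂ) *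
        ((starRingEnd ℂ) (((r:ℂ) • v) i) * ((r:ℂ) • v) j)).re = r^2 * g v
    simp only [hterm, Complex.ofReal_pow, ← Finset.mul_sum]
    rw [show ∀ z : ℂ, (((r:ℂ))^2 * z).re = r^2 * z.re from fun z => by
      simp [pow_two, Complex.mul_re, Complex.mul_im]]
    show -(r^2 * (∑ i, ∑ j, ((M i j : ℝ) : ℂ) * ((starRingEnd ℂ) (v i) * v j)).re) = _
    ring
  -- the rescaled resolvent
  let G : ℝ → Matrix (Fin (n+1)) (Fin (n+1)) ℂ :=
    fun t => Complex.I • 1 - ((t : ℝ) : ℂ) • M.map Complex.ofReal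
  have hGcont : Continuous G := by
    apply Continuous.sub continuous_const
    exact (Complex.continuous_ofReal).smul continuous_const
  have hG0 : G 0 = Complex.I • 1 := by
    show Complex.I • 1 - ((0:ℝ) : ℂ) • M.map Complex.ofReal = Complex.I • 1
    simp
  have hdet0 : (G 0).det ≠ 0 := by
    rw [hG0, Matrix.det_smul, Matrix.det_one, mul_one]
    exact pow_ne_zero _ Complex.I_ne_zero
  have hG0inv : (G 0)⁻¹ = (-Complex.I) • 1 := by
    rw [hG0]
    apply Matrix.inv_eq_right_inv
    rw [Matrix.smul_mul, Matrix.mul_smul, smul_smul, mul_one]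
    rw [show Complex.I * -Complex.I = 1 by simp [Complex.I_mul_I]]
    rw [one_smul]
  have hCA : ContinuousAt (fun t => (G t)⁻¹) 0 := by
    have h1 : ContinuousAt Inv.inv (G 0) := by
      apply continuousAt_matrix_inv
      rw [Ring.inverse_eq_inv']
      exact continuousAt_inv₀ hdet0
    exact h1.comp hGcont.continuousAt
  have htend1 : Tendsto (fun ω : ℝ => (G (1/ω))⁻¹) atTop (𝓝 ((G 0)⁻¹)) := by
    apply hCA.tendsto.comp
    have : Tendsto (fun ω : ℝ => 1/ω) atTop (𝓝 0) := by
      simpa [one_div] using tendsto_inv_atTop_zero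
    exact this
  have htendz : Tendsto (fun ω : ℝ => (G (1/ω))⁻¹ *ᵥ e) atTop
      (𝓝 ((-Complex.I) • e)) := by
    have hmv : Continuous (fun B : Matrix (Fin (n+1)) (Fin (n+1)) ℂ => B *ᵥ e) :=
      continuous_id.matrix_mulVec continuous_const
    have := hmv.continuousAt.tendsto.comp htend1
    rw [hG0inv] at this
    have heval : ((-Complex.I) • (1 : Matrix (Fin (n+1)) (Fin (n+1)) ℂ)) *ᵥ e
        = (-Complex.I) • e := by
      rw [Matrix.smul_mulVec, Matrix.one_mulVec]
    rw [← heval]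
    exact this
  have hgcont : Continuous g := by
    apply Continuous.neg
    apply Complex.continuous_re.comp
    apply continuous_finset_sum
    intro i _
    apply continuous_finset_sum
    intro j _
    exact continuous_const.mul
      (((Complex.continuous_conj.comp (continuous_apply i))).mul (continuous_apply j))
  have hgval : g ((-Complex.I) • e) = -(M (Fin.last n) (Fin.last n)) := by
    show -(∑ i, ∑ j, ((M i j : ℝ) : ℂ) *
        ((starRingEnd ℂ) (((-Complex.I) • e) i) * ((-Complex.I) • e) j)).re = _
    rw [Fintype.sum_eq_single (Fin.last n)]
    · rw [Fintype.sum_eq_single (Fin.last n)]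
      · simp [e, Pi.single_eq_same, Complex.mul_re, Complex.mul_im]
      · intro b hb
        simp [e, Pi.single_eq_of_ne hb]
    · intro b hb
      apply Finset.sum_eq_zero
      intro j _
      simp [e, Pi.single_eq_of_ne hb]
  -- eventual equality
  have hzeq : ∀ ω : ℝ, 1 ≤ ω →
      (G (1/ω))⁻¹ *ᵥ e = (ω : ℂ) • ((X ω)⁻¹ *ᵥ e) := by
    intro ω hω
    have hω0 : (ω : ℝ) ≠ 0 := by linarith
    have hωC : (ω : ℂ) ≠ 0 := by exact_mod_cast hω0
    have hG : G (1/ω) = ((ω:ℂ))⁻¹ • X ω := by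
      show Complex.I • 1 - (((1/ω : ℝ)) : ℂ) • M.map Complex.ofReal
          = ((ω:ℂ))⁻¹ • ((Complex.I * ω) • 1 - M.map Complex.ofReal)
      rw [smul_sub, smul_smul]
      congr 2
      · field_simp
      · push_cast
        rw [one_div]
    have hGinv : (G (1/ω))⁻¹ = (ω : ℂ) • (X ω)⁻¹ := by
      apply Matrix.inv_eq_right_inv
      rw [hG, Matrix.smul_mul, Matrix.mul_smul, smul_smul]
      rw [Matrix.mul_nonsing_inv _ ((Matrix.isUnit_iff_isUnit_det _).mp (hXunit ω))]
      rw [show ((ω:ℂ))⁻¹ * (ω:ℂ) = 1 from inv_mul_cancel₀ hωC, one_smul]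
    rw [hGinv, Matrix.smul_mulVec]
  refine ⟨fun ω => ⟨hXunit ω, ?_⟩, ?_, by linarith⟩
  · rw [show ((Pi.single (Fin.last n) 1 : Fin (n+1) → ℂ) ⬝ᵥ
        (((Complex.I * ω) • (1 : Matrix (Fin (n+1)) (Fin (n+1)) ℂ)
          - M.map Complex.ofReal)⁻¹ *ᵥ (Pi.single (Fin.last n) 1 : Fin (n+1) → ℂ)))
        = ((X ω)⁻¹ *ᵥ e) (Fin.last n) from hdot ω]
    exact hpos ω
  · have hfg : ∀ ω : ℝ, 1 ≤ ω → ω ^ 2 *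
        ((Pi.single (Fin.last n) 1 : Fin (n+1) → ℂ) ⬝ᵥ
          (((Complex.I * ω) • (1 : Matrix (Fin (n+1)) (Fin (n+1)) ℂ)
            - M.map Complex.ofReal)⁻¹ *ᵥ (Pi.single (Fin.last n) 1 : Fin (n+1) → ℂ))).re
        = g ((G (1/ω))⁻¹ *ᵥ e) := by
      intro ω hω
      rw [show ((Pi.single (Fin.last n) 1 : Fin (n+1) → ℂ) ⬝ᵥ
        (((Complex.I * ω) • (1 : Matrix (Fin (n+1)) (Fin (n+1)) ℂ)
          - M.map Complex.ofReal)⁻¹ *ᵥ (Pi.single (Fin.last n) 1 : Fin (n+1) → ℂ)))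
        = ((X ω)⁻¹ *ᵥ e) (Fin.last n) from hdot ω]
      rw [hkey1 ω, hzeq ω hω, hgscale]
    have htendg : Tendsto (fun ω : ℝ => g ((G (1/ω))⁻¹ *ᵥ e)) atTop
        (𝓝 (-(M (Fin.last n) (Fin.last n)))) := by
      rw [← hgval]
      exact (hgcont.tendsto _).comp htendz
    apply htendg.congr'
    filter_upwards [eventually_ge_atTop (1:ℝ)] with ω hω
    exact (hfg ω hω).symm
end

section
/- Let n ≥ 1, let A ∈ ℝ^{n×n} be Metzler and Hurwitz stable, let b₀ ∈ ℝⁿ with b₀ ≥ 0 entrywise, and let μ, θ > 0 with r := μ/θ. Define g₀ := −eₙᵀA⁻¹b₀ and g_n := −eₙᵀA⁻¹eₙ, and assume r < g₀. Set u* := (g₀ − r)/(g_n r) and Ā := A − u* eₙeₙᵀ. Then for all η > 0 and all k_p > 0, the (n+2)×(n+2) matrix [[Ā, 0, −k_p r eₙ], [0, −η u*, −μ k_p/u*], [eₙᵀ, −η u*, −μ k_p/u*]] is Hurwitz stable. -/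
open Matrix

section AuxLemmas

open Complex Filter

attribute [local instance] Matrix.linftyOpNormedRing Matrix.linftyOpNormedAlgebra
  Matrix.linftyOpNormedSpace

set_option maxHeartbeats 1000000

variable {m : Type*} [Fintype m] [DecidableEq m]

set_option linter.unusedSectionVars false in
lemma entries_pow_nonneg {Q : Matrix m m ℝ} (h : ∀ i j, 0 ≤ Q i j) :
    ∀ (k : ℕ) i j, 0 ≤ (Q ^ k) i j := by
  intro k
  induction k with
  | zero => intro i j; rw [pow_zero]; by_cases hij : i = j <;>
      simp [Matrix.one_apply, hij]
  | succ k ih =>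
      intro i j
      rw [pow_succ, Matrix.mul_apply]
      exact Finset.sum_nonneg fun l _ => mul_nonneg (ih i l) (h l j)
lemma exists_pow_norm_lt [Nonempty m] (A' : Matrix m m ℂ) (s δ R : ℝ) (hspos : 0 < s) (hδpos : 0 < δ)
    (hsR : R ^ 2 / (2 * δ) + 1 ≤ s)
    (hRe : ∀ z ∈ spectrum ℂ A', z.re ≤ -δ)
    (hNorm : ∀ z ∈ spectrum ℂ A', ‖z‖ ≤ R) :
    ∃ N : ℕ, 1 ≤ N ∧ ‖((s : ℂ)⁻¹ • A' + 1) ^ N‖ < 1 := by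
  classical
  set Q' : Matrix m m ℂ := (s : ℂ)⁻¹ • A' + 1 with hQ'
  have hsne : (s : ℂ) ≠ 0 := by exact_mod_cast hspos.ne'
  have hspec : ∀ ζ ∈ spectrum ℂ Q', ‖ζ‖ < 1 := by
    intro ζ hζ
    have h1 : Q' = (algebraMap ℂ _) (1 : ℂ) + (Units.mk0 (s : ℂ) hsne)⁻¹ • A' := by
      simp [hQ', Algebra.algebraMap_eq_smul_one, add_comm, Units.smul_def]
    rw [h1, ← spectrum.singleton_add_eq, spectrum.unit_smul_eq_smul] at hζ
    obtain ⟨o, ho, w, hw, rfl⟩ := Set.mem_add.mp hζ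
    obtain ⟨z, hz, rfl⟩ := hw
    rw [Set.mem_singleton_iff] at ho
    subst ho
    have hzre : z.re ≤ -δ := hRe z hz
    have hznorm : ‖z‖ ≤ R := hNorm z hz
    have hval : (Units.mk0 (s:ℂ) hsne)⁻¹ • z = ((s⁻¹ : ℝ) : ℂ) * z := by
      simp [Units.smul_def]
    show ‖1 + (Units.mk0 (s:ℂ) hsne)⁻¹ • z‖ < 1
    rw [hval]
    have hnormsq : Complex.normSq z = z.re ^ 2 + z.im ^ 2 := by
      rw [Complex.normSq_apply]; ring
    have hz2 : z.re ^ 2 + z.im ^ 2 ≤ R ^ 2 := by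
      have h1 : ‖z‖ ≤ R := hznorm
      have h2 : Complex.normSq z = ‖z‖ ^ 2 := (Complex.sq_norm z).symm
      nlinarith [norm_nonneg z]
    have hre : (1 + ((s⁻¹:ℝ):ℂ) * z).re = 1 + s⁻¹ * z.re := by
      simp [Complex.add_re, Complex.re_ofReal_mul]
    have him : (1 + ((s⁻¹:ℝ):ℂ) * z).im = s⁻¹ * z.im := by
      simp [Complex.add_im, Complex.im_ofReal_mul]
    have key : Complex.normSq (1 + ((s⁻¹:ℝ):ℂ) * z) < 1 := by
      rw [Complex.normSq_apply, hre, him]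
      have hsR' : R ^ 2 / s < 2 * δ := by
        rw [div_lt_iff₀ hspos]
        have h2δ : 0 < 2 * δ := by linarith
        have : R ^ 2 / (2 * δ) < s := by linarith
        calc R ^ 2 = R ^ 2 / (2*δ) * (2*δ) := by field_simp
        _ < s * (2*δ) := by exact mul_lt_mul_of_pos_right this h2δ
        _ = 2 * δ * s := by ring
      have expand : (1 + s⁻¹ * z.re) * (1 + s⁻¹ * z.re) + s⁻¹ * z.im * (s⁻¹ * z.im)
          = 1 + (2 * z.re + (z.re^2 + z.im^2) / s) / s := by
        field_simp; ring
      rw [expand]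
      have h3 : (z.re^2 + z.im^2)/s ≤ R^2/s := by
        gcongr
      have h4 : 2 * z.re + (z.re^2+z.im^2)/s < 0 := by
        have : (z.re^2+z.im^2)/s ≤ R^2/s := h3
        linarith
      have h5 : (2 * z.re + (z.re^2+z.im^2)/s)/s < 0 := div_neg_of_neg_of_pos h4 hspos
      linarith
    calc ‖1 + ((s⁻¹:ℝ):ℂ) * z‖ = ‖1 + ((s⁻¹:ℝ):ℂ) * z‖ := rfl
    _ < 1 := by
        rw [← Complex.sq_norm] at key
        nlinarith [norm_nonneg (1 + ((s⁻¹:ℝ):ℂ) * z)]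
  -- spectral radius < 1
  have hρ : spectralRadius ℂ Q' < 1 := by
    have := spectrum.spectralRadius_lt_of_forall_lt (a := Q') (r := 1)
      (fun z hz => by simpa [← NNReal.coe_lt_coe, coe_nnnorm] using hspec z hz)
    simpa using this
  have hgel := spectrum.pow_nnnorm_pow_one_div_tendsto_nhds_spectralRadius Q'
  have hev : ∀ᶠ n : ℕ in atTop, (‖Q' ^ n‖₊ : ENNReal) ^ (1/(n:ℝ)) < 1 :=
    hgel.eventually_lt_const hρ
  obtain ⟨N, hN1, hN2⟩ := ((eventually_ge_atTop 1).and hev).exists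
  refine ⟨N, hN1, ?_⟩
  have hNne : (N : ℝ) ≠ 0 := by positivity
  have h6 : ((‖Q' ^ N‖₊ : ENNReal) ^ (1/(N:ℝ))) ^ (N:ℝ) < 1 :=
    ENNReal.rpow_lt_one hN2 (by positivity)
  rw [← ENNReal.rpow_mul, one_div, inv_mul_cancel₀ hNne, ENNReal.rpow_one] at h6
  have h7 : ‖Q' ^ N‖₊ < 1 := by exact_mod_cast h6
  exact_mod_cast h7


lemma metzler_aux [Nonempty m] (A : Matrix m m ℝ) (hM : Metzler A) (hH : HurwitzStable A) :
    ∃ (s : ℝ) (B : Matrix m m ℝ), 0 < s ∧ (∀ i j, 0 ≤ B i j) ∧ (∀ i, 1 ≤ B i i) ∧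
      A * B = (-s) • 1 := by
  classical
  set A' : Matrix m m ℂ := A.map Complex.ofReal with hA'
  obtain ⟨z₀, hz₀K, hz₀max⟩ := (spectrum.isCompact A').exists_isMaxOn (spectrum.nonempty A')
    (Complex.continuous_re.continuousOn)
  set δ : ℝ := -z₀.re with hδ
  have hδpos : 0 < δ := by have := hH z₀ hz₀K; simp only [hδ]; linarith
  set R : ℝ := ‖A'‖ with hR
  set C : ℝ := ∑ i, |A i i| with hC
  set s : ℝ := max (C + 1) (R ^ 2 / (2 * δ) + 1) with hs
  have hs1 : (1 : ℝ) ≤ s := by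
    have h0 : (0:ℝ) ≤ R ^ 2 / (2 * δ) := by positivity
    have h1 : R ^ 2 / (2 * δ) + 1 ≤ s := le_max_right _ _
    linarith
  have hspos : 0 < s := by linarith
  have hsC : C + 1 ≤ s := le_max_left _ _
  have hsR : R ^ 2 / (2 * δ) + 1 ≤ s := le_max_right _ _
  have hdiag : ∀ i, 0 ≤ A i i + s := by
    intro i
    have h1 : -A i i ≤ C := by
      have h2 : |A i i| ≤ C := Finset.single_le_sum (f := fun i => |A i i|)
        (fun i _ => abs_nonneg _) (Finset.mem_univ i)
      cases abs_cases (A i i) with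
      | inl h => linarith [h.1]
      | inr h => linarith [h.1]
    linarith
  have hRe : ∀ z ∈ spectrum ℂ A', z.re ≤ -δ := fun z hz => by
    have := hz₀max hz; simpa [hδ] using this
  have hNorm : ∀ z ∈ spectrum ℂ A', ‖z‖ ≤ R := fun z hz =>
    spectrum.norm_le_norm_of_mem hz
  obtain ⟨N, hN1, hNlt⟩ := exists_pow_norm_lt A' s δ R hspos hδpos hsR hRe hNorm
  set Qr : Matrix m m ℝ := s⁻¹ • A + 1 with hQr
  have hQr0 : ∀ i j, 0 ≤ Qr i j := by
    intro i j
    by_cases hij : i = j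
    · subst hij
      have : Qr i i = s⁻¹ * A i i + 1 := by
        simp [hQr, Matrix.add_apply, Matrix.smul_apply, Matrix.one_apply, smul_eq_mul]
      rw [this]
      have h2 := hdiag i
      have h3 : s⁻¹ * (A i i + s) ≥ 0 := mul_nonneg (by positivity) h2
      have h4 : s⁻¹ * s = 1 := inv_mul_cancel₀ hspos.ne'
      nlinarith
    · have : Qr i j = s⁻¹ * A i j := by
        simp [hQr, Matrix.add_apply, Matrix.smul_apply, Matrix.one_apply, hij, smul_eq_mul]
      rw [this]
      exact mul_nonneg (by positivity) (hM i j hij)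
  set Φ : Matrix m m ℝ →+* Matrix m m ℂ := (Complex.ofRealHom).mapMatrix with hΦ
  have hΦapp : ∀ M : Matrix m m ℝ, Φ M = M.map Complex.ofReal := fun M => rfl
  have hΦinj : Function.Injective Φ := by
    intro M N h
    ext i j
    have h2 : (M.map Complex.ofReal) i j = (N.map Complex.ofReal) i j := by
      rw [← hΦapp, ← hΦapp, h]
    rw [Matrix.map_apply, Matrix.map_apply] at h2
    exact_mod_cast h2
  set Q' : Matrix m m ℂ := (s : ℂ)⁻¹ • A' + 1 with hQ'd
  have hQ'map : Q' = Φ Qr := by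
    ext i j
    simp [hQ'd, hΦapp, hQr, Matrix.add_apply, Matrix.smul_apply, Matrix.map_apply,
      Matrix.one_apply, hA', apply_ite, smul_eq_mul]
  have hpow : ∀ k : ℕ, Q' ^ k = Φ (Qr ^ k) := fun k => by rw [hQ'map, ← map_pow]
  -- geometric series
  have hsummable : Summable (fun k : ℕ => (Q' ^ N) ^ k) := summable_geometric_of_norm_lt_one hNlt
  set T0 : Matrix m m ℂ := ∑' k : ℕ, (Q' ^ N) ^ k with hT0
  have hinv : (1 - Q' ^ N) * T0 = 1 := mul_neg_geom_series _ hNlt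
  set Sg : Matrix m m ℂ := ∑ k ∈ Finset.range N, Q' ^ k with hSg
  have hSgid : (1 - Q') * Sg = 1 - Q' ^ N := mul_neg_geom_sum _ N
  set Binv : Matrix m m ℂ := Sg * T0 with hBinvd
  have hBinv : (1 - Q') * Binv = 1 := by
    rw [hBinvd, ← Matrix.mul_assoc, hSgid, hinv]
  -- entries of T0
  have hentry : ∀ i j : m, HasSum (fun k : ℕ => (((Qr ^ (N * k)) i j : ℝ) : ℂ)) (T0 i j) := by
    intro i j
    have hE : ∃ E : Matrix m m ℂ →L[ℂ] ℂ, ∀ M : Matrix m m ℂ, E M = M i j := by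
      refine ⟨LinearMap.toContinuousLinearMap
        { toFun := fun M : Matrix m m ℂ => M i j
          map_add' := fun _ _ => rfl
          map_smul' := fun _ _ => rfl }, fun M => rfl⟩
    obtain ⟨E, hEapp⟩ := hE
    have h1 := hsummable.hasSum.mapL E
    have h2 : (fun k => E ((Q' ^ N) ^ k)) = fun k => (((Qr ^ (N * k)) i j : ℝ) : ℂ) := by
      funext k
      rw [hEapp, ← pow_mul, hpow (N * k), hΦapp]
      rfl
    rw [h2, hEapp] at h1
    exact h1
  have hT0re : ∀ i j, HasSum (fun k : ℕ => (Qr ^ (N * k)) i j) ((T0 i j).re) ∧ (T0 i j).im = 0 := by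
    intro i j
    have h := (Complex.hasSum_iff _ _).mp (hentry i j)
    refine ⟨by simpa using h.1, ?_⟩
    have h2 : HasSum (fun _ : ℕ => (0:ℝ)) ((T0 i j).im) := by simpa using h.2
    exact (hasSum_zero.unique h2).symm
  set T0r : Matrix m m ℝ := Matrix.of fun i j => (T0 i j).re with hT0rd
  have hT0map : T0 = Φ T0r := by
    ext i j
    rw [hΦapp]
    apply Complex.ext
    · rfl
    · simp [Matrix.map_apply, (hT0re i j).2]
  have hT0r0 : ∀ i j, 0 ≤ T0r i j := by
    intro i j
    have h := (hT0re i j).1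
    show (0:ℝ) ≤ (T0 i j).re
    rw [← h.tsum_eq]
    exact tsum_nonneg fun k => entries_pow_nonneg hQr0 _ i j
  have hT0rdiag : ∀ i, 1 ≤ T0r i i := by
    intro i
    have h := (hT0re i i).1
    have h1 : (Qr ^ (N * 0)) i i ≤ ∑' k, (Qr ^ (N * k)) i i :=
      Summable.le_tsum h.summable 0 fun k _ => entries_pow_nonneg hQr0 _ i i
    rw [h.tsum_eq] at h1
    have h2 : (Qr ^ (N * 0)) i i = 1 := by
      simp [Matrix.one_apply]
    rw [h2] at h1
    exact h1
  set Sr : Matrix m m ℝ := ∑ k ∈ Finset.range N, Qr ^ k with hSrd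
  have hSgmap : Sg = Φ Sr := by rw [hSg, hSrd, map_sum]; exact Finset.sum_congr rfl fun k _ => hpow k
  set B : Matrix m m ℝ := Sr * T0r with hBd
  have hBmap : Binv = Φ B := by
    rw [hBinvd, hBd, hSgmap, hT0map]
    exact (_root_.map_mul Φ Sr T0r).symm
  have hSr0 : ∀ i j, 0 ≤ Sr i j := by
    intro i j
    rw [hSrd]
    simp only [Matrix.sum_apply]
    exact Finset.sum_nonneg fun k _ => entries_pow_nonneg hQr0 k i j
  have hSrdiag : ∀ i, 1 ≤ Sr i i := by
    intro i
    rw [hSrd]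
    simp only [Matrix.sum_apply]
    have h1 : (Qr ^ 0) i i ≤ ∑ k ∈ Finset.range N, (Qr ^ k) i i :=
      Finset.single_le_sum (f := fun k => (Qr ^ k) i i)
        (fun k _ => entries_pow_nonneg hQr0 k i i)
        (Finset.mem_range.mpr (by omega))
    have h2 : (Qr ^ 0) i i = 1 := by simp [Matrix.one_apply]
    rw [h2] at h1
    exact h1
  refine ⟨s, B, hspos, ?_, ?_, ?_⟩
  · intro i j
    rw [hBd, Matrix.mul_apply]
    exact Finset.sum_nonneg fun l _ => mul_nonneg (hSr0 i l) (hT0r0 l j)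
  · intro i
    rw [hBd, Matrix.mul_apply]
    have h1 : Sr i i * T0r i i ≤ ∑ l, Sr i l * T0r l i :=
      Finset.single_le_sum (f := fun l => Sr i l * T0r l i)
        (fun l _ => mul_nonneg (hSr0 i l) (hT0r0 l i)) (Finset.mem_univ i)
    nlinarith [hSrdiag i, hT0rdiag i, hT0r0 i i]
  · -- A * B = (-s) • 1
    have hA'eq : A' = (s:ℂ) • (Q' - 1) := by
      rw [hQ'd]
      rw [add_sub_cancel_right, smul_smul, mul_inv_cancel₀ (by exact_mod_cast hspos.ne' : (s:ℂ) ≠ 0), one_smul]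
    have hfin : A' * Binv = (-(s:ℂ)) • 1 := by
      rw [hA'eq, Matrix.smul_mul]
      have : (Q' - 1) * Binv = -(1 : Matrix m m ℂ) := by
        have h2 : (Q' - 1) = -(1 - Q') := (neg_sub _ _).symm
        rw [h2, Matrix.neg_mul, hBinv]
      rw [this]
      simp
    apply hΦinj
    have hΦA : Φ A = A' := by rw [hΦapp, hA']
    rw [_root_.map_mul, hΦA, ← hBmap, hfin]
    ext i j
    rw [hΦapp, Matrix.map_apply]
    by_cases hij : i = j
    · subst hij
      simp [Matrix.smul_apply, Matrix.one_apply_eq]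
    · simp [Matrix.smul_apply, Matrix.one_apply_ne hij]


lemma hurwitz_transpose_s12 {A : Matrix m m ℝ} (hH : HurwitzStable A) : HurwitzStable Aᵀ := by
  intro z hz
  apply hH z
  rw [spectrum.mem_iff] at hz ⊢
  intro hUnit
  apply hz
  rw [Matrix.isUnit_iff_isUnit_det] at hUnit ⊢
  have h1 : algebraMap ℂ (Matrix m m ℂ) z - Aᵀ.map Complex.ofReal
      = (algebraMap ℂ (Matrix m m ℂ) z - A.map Complex.ofReal)ᵀ := by
    rw [Matrix.transpose_sub, ← Matrix.transpose_map, Algebra.algebraMap_eq_smul_one,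
      Matrix.transpose_smul, Matrix.transpose_one]
  rw [h1, Matrix.det_transpose]
  exact hUnit

lemma metzler_posvec [Nonempty m] (A : Matrix m m ℝ) (hM : Metzler A) (hH : HurwitzStable A) :
    ∃ v : m → ℝ, (∀ i, 0 < v i) ∧ (∀ i, (A *ᵥ v) i < 0) := by
  obtain ⟨s, B, hs, hB0, hBd, hAB⟩ := metzler_aux A hM hH
  refine ⟨B *ᵥ (fun _ => 1), fun i => ?_, fun i => ?_⟩
  · have h1 : B i i * 1 ≤ ∑ j, B i j * 1 :=
      Finset.single_le_sum (f := fun j => B i j * 1)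
        (fun j _ => by simpa using hB0 i j) (Finset.mem_univ i)
    have h2 : (B *ᵥ (fun _ => 1)) i = ∑ j, B i j * 1 := rfl
    rw [h2]
    nlinarith [hBd i]
  · have h1 : A *ᵥ (B *ᵥ (fun _ => 1)) = (A * B) *ᵥ (fun _ => 1) :=
      Matrix.mulVec_mulVec _ _ _
    rw [h1, hAB]
    have h2 : ((-s) • (1 : Matrix m m ℝ)) *ᵥ (fun _ => 1) = (-s) • (fun _ => (1:ℝ)) := by
      rw [Matrix.smul_mulVec, Matrix.one_mulVec]
    rw [h2]
    simpa using hs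

lemma metzler_inv_diag_neg [Nonempty m] (A : Matrix m m ℝ) (hM : Metzler A) (hH : HurwitzStable A) :
    ∀ i, A⁻¹ i i < 0 := by
  obtain ⟨s, B, hs, hB0, hBd, hAB⟩ := metzler_aux A hM hH
  have h1 : A * ((-s⁻¹) • B) = 1 := by
    rw [Matrix.mul_smul, hAB, smul_smul]
    have : (-s⁻¹) * (-s) = 1 := by field_simp
    rw [this, one_smul]
  have h2 : A⁻¹ = (-s⁻¹) • B := Matrix.inv_eq_right_inv h1
  intro i
  rw [h2]
  have h3 : ((-s⁻¹) • B) i i = -s⁻¹ * B i i := rfl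
  rw [h3]
  nlinarith [hBd i, inv_pos.mpr hs]


lemma qf_neg (Ab : Matrix m m ℝ) (hMetz : Metzler Ab)
    (v w : m → ℝ) (hv : ∀ i, 0 < v i) (hw : ∀ i, 0 < w i)
    (hAv : ∀ i, (Ab *ᵥ v) i < 0) (hAw : ∀ i, (Abᵀ *ᵥ w) i < 0)
    (x : m → ℂ) (hx : x ≠ 0) :
    (∑ i, ∑ j, (w i / v i) * Ab i j * ((starRingEnd ℂ) (x i) * x j).re) < 0 := by
  classical
  set d : m → ℝ := fun i => w i / v i with hd
  have hdpos : ∀ i, 0 < d i := fun i => div_pos (hw i) (hv i)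
  have hdv : ∀ i, d i * v i = w i := fun i => div_mul_cancel₀ _ (hv i).ne'
  set y : m → ℝ := fun i => ‖x i‖ / v i with hy
  have hy0 : ∀ i, 0 ≤ y i := fun i => div_nonneg (norm_nonneg _) (hv i).le
  have habs : ∀ i, ‖x i‖ = v i * y i := fun i => by
    rw [hy, mul_comm, div_mul_cancel₀ _ (hv i).ne']
  obtain ⟨i₀, hi₀⟩ : ∃ i, x i ≠ 0 := by
    by_contra h
    push_neg at h
    exact hx (funext h)
  have hyi₀ : 0 < y i₀ := by
    have : 0 < ‖x i₀‖ := norm_pos_iff.mpr hi₀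
    exact div_pos this (hv i₀)
  -- Step A : bound by absolute values
  have stepA : (∑ i, ∑ j, d i * Ab i j * ((starRingEnd ℂ) (x i) * x j).re)
      ≤ ∑ i, ∑ j, d i * Ab i j * ((v i * y i) * (v j * y j)) := by
    apply Finset.sum_le_sum
    intro i _
    apply Finset.sum_le_sum
    intro j _
    rcases eq_or_ne i j with rfl | hij
    · have e1 : (starRingEnd ℂ) (x i) * x i = ((Complex.normSq (x i) : ℝ) : ℂ) := by
        rw [mul_comm, Complex.mul_conj]
      have h1 : ((starRingEnd ℂ) (x i) * x i).re = ‖x i‖ * ‖x i‖ := by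
        rw [e1, Complex.ofReal_re, ← Complex.sq_norm, sq]
      rw [h1, habs i]
    · have h1 : ((starRingEnd ℂ) (x i) * x j).re ≤ (v i * y i) * (v j * y j) := by
        calc ((starRingEnd ℂ) (x i) * x j).re ≤ ‖(starRingEnd ℂ) (x i) * x j‖ :=
              Complex.re_le_norm _
        _ = ‖x i‖ * ‖x j‖ := by
              rw [norm_mul, Complex.norm_conj]
        _ = (v i * y i) * (v j * y j) := by rw [habs i, habs j]
      have h2 : 0 ≤ d i * Ab i j := mul_nonneg (hdpos i).le (hMetz i j hij)
      exact mul_le_mul_of_nonneg_left h1 h2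
  -- Step B : the symmetrized real quadratic form is negative
  set e : m → m → ℝ := fun i j => (d i * Ab i j + d j * Ab j i) / 2 * (v i * v j) with he
  have hesymm : ∀ i j, e i j = e j i := fun i j => by rw [he]; ring
  have hswap : (∑ i, ∑ j, d i * Ab i j * ((v i * y i) * (v j * y j)))
      = ∑ i, ∑ j, d j * Ab j i * ((v i * y i) * (v j * y j)) := by
    rw [Finset.sum_comm]
    apply Finset.sum_congr rfl; intro i _
    apply Finset.sum_congr rfl; intro j _
    ring
  have hsym : (∑ i, ∑ j, d i * Ab i j * ((v i * y i) * (v j * y j)))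
      = ∑ i, ∑ j, e i j * (y i * y j) := by
    have h1 : (∑ i, ∑ j, e i j * (y i * y j))
        = ∑ i, ∑ j, (d i * Ab i j * ((v i * y i) * (v j * y j))
            + d j * Ab j i * ((v i * y i) * (v j * y j))) / 2 := by
      apply Finset.sum_congr rfl; intro i _
      apply Finset.sum_congr rfl; intro j _
      rw [he]; ring
    rw [h1]
    have h2 : ∀ i j : m, (d i * Ab i j * ((v i * y i) * (v j * y j))
        + d j * Ab j i * ((v i * y i) * (v j * y j))) / 2
        = d i * Ab i j * ((v i * y i) * (v j * y j)) / 2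
          + d j * Ab j i * ((v i * y i) * (v j * y j)) / 2 := fun i j => by ring
    simp only [h2, Finset.sum_add_distrib, ← Finset.sum_div]
    rw [← hswap]
    ring
  have hbound : (∑ i, ∑ j, e i j * (y i * y j))
      ≤ ∑ i, ∑ j, e i j * ((y i * y i + y j * y j) / 2) := by
    apply Finset.sum_le_sum; intro i _
    apply Finset.sum_le_sum; intro j _
    rcases eq_or_ne i j with rfl | hij
    · apply le_of_eq; ring
    · have he0 : 0 ≤ e i j := by
        rw [he]
        have h1 : 0 ≤ d i * Ab i j := mul_nonneg (hdpos i).le (hMetz i j hij)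
        have h2 : 0 ≤ d j * Ab j i := mul_nonneg (hdpos j).le (hMetz j i (Ne.symm hij))
        have h3 : 0 ≤ v i * v j := mul_nonneg (hv i).le (hv j).le
        positivity
      have hyy : y i * y j ≤ (y i * y i + y j * y j) / 2 := by nlinarith [sq_nonneg (y i - y j)]
      exact mul_le_mul_of_nonneg_left hyy he0
  have hcollapse : (∑ i, ∑ j, e i j * ((y i * y i + y j * y j) / 2))
      = ∑ i, (y i * y i) * (∑ j, e i j) := by
    have h0 : ∀ i j : m, e i j * ((y i * y i + y j * y j) / 2)
        = e i j * (y i * y i) / 2 + e i j * (y j * y j) / 2 := fun i j => by ring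
    have h1 : (∑ i, ∑ j, e i j * ((y i * y i + y j * y j) / 2))
        = (∑ i, ∑ j, e i j * (y i * y i)) / 2 + (∑ i, ∑ j, e i j * (y j * y j)) / 2 := by
      simp only [h0, Finset.sum_add_distrib, ← Finset.sum_div]
    have h2 : (∑ i, ∑ j, e i j * (y j * y j)) = ∑ i, ∑ j, e i j * (y i * y i) := by
      rw [Finset.sum_comm]
      apply Finset.sum_congr rfl; intro i _
      apply Finset.sum_congr rfl; intro j _
      rw [hesymm i j]
    have h3 : ∀ i : m, (∑ j, e i j * (y i * y i)) = (y i * y i) * (∑ j, e i j) := by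
      intro i
      rw [Finset.mul_sum]
      apply Finset.sum_congr rfl; intro j _; ring
    rw [h1, h2]
    rw [show ((∑ i, ∑ j, e i j * (y i * y i)) / 2 + (∑ i, ∑ j, e i j * (y i * y i)) / 2)
        = ∑ i, ∑ j, e i j * (y i * y i) by ring]
    exact Finset.sum_congr rfl fun i _ => h3 i
  have hrow : ∀ i, (∑ j, e i j) < 0 := by
    intro i
    have h1 : (∑ j, e i j) = (v i / 2) * (d i * (Ab *ᵥ v) i + (Abᵀ *ᵥ w) i) := by
      have hv1 : (Ab *ᵥ v) i = ∑ j, Ab i j * v j := rfl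
      have hw1 : (Abᵀ *ᵥ w) i = ∑ j, Ab j i * w j := by
        simp [Matrix.mulVec, dotProduct, Matrix.transpose_apply]
      rw [hv1, hw1]
      simp only [Finset.mul_sum, ← Finset.sum_add_distrib]
      apply Finset.sum_congr rfl; intro j _
      simp only [he]
      rw [← hdv j]
      ring
    rw [h1]
    have h2 : d i * (Ab *ᵥ v) i < 0 := mul_neg_of_pos_of_neg (hdpos i) (hAv i)
    have h3 : (Abᵀ *ᵥ w) i < 0 := hAw i
    have h4 : 0 < v i / 2 := by linarith [hv i]
    exact mul_neg_of_pos_of_neg h4 (by linarith)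
  have hfinal : (∑ i, (y i * y i) * (∑ j, e i j)) < 0 := by
    have h1 : ∀ i ∈ Finset.univ, (y i * y i) * (∑ j, e i j) ≤ 0 := fun i _ =>
      mul_nonpos_of_nonneg_of_nonpos (mul_nonneg (hy0 i) (hy0 i)) (hrow i).le
    have h2 : (y i₀ * y i₀) * (∑ j, e i₀ j) < 0 :=
      mul_neg_of_pos_of_neg (mul_pos hyi₀ hyi₀) (hrow i₀)
    calc (∑ i, (y i * y i) * (∑ j, e i j)) < ∑ _i : m, (0:ℝ) := by
          apply Finset.sum_lt_sum h1 ⟨i₀, Finset.mem_univ i₀, h2⟩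
    _ = 0 := by simp
  calc (∑ i, ∑ j, d i * Ab i j * ((starRingEnd ℂ) (x i) * x j).re)
      ≤ ∑ i, ∑ j, d i * Ab i j * ((v i * y i) * (v j * y j)) := stepA
  _ = ∑ i, ∑ j, e i j * (y i * y j) := hsym
  _ ≤ ∑ i, ∑ j, e i j * ((y i * y i + y j * y j) / 2) := hbound
  _ = ∑ i, (y i * y i) * (∑ j, e i j) := hcollapse
  _ < 0 := hfinal

end AuxLemmas

set_option maxHeartbeats 1000000 in
/-- Theorem 3 of the paper (structural stability, stable open-loop case): for a Metzler
Hurwitz stable matrix A and an admissible set-point r < g₀, the closed-loop Jacobian of the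
p-type AIC is Hurwitz stable for all controller parameters η, k_p > 0. -/
theorem stmt12 (n : ℕ) (A : Matrix (Fin (n+1)) (Fin (n+1)) ℝ)
    (hMetz : Metzler A) (hHur : HurwitzStable A)
    (b₀ : Fin (n+1) → ℝ) (hb₀ : ∀ i, 0 ≤ b₀ i)
    (μ θ r g₀ gn u : ℝ) (hμ : 0 < μ) (hθ : 0 < θ) (hr : r = μ / θ)
    (hg₀ : g₀ = -((A⁻¹ *ᵥ b₀) (Fin.last n)))
    (hgn : gn = -(A⁻¹ (Fin.last n) (Fin.last n)))
    (hadm : r < g₀) (hu : u = (g₀ - r) / (gn * r)) :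
    ∀ η kp : ℝ, 0 < η → 0 < kp →
      HurwitzStable (Matrix.fromBlocks
        (A - u • Matrix.vecMulVec (Pi.single (Fin.last n) 1) (Pi.single (Fin.last n) 1))
        (Matrix.of fun (i : Fin (n+1)) (j : Fin 2) =>
          if j = 1 then -(kp * r) * (Pi.single (Fin.last n) 1 : Fin (n+1) → ℝ) i else 0)
        (Matrix.of fun (i : Fin 2) (j : Fin (n+1)) =>
          if i = 1 then (Pi.single (Fin.last n) 1 : Fin (n+1) → ℝ) j else 0)
        !![-(η * u), -(μ * kp / u); -(η * u), -(μ * kp / u)]) := by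
  classical
  intro η kp hη hkp z hz
  by_contra hc
  push_neg at hc   -- hc : 0 ≤ z.re
  -- basic positivity
  have hr0 : 0 < r := by rw [hr]; positivity
  have hgn0 : 0 < gn := by
    have := metzler_inv_diag_neg A hMetz hHur (Fin.last n)
    rw [hgn]; linarith
  have hu0 : 0 < u := by
    rw [hu]
    apply div_pos (by linarith) (mul_pos hgn0 hr0)
  set b : ℝ := η * u with hbdef
  set c : ℝ := μ * kp / u with hcdef
  have hb0 : 0 < b := mul_pos hη hu0
  have hc0 : 0 < c := by rw [hcdef]; positivity
  have hkr0 : 0 < kp * r := mul_pos hkp hr0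
  -- the Metzler closed-loop A-block
  set f : Fin (n+1) → ℝ := Pi.single (Fin.last n) 1 with hfdef
  have hf0 : ∀ i, 0 ≤ f i := by
    intro i
    rw [hfdef, Pi.single_apply]
    split <;> norm_num
  have hflast : f (Fin.last n) = 1 := by rw [hfdef, Pi.single_eq_same]
  set Abar : Matrix (Fin (n+1)) (Fin (n+1)) ℝ := A - u • Matrix.vecMulVec f f with hAbar
  have hAbarMetz : Metzler Abar := by
    intro i j hij
    have h1 : Abar i j = A i j - u * (f i * f j) := by
      simp [hAbar, Matrix.sub_apply, Matrix.smul_apply, Matrix.vecMulVec_apply, smul_eq_mul]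
    rw [h1]
    have h2 : f i * f j = 0 := by
      rcases (em (i = Fin.last n)) with hi | hi
      · have hj : j ≠ Fin.last n := fun hjc => hij (hi.trans hjc.symm)
        have hfj : f j = 0 := by rw [hfdef, Pi.single_apply, if_neg hj]
        rw [hfj, mul_zero]
      · have hfi : f i = 0 := by rw [hfdef, Pi.single_apply, if_neg hi]
        rw [hfi, zero_mul]
    rw [h2, mul_zero, sub_zero]
    exact hMetz i j hij
  -- positive vectors for Abar and its transpose
  have hsumf : ∀ vv : Fin (n+1) → ℝ, (∑ j, f j * vv j) = vv (Fin.last n) := by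
    intro vv
    rw [hfdef]
    rw [Finset.sum_eq_single (Fin.last n)]
    · rw [Pi.single_eq_same, one_mul]
    · intro a _ ha; rw [Pi.single_apply, if_neg ha, zero_mul]
    · intro h; exact absurd (Finset.mem_univ _) h
  obtain ⟨v, hvpos, hvA⟩ := metzler_posvec A hMetz hHur
  obtain ⟨w, hwpos, hwA⟩ := metzler_posvec Aᵀ (fun i j hij => hMetz j i hij.symm)
    (hurwitz_transpose_s12 hHur)
  have hAbarv : ∀ i, (Abar *ᵥ v) i < 0 := by
    intro i
    have h1 : (Abar *ᵥ v) i = (A *ᵥ v) i - u * (f i * v (Fin.last n)) := by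
      rw [hAbar, Matrix.sub_mulVec]
      have h2 : ((u • Matrix.vecMulVec f f) *ᵥ v) i = u * (f i * v (Fin.last n)) := by
        rw [Matrix.smul_mulVec]
        have h3 : (Matrix.vecMulVec f f *ᵥ v) i = f i * ∑ j, f j * v j := by
          simp only [Matrix.mulVec, dotProduct, Matrix.vecMulVec_apply, Finset.mul_sum, mul_assoc]
        simp [h3, hsumf v, smul_eq_mul]
      rw [← h2]; rfl
    rw [h1]
    have h4 : 0 ≤ u * (f i * v (Fin.last n)) :=
      mul_nonneg hu0.le (mul_nonneg (hf0 i) (hvpos _).le)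
    linarith [hvA i]
  have hAbarTw : ∀ i, (Abarᵀ *ᵥ w) i < 0 := by
    intro i
    have h1 : Abarᵀ = Aᵀ - u • Matrix.vecMulVec f f := by
      rw [hAbar, Matrix.transpose_sub, Matrix.transpose_smul]
      congr 1
      ext i j
      simp [Matrix.transpose_apply, Matrix.vecMulVec_apply, mul_comm]
    rw [h1, Matrix.sub_mulVec]
    have h2 : ((u • Matrix.vecMulVec f f) *ᵥ w) i = u * (f i * w (Fin.last n)) := by
      rw [Matrix.smul_mulVec]
      have h3 : (Matrix.vecMulVec f f *ᵥ w) i = f i * ∑ j, f j * w j := by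
        simp only [Matrix.mulVec, dotProduct, Matrix.vecMulVec_apply, Finset.mul_sum, mul_assoc]
      simp [h3, hsumf w, smul_eq_mul]
    have h4 : 0 ≤ u * (f i * w (Fin.last n)) :=
      mul_nonneg hu0.le (mul_nonneg (hf0 i) (hwpos _).le)
    have h5 : (Aᵀ *ᵥ w) i - ((u • Matrix.vecMulVec f f) *ᵥ w) i < 0 := by
      rw [h2]; linarith [hwA i]
    exact h5
  -- eigenvector extraction
  set Bq : Matrix (Fin (n+1)) (Fin 2) ℝ := Matrix.of fun (i : Fin (n+1)) (j : Fin 2) =>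
    if j = 1 then -(kp * r) * f i else 0 with hBq
  set Cq : Matrix (Fin 2) (Fin (n+1)) ℝ := Matrix.of fun (i : Fin 2) (j : Fin (n+1)) =>
    if i = 1 then f j else 0 with hCq
  set Dq : Matrix (Fin 2) (Fin 2) ℝ := !![-(η * u), -(μ * kp / u); -(η * u), -(μ * kp / u)]
    with hDq
  set J : Matrix (Fin (n+1) ⊕ Fin 2) (Fin (n+1) ⊕ Fin 2) ℝ := Matrix.fromBlocks Abar Bq Cq Dq
    with hJ
  rw [spectrum.mem_iff] at hz
  have hdet : (algebraMap ℂ _ z - J.map Complex.ofReal).det = 0 := by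
    by_contra h
    exact hz ((Matrix.isUnit_iff_isUnit_det _).mpr (isUnit_iff_ne_zero.mpr h))
  obtain ⟨W, hW0, hWeq⟩ := (Matrix.exists_mulVec_eq_zero_iff).mpr hdet
  have hJW : (J.map Complex.ofReal) *ᵥ W = z • W := by
    have h1 : (algebraMap ℂ (Matrix (Fin (n+1) ⊕ Fin 2) (Fin (n+1) ⊕ Fin 2) ℂ) z
        - J.map Complex.ofReal) *ᵥ W = z • W - (J.map Complex.ofReal) *ᵥ W := by
      rw [Matrix.sub_mulVec, Algebra.algebraMap_eq_smul_one, Matrix.smul_mulVec,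
        Matrix.one_mulVec]
    rw [h1] at hWeq
    exact (sub_eq_zero.mp hWeq).symm
  set x : Fin (n+1) → ℂ := W ∘ Sum.inl with hx
  set ζ : Fin 2 → ℂ := W ∘ Sum.inr with hζ
  have hblocks : J.map Complex.ofReal = Matrix.fromBlocks (Abar.map Complex.ofReal)
      (Bq.map Complex.ofReal) (Cq.map Complex.ofReal) (Dq.map Complex.ofReal) := by
    rw [hJ, Matrix.fromBlocks_map]
  have hmv := hJW
  rw [hblocks] at hmv
  have hWelim : W = Sum.elim x ζ := by
    funext k
    cases k with
    | inl i => rfl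
    | inr j => rfl
  rw [hWelim, Matrix.fromBlocks_mulVec] at hmv
  have hE1 : ∀ i, ((Abar.map Complex.ofReal) *ᵥ (Sum.elim x ζ ∘ Sum.inl)) i
      + ((Bq.map Complex.ofReal) *ᵥ (Sum.elim x ζ ∘ Sum.inr)) i = z * x i := by
    intro i
    have := congrFun hmv (Sum.inl i)
    simpa [hWelim] using this
  have hE2' : ∀ j : Fin 2, ((Cq.map Complex.ofReal) *ᵥ (Sum.elim x ζ ∘ Sum.inl)) j
      + ((Dq.map Complex.ofReal) *ᵥ (Sum.elim x ζ ∘ Sum.inr)) j = z * ζ j := by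
    intro j
    have := congrFun hmv (Sum.inr j)
    simpa only [Sum.elim_inr, Pi.add_apply, Pi.smul_apply, smul_eq_mul] using this
  have hcompl : Sum.elim x ζ ∘ Sum.inl = x := rfl
  have hcompr : Sum.elim x ζ ∘ Sum.inr = ζ := rfl
  rw [hcompl, hcompr] at hE1 hE2'
  -- explicit forms of the three equations
  have hBmv : ∀ i, ((Bq.map Complex.ofReal) *ᵥ ζ) i
      = ((-(kp * r) * f i : ℝ) : ℂ) * ζ 1 := by
    intro i
    rw [Matrix.mulVec, dotProduct, Fin.sum_univ_two]
    simp [hBq, Matrix.map_apply]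
  have hCmv0 : ((Cq.map Complex.ofReal) *ᵥ x) 0 = 0 := by
    rw [Matrix.mulVec, dotProduct]
    apply Finset.sum_eq_zero
    intro j _
    simp [hCq, Matrix.map_apply]
  have hCmv1 : ((Cq.map Complex.ofReal) *ᵥ x) 1 = x (Fin.last n) := by
    rw [Matrix.mulVec, dotProduct]
    rw [Finset.sum_eq_single (Fin.last n)]
    · simp [hCq, Matrix.map_apply, hflast]
    · intro a _ ha
      have : f a = 0 := by rw [hfdef, Pi.single_apply, if_neg ha]
      simp [hCq, Matrix.map_apply, this]
    · intro h; exact absurd (Finset.mem_univ _) h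
  have hDmv : ∀ j : Fin 2, ((Dq.map Complex.ofReal) *ᵥ ζ) j
      = ((-b : ℝ) : ℂ) * ζ 0 + ((-c : ℝ) : ℂ) * ζ 1 := by
    intro j
    rw [Matrix.mulVec, dotProduct, Fin.sum_univ_two]
    fin_cases j <;> simp [hDq, hbdef, hcdef, Matrix.map_apply]
  have hE2 : ((-b : ℝ) : ℂ) * ζ 0 + ((-c : ℝ) : ℂ) * ζ 1 = z * ζ 0 := by
    have := hE2' 0
    rwa [hCmv0, hDmv 0, zero_add] at this
  have hE3 : x (Fin.last n) + (((-b : ℝ) : ℂ) * ζ 0 + ((-c : ℝ) : ℂ) * ζ 1) = z * ζ 1 := by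
    have := hE2' 1
    rwa [hCmv1, hDmv 1] at this
  -- non-vanishing of z + b
  set p : ℂ := z + (b : ℝ) with hpdef
  have hpre : p.re = z.re + b := by simp [hpdef]
  have hpim : p.im = z.im := by simp [hpdef]
  have hpne : p ≠ 0 := by
    intro h
    have : p.re = 0 := by rw [h]; rfl
    rw [hpre] at this
    linarith
  by_cases hx0 : x = 0
  · -- degenerate case : x = 0 forces W = 0
    have hζ1 : ζ 1 = 0 := by
      have h1 := hE1 (Fin.last n)
      rw [hx0, Matrix.mulVec_zero] at h1
      have h2 : ((-(kp * r) * f (Fin.last n) : ℝ) : ℂ) * ζ 1 = 0 := by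
        have hb := hBmv (Fin.last n)
        rw [← hb]
        simpa using h1
      have h3 : ((-(kp * r) * f (Fin.last n) : ℝ) : ℂ) ≠ 0 := by
        rw [hflast, mul_one]
        simp only [ne_eq, Complex.ofReal_eq_zero]
        linarith
      exact (mul_eq_zero.mp h2).resolve_left h3
    have hζ0 : ζ 0 = 0 := by
      have h1 : p * ζ 0 = -(c : ℂ) * ζ 1 := by
        rw [hpdef]
        push_cast at hE2 ⊢
        linear_combination -hE2
      rw [hζ1, mul_zero] at h1
      exact (mul_eq_zero.mp h1).resolve_left hpne
    apply hW0
    funext k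
    cases k with
    | inl i => have : x i = 0 := by rw [hx0]; rfl
               exact this
    | inr j => fin_cases j
               · exact hζ0
               · exact hζ1
  · -- main case : use the quadratic form
    set d : Fin (n+1) → ℝ := fun i => w i / v i with hddef
    have hdpos : ∀ i, 0 < d i := fun i => div_pos (hwpos i) (hvpos i)
    have hS1 := qf_neg Abar hAbarMetz v w hvpos hwpos hAbarv hAbarTw x hx0
    -- the complex weighted sum
    set L : ℂ := ∑ i, (d i : ℂ) * (starRingEnd ℂ) (x i) * (((Abar.map Complex.ofReal) *ᵥ x) i)
      with hLdef
    have hLre : L.re = ∑ i, ∑ j, d i * Abar i j * ((starRingEnd ℂ) (x i) * x j).re := by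
      rw [hLdef, Complex.re_sum]
      apply Finset.sum_congr rfl; intro i _
      have h1 : ((Abar.map Complex.ofReal) *ᵥ x) i = ∑ j, ((Abar i j : ℝ) : ℂ) * x j := by
        rw [Matrix.mulVec, dotProduct]
        apply Finset.sum_congr rfl; intro j _
        rw [Matrix.map_apply]
      rw [h1, Finset.mul_sum, Complex.re_sum]
      apply Finset.sum_congr rfl; intro j _
      have h2 : (d i : ℂ) * (starRingEnd ℂ) (x i) * (((Abar i j : ℝ) : ℂ) * x j)
          = ((d i * Abar i j : ℝ) : ℂ) * ((starRingEnd ℂ) (x i) * x j) := by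
        push_cast; ring
      rw [h2, Complex.re_ofReal_mul]
    -- second evaluation of L via the eigenvalue equations
    have hE1' : ∀ i, ((Abar.map Complex.ofReal) *ᵥ x) i
        = z * x i - ((-(kp * r) * f i : ℝ) : ℂ) * ζ 1 := by
      intro i
      have h := hE1 i
      rw [hBmv i] at h
      linear_combination h
    set P : ℝ := ∑ i, d i * Complex.normSq (x i) with hPdef
    have hP0 : 0 ≤ P := Finset.sum_nonneg fun i _ =>
      mul_nonneg (hdpos i).le (Complex.normSq_nonneg _)
    have hL2 : L = z * (P : ℂ)
        + ((kp * r * d (Fin.last n) : ℝ) : ℂ) * ((starRingEnd ℂ) (x (Fin.last n)) * ζ 1) := by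
      rw [hLdef]
      have h1 : ∀ i ∈ Finset.univ, (d i : ℂ) * (starRingEnd ℂ) (x i)
          * (((Abar.map Complex.ofReal) *ᵥ x) i)
          = z * ((d i * Complex.normSq (x i) : ℝ) : ℂ)
            + ((kp * r * d i * f i : ℝ) : ℂ) * ((starRingEnd ℂ) (x i) * ζ 1) := by
        intro i _
        rw [hE1' i]
        have e : (starRingEnd ℂ) (x i) * x i = ((Complex.normSq (x i) : ℝ) : ℂ) := by
          rw [mul_comm, Complex.mul_conj]
        push_cast
        linear_combination ((d i : ℂ)) * z * e
      rw [Finset.sum_congr rfl h1, Finset.sum_add_distrib]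
      congr 1
      · rw [← Finset.mul_sum]
        congr 1
        rw [hPdef]
        push_cast
        rfl
      · rw [Finset.sum_eq_single (Fin.last n)]
        · rw [hflast, mul_one]
        · intro a _ ha
          have hfa : f a = 0 := by rw [hfdef, Pi.single_apply, if_neg ha]
          rw [hfa]
          push_cast
          ring
        · intro h; exact absurd (Finset.mem_univ _) h
    -- conclude the real part inequality
    have hLre2 : L.re = z.re * P
        + (kp * r * d (Fin.last n)) * ((starRingEnd ℂ) (x (Fin.last n)) * ζ 1).re := by
      rw [hL2, Complex.add_re, Complex.re_ofReal_mul]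
      congr 1
      rw [mul_comm z, Complex.re_ofReal_mul]
      ring
    have hneg : ((starRingEnd ℂ) (x (Fin.last n)) * ζ 1).re < 0 := by
      have h1 : z.re * P ≥ 0 := mul_nonneg hc hP0
      have h2 : 0 < kp * r * d (Fin.last n) := by
        have := hdpos (Fin.last n)
        positivity
      have hS1' : (∑ i, ∑ j, d i * Abar i j * ((starRingEnd ℂ) (x i) * x j).re) < 0 := hS1
      have h4 : L.re < 0 := by rw [hLre]; exact hS1'
      rw [hLre2] at h4
      by_contra hge
      push_neg at hge
      have h5 : 0 ≤ (kp * r * d (Fin.last n)) * ((starRingEnd ℂ) (x (Fin.last n)) * ζ 1).re :=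
        mul_nonneg h2.le hge
      linarith only [h4, h1, h5]
    -- and the contradictory nonnegativity
    have hζ0v : ζ 0 = -(c : ℂ) * ζ 1 / p := by
      rw [eq_div_iff hpne, hpdef]
      push_cast at hE2 ⊢
      linear_combination -hE2
    have hxl : x (Fin.last n) = z * ζ 1 - z * ζ 0 := by
      linear_combination hE3 - hE2
    obtain ⟨g, hgdef⟩ : ∃ g : ℂ, g = z + (c : ℂ) * z / p := ⟨_, rfl⟩
    have h6 : x (Fin.last n) = g * ζ 1 := by
      rw [hxl, hζ0v, hgdef]
      field_simp
      ring
    have hkey : (starRingEnd ℂ) (x (Fin.last n)) * ζ 1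
        = (starRingEnd ℂ) g * ((Complex.normSq (ζ 1) : ℝ) : ℂ) := by
      have e : (starRingEnd ℂ) (ζ 1) * ζ 1 = ((Complex.normSq (ζ 1) : ℝ) : ℂ) := by
        rw [mul_comm, Complex.mul_conj]
      rw [h6, _root_.map_mul]
      calc (starRingEnd ℂ) g * (starRingEnd ℂ) (ζ 1) * ζ 1
          = (starRingEnd ℂ) g * ((starRingEnd ℂ) (ζ 1) * ζ 1) := by ring
      _ = (starRingEnd ℂ) g * ((Complex.normSq (ζ 1) : ℝ) : ℂ) := by rw [e]
    have hgre : 0 ≤ g.re := by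
      have h7 : g.re = z.re + c * (z / p).re := by
        rw [hgdef, Complex.add_re, mul_div_assoc, Complex.re_ofReal_mul]

      have h8 : (z / p).re = (z.re * (z.re + b) + z.im * z.im) / Complex.normSq p := by
        rw [Complex.div_re, hpre, hpim]
        ring
      have h9 : 0 ≤ (z.re * (z.re + b) + z.im * z.im) / Complex.normSq p := by
        apply div_nonneg
        · nlinarith [mul_self_nonneg z.im]
        · exact Complex.normSq_nonneg p
      rw [h7, h8]
      nlinarith
    have hfinalpos : 0 ≤ ((starRingEnd ℂ) (x (Fin.last n)) * ζ 1).re := by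
      rw [hkey, mul_comm, Complex.re_ofReal_mul, Complex.conj_re]
      exact mul_nonneg (Complex.normSq_nonneg _) hgre
    linarith
end

section
/- Let n ≥ 2 and let M ∈ ℝ^{n×n} be Metzler, invertible, and output unstable, i.e., the leading principal (n−1)×(n−1) submatrix M₁₁ of M is Hurwitz stable and M_{nn} > 0. Then: (a) the last column and last row of M⁻¹ are nonnegative off the diagonal entry, i.e., (M⁻¹)_{in} ≥ 0 and (M⁻¹)_{ni} ≥ 0 for all i < n, and (M⁻¹)_{nn} > 0; and (b) for every b₀ ∈ ℝⁿ with b₀ ≥ 0 entrywise, g₀ := −eₙᵀM⁻¹b₀ ≤ 0 and g_n := −eₙᵀM⁻¹eₙ < 0. -/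
open Matrix Filter Topology Finset
open scoped NNReal ENNReal Pointwise

attribute [local instance] Matrix.linftyOpNormedAddCommGroup Matrix.linftyOpNormedRing
  Matrix.linftyOpNormedAlgebra

variable {m : Type*} [Fintype m] [DecidableEq m]

lemma entry_nnnorm_le_linfty (A : Matrix m m ℂ) (i j : m) : ‖A i j‖₊ ≤ ‖A‖₊ := by
  rw [Matrix.linfty_opNNNorm_def]
  refine le_trans ?_ (Finset.le_sup (Finset.mem_univ i))
  exact Finset.single_le_sum (f := fun j' => ‖A i j'‖₊) (fun _ _ => zero_le) (Finset.mem_univ j)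

lemma pow_entry_nonneg {C : Matrix m m ℝ} (h : ∀ i j, 0 ≤ C i j) (k : ℕ) :
    ∀ i j, 0 ≤ (C ^ k) i j := by
  induction k with
  | zero =>
    intro i j
    rw [pow_zero]
    by_cases h : i = j <;> simp [Matrix.one_apply, h]
  | succ k ih =>
    intro i j
    rw [pow_succ, Matrix.mul_apply]
    exact Finset.sum_nonneg fun l _ => mul_nonneg (ih i l) (h l j)

theorem metzler_hurwitz_inv_nonpos (A : Matrix m m ℝ)
    (hM : Metzler A) (hH : HurwitzStable A) :
    IsUnit A.det ∧ ∀ i j, A⁻¹ i j ≤ 0 := by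
  classical
  set A' : Matrix m m ℂ := A.map Complex.ofReal with hA'def
  -- invertibility of A
  have h0 : (0 : ℂ) ∉ spectrum ℂ A' := fun h => by simpa using hH 0 h
  have hunit : IsUnit A' := by
    by_contra h
    exact h0 ((spectrum.zero_mem_iff (R := ℂ)).mpr h)
  have hdet' : IsUnit A'.det := (Matrix.isUnit_iff_isUnit_det _).mp hunit
  have hdetA : IsUnit A.det := by
    rw [isUnit_iff_ne_zero]
    intro h
    have hd : A'.det = Complex.ofRealHom A.det :=
      (RingHom.map_det Complex.ofRealHom A).symm
    rw [hd, isUnit_iff_ne_zero] at hdet'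
    exact hdet' (by simp [h])
  refine ⟨hdetA, ?_⟩
  -- choice of α
  have hSfin := Matrix.finite_spectrum A'
  obtain ⟨α, hα0, hαd, hαs⟩ : ∃ α : ℝ, 0 < α ∧ (∀ i, 0 ≤ A i i + α) ∧
      ∀ z ∈ spectrum ℂ A', Complex.normSq z < 2 * α * (-z.re) := by
    set α₁ : ℝ≥0 := Finset.univ.sup fun i : m => ‖A i i‖₊ with hα₁
    set g : ℂ → ℝ := fun z => Complex.normSq z / (2 * (-z.re)) with hg
    set α₂ : ℝ≥0 := hSfin.toFinset.sup fun z => Real.toNNReal (g z) with hα₂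
    refine ⟨(α₁ : ℝ) + (α₂ : ℝ) + 1, by positivity, fun i => ?_, fun z hz => ?_⟩
    · have h1 : -A i i ≤ (α₁ : ℝ) := by
        refine le_trans (neg_le_abs _) ?_
        have := Finset.le_sup (f := fun i : m => ‖A i i‖₊) (Finset.mem_univ i)
        calc |A i i| = ((‖A i i‖₊ : ℝ)) := by
              rw [coe_nnnorm, Real.norm_eq_abs]
          _ ≤ (α₁ : ℝ) := by exact_mod_cast this
      have : (0:ℝ) ≤ (α₂ : ℝ) := α₂.coe_nonneg
      linarith
    · have hre : 0 < -z.re := by simpa using neg_pos.mpr (hH z hz)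
      have h1 : g z ≤ (α₂ : ℝ) := by
        refine le_trans (Real.le_coe_toNNReal _) ?_
        exact_mod_cast Finset.le_sup (f := fun z => Real.toNNReal (g z))
          (hSfin.mem_toFinset.mpr hz)
      have h2 : g z < (α₁ : ℝ) + (α₂ : ℝ) + 1 := by
        have : (0:ℝ) ≤ (α₁ : ℝ) := α₁.coe_nonneg
        linarith
      rw [hg] at h2
      have := (div_lt_iff₀ (by linarith : (0:ℝ) < 2 * (-z.re))).mp h2
      calc Complex.normSq z < ((α₁:ℝ) + (α₂:ℝ) + 1) * (2 * (-z.re)) := this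
        _ = 2 * ((α₁:ℝ) + (α₂:ℝ) + 1) * (-z.re) := by ring
  -- the shifted, scaled matrix
  set C : Matrix m m ℝ := α⁻¹ • (A + α • (1 : Matrix m m ℝ)) with hCdef
  have hCnn : ∀ i j, 0 ≤ C i j := by
    intro i j
    rcases eq_or_ne i j with rfl | hne
    · have : C i i = α⁻¹ * (A i i + α) := by
        simp [hCdef, Matrix.smul_apply, Matrix.add_apply, Matrix.one_apply_eq, smul_eq_mul]
        ring
      rw [this]
      exact mul_nonneg (inv_nonneg.2 hα0.le) (hαd i)
    · have : C i j = α⁻¹ * A i j := by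
        simp [hCdef, Matrix.smul_apply, Matrix.add_apply, Matrix.one_apply_ne hne, smul_eq_mul]
      rw [this]
      exact mul_nonneg (inv_nonneg.2 hα0.le) (hM i j hne)
  have hpow := pow_entry_nonneg hCnn
  -- D = 1 - C = (-α⁻¹) • A
  have hD : (1 : Matrix m m ℝ) - C = (-α⁻¹) • A := by
    rw [hCdef, smul_add, smul_smul, inv_mul_cancel₀ hα0.ne', one_smul, neg_smul]
    abel
  have hDdet : IsUnit ((1 : Matrix m m ℝ) - C).det := by
    rw [hD, Matrix.det_smul, isUnit_iff_ne_zero]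
    refine mul_ne_zero (pow_ne_zero _ ?_) (isUnit_iff_ne_zero.mp hdetA)
    simpa using hα0.ne'
  -- complex version and its spectrum
  set C' : Matrix m m ℂ := C.map Complex.ofReal with hC'def
  have hC'eq : C' = ((α : ℂ))⁻¹ • (A' + (α : ℂ) • (1 : Matrix m m ℂ)) := by
    ext i j
    rcases eq_or_ne i j with rfl | hne
    · simp [hC'def, hCdef, hA'def, Matrix.smul_apply, Matrix.add_apply, Matrix.map_apply,
        Matrix.one_apply_eq, smul_eq_mul]
      push_cast
      ring
    · simp [hC'def, hCdef, hA'def, Matrix.smul_apply, Matrix.add_apply, Matrix.map_apply,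
        Matrix.one_apply_ne hne, smul_eq_mul]
  have hspecC' : ∀ μ ∈ spectrum ℂ C', ‖μ‖₊ < 1 := by
    intro μ hμ
    have hαC : ((α : ℂ))⁻¹ ≠ 0 := by
      simp only [ne_eq, inv_eq_zero, Complex.ofReal_eq_zero]
      exact hα0.ne'
    set u : ℂˣ := Units.mk0 _ hαC with hu
    have hμ' : μ ∈ spectrum ℂ (u • (A' + (α : ℂ) • (1 : Matrix m m ℂ))) := by
      rw [Units.smul_def]
      rwa [hC'eq] at hμ
    rw [spectrum.unit_smul_eq_smul] at hμ'
    obtain ⟨ν, hν, rfl⟩ := hμ'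
    have hshift : A' + (α : ℂ) • (1 : Matrix m m ℂ) =
        algebraMap ℂ (Matrix m m ℂ) (α : ℂ) + A' := by
      rw [Algebra.algebraMap_eq_smul_one]
      abel
    rw [hshift, ← spectrum.singleton_add_eq, Set.singleton_add] at hν
    obtain ⟨z, hz, rfl⟩ := hν
    -- now estimate the norm
    have hre : 0 < -z.re := by simpa using neg_pos.mpr (hH z hz)
    have hn2 : ‖(α : ℂ) + z‖ ^ 2 < α ^ 2 := by
      have he : ‖(α : ℂ) + z‖ ^ 2 = Complex.normSq ((α : ℂ) + z) := by
        rw [Complex.sq_norm]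
      rw [he]
      have hs := hαs z hz
      rw [Complex.normSq_apply] at hs ⊢
      simp only [Complex.add_re, Complex.add_im, Complex.ofReal_re, Complex.ofReal_im]
      nlinarith [hs]
    have hnorm : ‖(α : ℂ) + z‖ < α := by
      refine lt_of_pow_lt_pow_left₀ 2 hα0.le hn2
    have : ‖u • ((α : ℂ) + z)‖ < 1 := by
      rw [Units.smul_def, smul_eq_mul, norm_mul, hu]
      have h1 : ‖((α : ℂ))⁻¹‖ = α⁻¹ := by
        rw [norm_inv, Complex.norm_real, Real.norm_eq_abs, abs_of_pos hα0]
      simp only [Units.val_mk0, h1]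
      calc α⁻¹ * ‖(α : ℂ) + z‖ < α⁻¹ * α := by
            exact mul_lt_mul_of_pos_left hnorm (inv_pos.2 hα0)
        _ = 1 := inv_mul_cancel₀ hα0.ne'
    exact_mod_cast this
  -- spectral radius bound
  have hTfin := Matrix.finite_spectrum C'
  set r : ℝ≥0 := hTfin.toFinset.sup (fun μ => ‖μ‖₊) with hr
  have hr1 : r < 1 := by
    rw [hr]
    refine (Finset.sup_lt_iff (by norm_num : (⊥ : ℝ≥0) < 1)).mpr ?_
    intro μ hμ
    exact hspecC' μ (hTfin.mem_toFinset.mp hμ)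
  have hρ : spectralRadius ℂ C' ≤ (r : ℝ≥0∞) := by
    rw [spectralRadius]
    refine iSup₂_le fun μ hμ => ?_
    exact_mod_cast Finset.le_sup (f := fun μ => ‖μ‖₊) (hTfin.mem_toFinset.mpr hμ)
  haveI : CompleteSpace (Matrix m m ℂ) :=
    FiniteDimensional.complete ℂ _
  have hgel := spectrum.pow_nnnorm_pow_one_div_tendsto_nhds_spectralRadius C'
  set t : ℝ≥0 := (r + 1) / 2 with ht
  have hrt : r < t := by
    rw [ht, ← NNReal.coe_lt_coe]
    push_cast
    rw [← NNReal.coe_lt_coe] at hr1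
    push_cast at hr1
    linarith
  have ht1 : t < 1 := by
    rw [ht, ← NNReal.coe_lt_coe]
    push_cast
    rw [← NNReal.coe_lt_coe] at hr1
    push_cast at hr1
    linarith
  have hlt : spectralRadius ℂ C' < (t : ℝ≥0∞) :=
    lt_of_le_of_lt hρ (by exact_mod_cast hrt)
  have hev := hgel.eventually_lt_const hlt
  have hnorm : ∀ᶠ k in atTop, ‖C' ^ k‖ ≤ (t : ℝ) ^ k := by
    filter_upwards [hev, eventually_ge_atTop 1] with k hk hk1
    have hk0 : (k : ℝ) ≠ 0 := Nat.cast_ne_zero.mpr (by omega)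
    have h2 := ENNReal.rpow_le_rpow hk.le (Nat.cast_nonneg k : (0:ℝ) ≤ (k:ℝ))
    rw [← ENNReal.rpow_mul, one_div_mul_cancel hk0, ENNReal.rpow_one,
      ENNReal.rpow_natCast, ← ENNReal.coe_pow, ENNReal.coe_le_coe] at h2
    calc ‖C' ^ k‖ = ((‖C' ^ k‖₊ : ℝ)) := rfl
      _ ≤ ((t ^ k : ℝ≥0) : ℝ) := by exact_mod_cast h2
      _ = (t : ℝ) ^ k := by push_cast; ring
  have hlim : Tendsto (fun k => ‖C' ^ k‖) atTop (𝓝 0) :=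
    squeeze_zero' (Eventually.of_forall fun k => norm_nonneg _) hnorm
      (tendsto_pow_atTop_nhds_zero_of_lt_one t.coe_nonneg (by exact_mod_cast ht1))
  have hent : ∀ i j, Tendsto (fun k => (C ^ k) i j) atTop (𝓝 0) := by
    intro i j
    refine squeeze_zero_norm (fun k => ?_) hlim
    have h1 : C' ^ k = (C ^ k).map Complex.ofReal := by
      have := (map_pow (RingHom.mapMatrix Complex.ofRealHom) C k).symm
      exact this
    calc ‖(C ^ k) i j‖ = ‖(C' ^ k) i j‖ := by
          rw [h1, Matrix.map_apply, Complex.norm_real]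
      _ ≤ ‖C' ^ k‖ := by exact_mod_cast entry_nnnorm_le_linfty (C' ^ k) i j
  -- partial geometric sums
  have hgeom : ∀ k : ℕ, ((1 : Matrix m m ℝ) - C) * (∑ j ∈ Finset.range k, C ^ j)
      = 1 - C ^ k := by
    intro k
    have h1 := mul_geom_sum C k
    calc ((1 : Matrix m m ℝ) - C) * (∑ j ∈ Finset.range k, C ^ j)
        = -((C - 1) * ∑ j ∈ Finset.range k, C ^ j) := by rw [← neg_sub, neg_mul]
      _ = -(C ^ k - 1) := by rw [h1]
      _ = 1 - C ^ k := by rw [neg_sub]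
  have hSeq : ∀ k : ℕ, (∑ j ∈ Finset.range k, C ^ j)
      = ((1 : Matrix m m ℝ) - C)⁻¹ * (1 - C ^ k) := by
    intro k
    rw [← hgeom k, Matrix.nonsing_inv_mul_cancel_left _ _ hDdet]
  have hDinv : ∀ i j, 0 ≤ ((1 : Matrix m m ℝ) - C)⁻¹ i j := by
    intro i j
    have h2 : Tendsto (fun k => (((1 : Matrix m m ℝ) - C)⁻¹ * ((1 : Matrix m m ℝ) - C ^ k)) i j) atTop
        (𝓝 (((1 : Matrix m m ℝ) - C)⁻¹ i j)) := by
      have h3 : ∀ l, Tendsto (fun k => ((1 : Matrix m m ℝ) - C)⁻¹ i l *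
          ((1 : Matrix m m ℝ) l j - (C ^ k) l j)) atTop
          (𝓝 (((1 : Matrix m m ℝ) - C)⁻¹ i l * ((1 : Matrix m m ℝ) l j - 0))) :=
        fun l => ((tendsto_const_nhds.sub (hent l j)).const_mul _)
      have h4 := tendsto_finset_sum Finset.univ (fun l _ => h3 l)
      have h5 : ∑ l, ((1 : Matrix m m ℝ) - C)⁻¹ i l * ((1 : Matrix m m ℝ) l j - 0)
          = ((1 : Matrix m m ℝ) - C)⁻¹ i j := by
        simp only [sub_zero]
        rw [← Matrix.mul_apply, Matrix.mul_one]
      rw [h5] at h4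
      convert h4 using 2 with k
      rw [Matrix.mul_apply]; rfl
    refine ge_of_tendsto' h2 fun k => ?_
    rw [← hSeq k]
    have : (∑ j' ∈ Finset.range k, C ^ j') i j = ∑ j' ∈ Finset.range k, (C ^ j') i j := by
      simp [Matrix.sum_apply]
    rw [this]
    exact Finset.sum_nonneg fun l _ => hpow l i j
  -- transfer to A⁻¹
  intro i j
  have hAinv : A⁻¹ = (-α⁻¹) • ((1 : Matrix m m ℝ) - C)⁻¹ := by
    refine Matrix.inv_eq_left_inv ?_
    have hA : A = (-α) • ((1 : Matrix m m ℝ) - C) := by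
      rw [hD, smul_smul]
      rw [show (-α) * -α⁻¹ = 1 by field_simp]
      rw [one_smul]
    rw [hA, Matrix.smul_mul, Matrix.mul_smul, smul_smul,
      show (-α⁻¹) * -α = 1 by field_simp, one_smul,
      Matrix.nonsing_inv_mul _ hDdet]
  rw [hAinv, Matrix.smul_apply, smul_eq_mul]
  have := hDinv i j
  nlinarith [inv_pos.mpr hα0]

/-- Lemma 3 of the paper: sign pattern of the inverse of a Metzler, invertible,
output unstable matrix, and the resulting signs of the gains g₀ and g_n. -/
theorem stmt13 (n : ℕ) (M : Matrix (Fin (n+2)) (Fin (n+2)) ℝ)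
    (hMetz : Metzler M) (hInv : IsUnit M.det)
    (h11 : HurwitzStable (M.submatrix Fin.castSucc Fin.castSucc))
    (hnn : 0 < M (Fin.last (n+1)) (Fin.last (n+1))) :
    (∀ i : Fin (n+1),
      0 ≤ M⁻¹ (Fin.castSucc i) (Fin.last (n+1)) ∧
      0 ≤ M⁻¹ (Fin.last (n+1)) (Fin.castSucc i)) ∧
    0 < M⁻¹ (Fin.last (n+1)) (Fin.last (n+1)) ∧
    ∀ b₀ : Fin (n+2) → ℝ, (∀ i, 0 ≤ b₀ i) →
      -((M⁻¹ *ᵥ b₀) (Fin.last (n+1))) ≤ 0 ∧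
      -(M⁻¹ (Fin.last (n+1)) (Fin.last (n+1))) < 0 := by
  classical
  obtain ⟨hAdet, hAinv⟩ := metzler_hurwitz_inv_nonpos (M.submatrix Fin.castSucc Fin.castSucc)
    (fun i j hij => hMetz _ _ (fun h => hij (Fin.castSucc_injective _ h))) h11
  set A : Matrix (Fin (n+1)) (Fin (n+1)) ℝ := M.submatrix Fin.castSucc Fin.castSucc with hA
  set b : Fin (n+1) → ℝ := fun i => M i.castSucc (Fin.last (n+1)) with hb
  set c : Fin (n+1) → ℝ := fun j => M (Fin.last (n+1)) j.castSucc with hc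
  set d : ℝ := M (Fin.last (n+1)) (Fin.last (n+1)) with hd
  have hbn : ∀ i, 0 ≤ b i := fun i => hMetz _ _ (Fin.castSucc_lt_last i).ne
  have hcn : ∀ j, 0 ≤ c j := fun j => hMetz _ _ (Fin.castSucc_lt_last j).ne'
  set u : Fin (n+1) → ℝ := A⁻¹ *ᵥ b with hu
  set v : Fin (n+1) → ℝ := c ᵥ* A⁻¹ with hv
  have hun : ∀ i, u i ≤ 0 := by
    intro i
    rw [hu]
    simp only [Matrix.mulVec, dotProduct]
    exact Finset.sum_nonpos fun j _ => mul_nonpos_of_nonpos_of_nonneg (hAinv i j) (hbn j)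
  have hvn : ∀ j, v j ≤ 0 := by
    intro j
    rw [hv]
    simp only [Matrix.vecMul, dotProduct]
    exact Finset.sum_nonpos fun i _ => mul_nonpos_of_nonneg_of_nonpos (hcn i) (hAinv i j)
  have hcu : c ⬝ᵥ u ≤ 0 := by
    simp only [dotProduct]
    exact Finset.sum_nonpos fun i _ => mul_nonpos_of_nonneg_of_nonpos (hcn i) (hun i)
  set s : ℝ := d - c ⬝ᵥ u with hs
  have hs0 : 0 < s := by
    rw [hs]
    have : 0 < d := hnn
    linarith
  have hsinv : 0 < s⁻¹ := inv_pos.2 hs0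
  -- scalar identities
  have hAA : A * A⁻¹ = 1 := Matrix.mul_nonsing_inv _ hAdet
  have hAA' : ∀ i₀ j₀, ∑ i, A i₀ i * A⁻¹ i j₀ = (1 : Matrix (Fin (n+1)) (Fin (n+1)) ℝ) i₀ j₀ :=
    fun i₀ j₀ => by rw [← Matrix.mul_apply, hAA]
  have hAu : A *ᵥ u = b := by
    rw [hu, Matrix.mulVec_mulVec, hAA, Matrix.one_mulVec]
  have hAu' : ∀ i₀, ∑ i, A i₀ i * u i = b i₀ := by
    intro i₀
    have := congrFun hAu i₀
    simpa [Matrix.mulVec, dotProduct] using this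
  have hv' : ∀ j₀, ∑ i, c i * A⁻¹ i j₀ = v j₀ := by
    intro j₀
    rw [hv]
    simp [Matrix.vecMul, dotProduct]
  have hcu' : ∑ i, c i * u i = c ⬝ᵥ u := by simp [dotProduct]
  -- candidate inverse
  set W : Matrix (Fin (n+2)) (Fin (n+2)) ℝ := fun k l =>
    Fin.lastCases (Fin.lastCases s⁻¹ (fun j => -(s⁻¹ * v j)) l)
      (fun i => Fin.lastCases (-(s⁻¹ * u i)) (fun j => A⁻¹ i j + s⁻¹ * u i * v j) l) k with hW
  have hWcc : ∀ i j : Fin (n+1), W i.castSucc j.castSucc = A⁻¹ i j + s⁻¹ * u i * v j := by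
    intro i j; simp [hW]
  have hWcl : ∀ i : Fin (n+1), W i.castSucc (Fin.last (n+1)) = -(s⁻¹ * u i) := by
    intro i; simp [hW]
  have hWlc : ∀ j : Fin (n+1), W (Fin.last (n+1)) j.castSucc = -(s⁻¹ * v j) := by
    intro j; simp [hW]
  have hWll : W (Fin.last (n+1)) (Fin.last (n+1)) = s⁻¹ := by simp [hW]
  have hMcc : ∀ i j : Fin (n+1), M i.castSucc j.castSucc = A i j := fun i j => rfl
  have hMc : ∀ i : Fin (n+1), M (Fin.last (n+1)) i.castSucc = c i := fun i => rfl
  have hMb : ∀ i : Fin (n+1), M i.castSucc (Fin.last (n+1)) = b i := fun i => rfl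
  have hMd : M (Fin.last (n+1)) (Fin.last (n+1)) = d := rfl
  have hcus : c ⬝ᵥ u = d - s := by rw [hs]; ring
  -- M * W = 1
  have hMW : M * W = 1 := by
    ext k l
    rw [Matrix.mul_apply, Fin.sum_univ_castSucc]
    induction k using Fin.lastCases with
    | last =>
      induction l using Fin.lastCases with
      | last =>
        simp only [hWll, hWcl, hMc, hMd]
        have e1 : ∀ i, c i * -(s⁻¹ * u i) = -(s⁻¹) * (c i * u i) := fun i => by ring
        rw [Finset.sum_congr rfl fun i _ => e1 i, ← Finset.mul_sum, hcu', hcus,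
          Matrix.one_apply_eq]
        field_simp
        ring
      | cast j₀ =>
        simp only [hWcc, hWlc, hMc, hMd]
        have e1 : ∀ i, c i * (A⁻¹ i j₀ + s⁻¹ * u i * v j₀)
            = c i * A⁻¹ i j₀ + (c i * u i) * (s⁻¹ * v j₀) := fun i => by ring
        rw [Finset.sum_congr rfl fun i _ => e1 i, Finset.sum_add_distrib, ← Finset.sum_mul,
          hv' j₀, hcu', hcus, Matrix.one_apply_ne (Fin.castSucc_lt_last j₀).ne']
        field_simp
        ring
    | cast i₀ =>
      induction l using Fin.lastCases with
      | last =>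
        simp only [hWll, hWcl, hMcc, hMb]
        have e1 : ∀ i, A i₀ i * -(s⁻¹ * u i)
            = -(s⁻¹) * (A i₀ i * u i) := fun i => by ring
        rw [Finset.sum_congr rfl fun i _ => e1 i, ← Finset.mul_sum, hAu' i₀,
          Matrix.one_apply_ne (Fin.castSucc_lt_last i₀).ne]
        ring
      | cast j₀ =>
        simp only [hWcc, hWlc, hMcc, hMb]
        have e1 : ∀ i, A i₀ i * (A⁻¹ i j₀ + s⁻¹ * u i * v j₀)
            = A i₀ i * A⁻¹ i j₀ + (A i₀ i * u i) * (s⁻¹ * v j₀) := fun i => by ring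
        rw [Finset.sum_congr rfl fun i _ => e1 i, Finset.sum_add_distrib, ← Finset.sum_mul,
          hAA' i₀ j₀, hAu' i₀]
        have h1e : (1 : Matrix (Fin (n+2)) (Fin (n+2)) ℝ) i₀.castSucc j₀.castSucc
            = (1 : Matrix (Fin (n+1)) (Fin (n+1)) ℝ) i₀ j₀ := by
          simp [Matrix.one_apply, Fin.castSucc_inj]
        rw [h1e]
        ring
  have hMinv : M⁻¹ = W := Matrix.inv_eq_right_inv hMW
  have hrow : ∀ x : Fin (n+2), 0 ≤ W (Fin.last (n+1)) x := by
    intro x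
    induction x using Fin.lastCases with
    | last => rw [hWll]; exact hsinv.le
    | cast j => rw [hWlc]; nlinarith [hvn j]
  refine ⟨fun i => ⟨?_, ?_⟩, ?_, fun b₀ hb₀ => ⟨?_, ?_⟩⟩
  · rw [hMinv, hWcl]; nlinarith [hun i]
  · rw [hMinv]; exact hrow i.castSucc
  · rw [hMinv, hWll]; exact hsinv
  · rw [hMinv]
    simp only [Matrix.mulVec, dotProduct, neg_nonpos]
    exact Finset.sum_nonneg fun x _ => mul_nonneg (hrow x) (hb₀ x)
  · rw [hMinv, hWll]
    simpa using hsinv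
end

section
/- Let n ≥ 2 and let A ∈ ℝ^{n×n} be Metzler, invertible, and output unstable (its leading principal (n−1)×(n−1) submatrix A₁₁ is Hurwitz stable and A_{nn} > 0). Let b₀ ∈ ℝⁿ with b₀ ≥ 0 entrywise, let r > 0, and define g₀ := −eₙᵀA⁻¹b₀, g_n := −eₙᵀA⁻¹eₙ, and u* := (g₀ − r)/(g_n r). Then the matrix A − u* eₙeₙᵀ is Hurwitz stable if and only if g₀ < 0. -/
open Matrix

namespace Stmt14Aux


variable {m : Type*} [Fintype m] [DecidableEq m]

theorem map_smul_one_sub (M : Matrix m m ℝ) (x : ℝ) :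
    ((x • (1:Matrix m m ℝ) - M).map Complex.ofReal) =
      (x : ℂ) • (1 : Matrix m m ℂ) - M.map Complex.ofReal := by
  ext i j
  by_cases h : i = j <;>
    simp [Matrix.map_apply, Matrix.one_apply, h, Matrix.smul_apply]

theorem mem_spectrum_of_det_eq_zero {M : Matrix m m ℝ} {x : ℝ}
    (hdet : (x • (1:Matrix m m ℝ) - M).det = 0) :
    (x : ℂ) ∈ spectrum ℂ (M.map Complex.ofReal) := by
  rw [spectrum.mem_iff]
  have h1 : (algebraMap ℂ (Matrix m m ℂ) x) = (x : ℂ) • (1 : Matrix m m ℂ) :=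
    Algebra.algebraMap_eq_smul_one _
  rw [h1, ← map_smul_one_sub]
  have h2 : ((x • (1:Matrix m m ℝ) - M).map Complex.ofReal).det
      = ((x • (1:Matrix m m ℝ) - M).det : ℂ) :=
    (RingHom.map_det Complex.ofRealHom _).symm
  intro hU
  rw [Matrix.isUnit_iff_isUnit_det, h2, hdet] at hU
  simp at hU

theorem det_ne_zero_of_hurwitz {M : Matrix m m ℝ} (h : HurwitzStable M) : M.det ≠ 0 := by
  intro h0
  have hdet : ((0:ℝ) • (1:Matrix m m ℝ) - M).det = 0 := by
    simp [Matrix.det_neg, h0]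
  have := h _ (mem_spectrum_of_det_eq_zero hdet)
  simp at this

/-- weighted Gershgorin: a Metzler matrix with a positive vector `v` such that `M v < 0`
is Hurwitz stable. -/
theorem hurwitz_of_pos_vec {M : Matrix m m ℝ} (hoff : ∀ i j, i ≠ j → 0 ≤ M i j)
    {v : m → ℝ} (hv : ∀ i, 0 < v i) (hMv : ∀ i, (M *ᵥ v) i < 0) :
    HurwitzStable M := by
  intro z hz
  rw [spectrum.mem_iff] at hz
  have h1 : (algebraMap ℂ (Matrix m m ℂ) z) = z • (1 : Matrix m m ℂ) :=
    Algebra.algebraMap_eq_smul_one _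
  rw [h1, Matrix.isUnit_iff_isUnit_det, isUnit_iff_ne_zero, not_not] at hz
  obtain ⟨w, hw0, hww⟩ := (Matrix.exists_mulVec_eq_zero_iff).mpr hz
  -- eigen equation
  have heig : ∀ i, z * w i = ∑ j, (M i j : ℂ) * w j := by
    intro i
    have h0 := congrFun hww i
    simp only [Matrix.mulVec, dotProduct, Matrix.sub_apply, Matrix.smul_apply,
      Matrix.one_apply, smul_eq_mul, mul_ite, mul_one, mul_zero, ite_mul, zero_mul, sub_mul,
      Finset.sum_sub_distrib, Finset.sum_ite_eq, Finset.mem_univ, if_true, Pi.zero_apply,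
      Matrix.map_apply, sub_eq_zero] at h0
    exact h0
  -- pick maximizing index
  obtain ⟨j0, hj0⟩ : ∃ j, w j ≠ 0 := by
    by_contra hc
    push_neg at hc
    exact hw0 (funext hc)
  have hne : (Finset.univ : Finset m).Nonempty := ⟨j0, Finset.mem_univ _⟩
  obtain ⟨i, -, hi⟩ := Finset.exists_max_image Finset.univ (fun j => ‖w j‖ / v j) hne
  set c : ℝ := ‖w i‖ / v i with hc
  have hcpos : 0 < c := by
    have h1 : 0 < ‖w j0‖ / v j0 := div_pos (by simpa using hj0) (hv j0)
    exact lt_of_lt_of_le h1 (hi j0 (Finset.mem_univ _))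
  have hwle : ∀ j, ‖w j‖ ≤ c * v j := by
    intro j
    have h := hi j (Finset.mem_univ _)
    rw [div_le_iff₀ (hv j)] at h
    exact h
  have hwi : ‖w i‖ = c * v i := by rw [hc, div_mul_cancel₀ _ (hv i).ne']
  -- Gershgorin estimate at i
  have key : ‖z - M i i‖ * (c * v i) ≤ ∑ j ∈ Finset.univ.erase i, M i j * (c * v j) := by
    have h2 : (z - (M i i : ℂ)) * w i = ∑ j ∈ Finset.univ.erase i, (M i j : ℂ) * w j := by
      have := heig i
      rw [← Finset.add_sum_erase _ _ (Finset.mem_univ i)] at this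
      ring_nf
      ring_nf at this
      linear_combination this
    calc ‖z - M i i‖ * (c * v i) = ‖(z - (M i i:ℂ)) * w i‖ := by
          rw [norm_mul, hwi]
      _ = ‖∑ j ∈ Finset.univ.erase i, (M i j : ℂ) * w j‖ := by rw [h2]
      _ ≤ ∑ j ∈ Finset.univ.erase i, ‖(M i j : ℂ) * w j‖ := norm_sum_le _ _
      _ ≤ ∑ j ∈ Finset.univ.erase i, M i j * (c * v j) := by
          apply Finset.sum_le_sum
          intro j hj
          rw [norm_mul, Complex.norm_real]
          have hMij : 0 ≤ M i j := hoff i j (fun h => (Finset.mem_erase.mp hj).1 h.symm)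
          rw [Real.norm_eq_abs, abs_of_nonneg hMij]
          exact mul_le_mul_of_nonneg_left (hwle j) hMij
  have hsum : ∑ j ∈ Finset.univ.erase i, M i j * v j < - (M i i * v i) := by
    have := hMv i
    rw [Matrix.mulVec, dotProduct, ← Finset.add_sum_erase _ _ (Finset.mem_univ i)] at this
    linarith
  have hlt : ‖z - M i i‖ < - M i i := by
    have h3 : ∑ j ∈ Finset.univ.erase i, M i j * (c * v j)
        = c * ∑ j ∈ Finset.univ.erase i, M i j * v j := by
      rw [Finset.mul_sum]; congr 1; ext j; ring
    have h4 : ‖z - M i i‖ * (c * v i) < c * (-(M i i * v i)) := by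
      calc ‖z - M i i‖ * (c * v i) ≤ c * ∑ j ∈ Finset.univ.erase i, M i j * v j := by
            rw [← h3]; exact key
        _ < c * (-(M i i * v i)) := by
            exact (mul_lt_mul_iff_right₀ hcpos).mpr hsum
    have hvi := hv i
    have h4' : c * -(M i i * v i) = -M i i * (c * v i) := by ring
    rw [h4'] at h4
    exact lt_of_mul_lt_mul_right h4 (by positivity)
  have : z.re - M i i ≤ ‖z - M i i‖ := by
    calc z.re - M i i = (z - (M i i:ℂ)).re := by simp
      _ ≤ ‖z - (M i i:ℂ)‖ := Complex.re_le_norm _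
  linarith

attribute [local instance] Matrix.linftyOpNormedAddCommGroup Matrix.linftyOpNormedRing
  Matrix.linftyOpNormedAlgebra

variable {m : Type*} [Fintype m] [DecidableEq m]

theorem nnnorm_map_ofReal (N : Matrix m m ℝ) : ‖N.map Complex.ofReal‖₊ = ‖N‖₊ := by
  rw [Matrix.linfty_opNNNorm_def, Matrix.linfty_opNNNorm_def]
  congr 1
  ext i
  simp [Matrix.map_apply]

theorem map_ofReal_pow (N : Matrix m m ℝ) (k : ℕ) :
    (N.map Complex.ofReal) ^ k = (N ^ k).map Complex.ofReal := by
  have h : ∀ P : Matrix m m ℝ, P.map Complex.ofReal = Complex.ofRealHom.mapMatrix P :=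
    fun _ => rfl
  rw [h, h, ← map_pow]

theorem entry_nonneg_pow {x : Matrix m m ℝ} (hx : ∀ i j, 0 ≤ x i j) (k : ℕ) :
    ∀ i j, 0 ≤ (x ^ k) i j := by
  induction k with
  | zero =>
    intro i j
    by_cases h : i = j <;> simp [Matrix.one_apply, h]
  | succ k ih =>
    intro i j
    rw [pow_succ, Matrix.mul_apply]
    exact Finset.sum_nonneg fun l _ => mul_nonneg (ih i l) (hx l j)

theorem inv_entries_nonpos {M : Matrix m m ℝ} (hoff : ∀ i j, i ≠ j → 0 ≤ M i j)
    (h : HurwitzStable M) : IsUnit M.det ∧ ∀ i j, M⁻¹ i j ≤ 0 := by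
  classical
  set S := spectrum ℂ (M.map Complex.ofReal) with hS
  have hfin : S.Finite := Matrix.finite_spectrum _
  -- choose α
  obtain ⟨C, hC⟩ := (((hfin.image fun z => ‖z‖^2 / (2 * (-z.re)))).union
      (Set.finite_range fun i => -M i i)).bddAbove
  set α : ℝ := max C 0 + 1 with hα_def
  have hα : 0 < α := by
    have : (0:ℝ) ≤ max C 0 := le_max_right _ _
    linarith
  have hdiag : ∀ i, 0 ≤ M i i + α := by
    intro i
    have h1 : -M i i ≤ C := hC (Or.inr ⟨i, rfl⟩)
    have h2 : C ≤ max C 0 := le_max_left _ _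
    simp only [hα_def]; linarith
  have hspec : ∀ z ∈ S, ‖z + (α:ℂ)‖ < α := by
    intro z hz
    have hre : z.re < 0 := h z hz
    have h1 : ‖z‖^2 / (2 * (-z.re)) ≤ C := hC (Or.inl ⟨z, hz, rfl⟩)
    have h2 : ‖z‖^2 / (2 * (-z.re)) ≤ α - 1 := le_trans h1 (by
      have := le_max_left C 0; simp only [hα_def]; linarith)
    have hpos : 0 < 2 * (-z.re) := by linarith
    have h3 : ‖z‖^2 ≤ (α - 1) * (2 * (-z.re)) := by
      rwa [div_le_iff₀ hpos] at h2
    have e1 : ‖z + (α:ℂ)‖^2 = (z.re + α)^2 + z.im^2 := by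
      rw [Complex.sq_norm, Complex.normSq_apply]
      simp only [Complex.add_re, Complex.add_im, Complex.ofReal_re, Complex.ofReal_im, add_zero]
      ring
    have e2 : ‖z‖^2 = z.re^2 + z.im^2 := by
      rw [Complex.sq_norm, Complex.normSq_apply]; ring
    have h4 : ‖z + (α:ℂ)‖^2 < α^2 := by nlinarith
    exact lt_of_pow_lt_pow_left₀ 2 hα.le h4
  -- the shifted matrix B
  set B : Matrix m m ℝ := M + α • 1 with hB_def
  have hB0 : ∀ i j, 0 ≤ B i j := by
    intro i j
    by_cases hij : i = j
    · subst hij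
      simpa [hB_def, Matrix.add_apply, Matrix.smul_apply, Matrix.one_apply] using hdiag i
    · simpa [hB_def, Matrix.add_apply, Matrix.smul_apply, Matrix.one_apply, hij]
        using hoff i j hij
  set a : Matrix m m ℂ := B.map Complex.ofReal with ha_def
  -- spectrum of a
  have haspec : ∀ ζ ∈ spectrum ℂ a, ‖ζ‖ < α := by
    have hmapeq : a = M.map Complex.ofReal + algebraMap ℂ (Matrix m m ℂ) (α:ℂ) := by
      ext i j
      by_cases hij : i = j <;>
        simp [ha_def, hB_def, Matrix.map_apply, Matrix.add_apply, Matrix.smul_apply,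
          Matrix.one_apply, Matrix.algebraMap_matrix_apply, hij]
    intro ζ hζ
    rw [hmapeq, ← spectrum.add_singleton_eq] at hζ
    obtain ⟨z, hz, w, hw, rfl⟩ := Set.mem_add.mp hζ
    rw [Set.mem_singleton_iff] at hw
    subst hw
    exact hspec z hz
  -- bound the spectral radius
  obtain ⟨β, hβ0, hβα, hβbd⟩ : ∃ β : ℝ, 0 ≤ β ∧ β < α ∧ ∀ ζ ∈ spectrum ℂ a, ‖ζ‖ ≤ β := by
    set T : Set ℝ := insert 0 ((fun ζ => ‖ζ‖) '' spectrum ℂ a) with hT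
    have hTfin : T.Finite := ((Matrix.finite_spectrum a).image _).insert 0
    have hTne : T.Nonempty := ⟨0, Set.mem_insert _ _⟩
    refine ⟨sSup T, le_csSup hTfin.bddAbove (Set.mem_insert _ _), ?_, ?_⟩
    · rcases hTne.csSup_mem hTfin with h0 | ⟨ζ, hζ, hζe⟩
      · rw [h0]; exact hα
      · rw [← hζe]; exact haspec ζ hζ
    · intro ζ hζ
      exact le_csSup hTfin.bddAbove (Set.mem_insert_iff.mpr (Or.inr ⟨ζ, hζ, rfl⟩))
  have hρ : spectralRadius ℂ a ≤ ENNReal.ofReal β := by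
    rw [spectralRadius]
    refine iSup₂_le fun ζ hζ => ?_
    rw [← enorm_eq_nnnorm, ← ofReal_norm]
    exact ENNReal.ofReal_le_ofReal (hβbd ζ hζ)
  set γ : ℝ := (β + α) / 2 with hγ_def
  have hγ0 : 0 < γ := by simp only [hγ_def]; linarith
  have hγα : γ < α := by simp only [hγ_def]; linarith
  have hβγ : β < γ := by simp only [hγ_def]; linarith
  -- Gelfand's formula
  have hgel := spectrum.pow_nnnorm_pow_one_div_tendsto_nhds_spectralRadius a
  have hργ : spectralRadius ℂ a < ENNReal.ofReal γ :=
    lt_of_le_of_lt hρ ((ENNReal.ofReal_lt_ofReal_iff hγ0).mpr hβγ)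
  have hev : ∀ᶠ k : ℕ in Filter.atTop, (‖a ^ k‖₊ : ENNReal) ^ (1 / (k:ℝ)) < ENNReal.ofReal γ :=
    hgel.eventually_lt_const hργ
  have hbd : ∀ᶠ k : ℕ in Filter.atTop, ‖a ^ k‖ ≤ γ ^ k := by
    filter_upwards [hev, Filter.eventually_ge_atTop 1] with k hk hk1
    have hk0 : (k:ℝ) ≠ 0 := by positivity
    have h1 : ((‖a ^ k‖₊ : ENNReal) ^ (1 / (k:ℝ))) ^ (k:ℕ) ≤ (ENNReal.ofReal γ) ^ (k:ℕ) :=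
      pow_le_pow_left' hk.le k
    rw [← ENNReal.rpow_natCast ((‖a ^ k‖₊ : ENNReal) ^ (1 / (k:ℝ))) k,
      ← ENNReal.rpow_mul, one_div, inv_mul_cancel₀ hk0, ENNReal.rpow_one] at h1
    rw [← ENNReal.ofReal_pow hγ0.le, ← enorm_eq_nnnorm, ← ofReal_norm,
      ENNReal.ofReal_le_ofReal_iff (by positivity)] at h1
    exact h1
  -- the real series
  set x : Matrix m m ℝ := α⁻¹ • B with hx_def
  have hx0 : ∀ i j, 0 ≤ x i j := by
    intro i j
    simp only [hx_def, Matrix.smul_apply, smul_eq_mul]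
    exact mul_nonneg (by positivity) (hB0 i j)
  have ha_pow : ∀ k : ℕ, ‖a ^ k‖ = ‖B ^ k‖ := by
    intro k
    rw [ha_def, map_ofReal_pow]
    exact congrArg NNReal.toReal (nnnorm_map_ofReal (B ^ k))
  have hnorm_pow : ∀ k : ℕ, ‖x ^ k‖ = (α⁻¹) ^ k * ‖a ^ k‖ := by
    intro k
    rw [hx_def, smul_pow, norm_smul, ha_pow k, Real.norm_eq_abs, abs_pow, abs_inv,
      abs_of_nonneg hα.le]
  have hxbd : ∀ᶠ k : ℕ in Filter.atTop, ‖x ^ k‖ ≤ (γ / α) ^ k := by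
    filter_upwards [hbd] with k hk
    rw [hnorm_pow k, div_pow]
    calc α⁻¹ ^ k * ‖a ^ k‖ ≤ α⁻¹ ^ k * γ ^ k :=
          mul_le_mul_of_nonneg_left hk (by positivity)
      _ = γ ^ k / α ^ k := by rw [inv_pow]; ring
  have hrat : 0 ≤ γ / α ∧ γ / α < 1 := ⟨by positivity, (div_lt_one hα).mpr hγα⟩
  have hsum : Summable fun k : ℕ => x ^ k :=
    Summable.of_norm_bounded_eventually_nat (summable_geometric_of_lt_one hrat.1 hrat.2) hxbd
  have hx_tend : Filter.Tendsto (fun k : ℕ => x ^ k) Filter.atTop (nhds 0) :=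
    hsum.tendsto_atTop_zero
  set T : Matrix m m ℝ := ∑' k : ℕ, x ^ k with hT_def
  -- entrywise nonnegativity of T
  have hT0 : ∀ i j, 0 ≤ T i j := by
    intro i j
    let L : Matrix m m ℝ →ₗ[ℝ] ℝ :=
      { toFun := fun N => N i j, map_add' := fun _ _ => rfl, map_smul' := fun _ _ => rfl }
    let L' : Matrix m m ℝ →L[ℝ] ℝ :=
      { toLinearMap := L, cont := L.continuous_of_finiteDimensional }
    have h1 : T i j = ∑' k : ℕ, (x ^ k) i j := L'.map_tsum hsum
    rw [h1]
    exact tsum_nonneg fun k => entry_nonneg_pow hx0 k i j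
  -- telescoping: (1 - x) * T = 1
  have hsum1 : Summable fun k : ℕ => x ^ (k + 1) := (summable_nat_add_iff 1).mpr hsum
  have hkey : HasSum (fun k : ℕ => x ^ k - x ^ (k + 1)) 1 := by
    rw [(hsum.sub hsum1).hasSum_iff_tendsto_nat]
    have hps : ∀ N : ℕ, ∑ k ∈ Finset.range N, (x ^ k - x ^ (k + 1)) = 1 - x ^ N := by
      intro N
      rw [Finset.sum_range_sub' (fun k => x ^ k)]
      simp
    simp only [hps]
    simpa using Filter.Tendsto.sub (tendsto_const_nhds (x := (1 : Matrix m m ℝ))) hx_tend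
  have hmul : (1 - x) * T = 1 := by
    have h1 : (1 - x) * T = ∑' k : ℕ, (1 - x) * x ^ k :=
      (hsum.tsum_mul_left (1 - x)).symm
    have h2 : (fun k : ℕ => (1 - x) * x ^ k) = fun k : ℕ => x ^ k - x ^ (k + 1) := by
      funext k
      rw [sub_mul, one_mul, pow_succ']
    rw [h1, h2, hkey.tsum_eq]
  -- conclude
  have hfact : -M = α • ((1 : Matrix m m ℝ) - x) := by
    rw [smul_sub, hx_def, smul_smul, mul_inv_cancel₀ hα.ne', one_smul, hB_def]
    ext i j
    simp [Matrix.add_apply, Matrix.sub_apply, Matrix.neg_apply]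
  have hMinv : M * (-(α⁻¹ • T)) = 1 := by
    have h1 : M * (-(α⁻¹ • T)) = (-M) * (α⁻¹ • T) := by
      rw [neg_mul, mul_neg]
    rw [h1, hfact, smul_mul_assoc, mul_smul_comm, smul_smul, mul_inv_cancel₀ hα.ne',
      one_smul, hmul]
  refine ⟨Matrix.isUnit_det_of_right_inverse hMinv, ?_⟩
  intro i j
  rw [Matrix.inv_eq_right_inv hMinv]
  simp only [Matrix.neg_apply, Matrix.smul_apply, smul_eq_mul, neg_nonpos]
  exact mul_nonneg (by positivity) (hT0 i j)

end Stmt14Aux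

set_option maxHeartbeats 1000000 in
/-- Lemma 5 of the paper: for a Metzler, invertible, output unstable matrix A, the control
input u* is stabilizing (i.e. A − u* eₙeₙᵀ is Hurwitz stable) if and only if g₀ < 0. -/
theorem stmt14 (n : ℕ) (A : Matrix (Fin (n+2)) (Fin (n+2)) ℝ)
    (hMetz : Metzler A) (hInv : IsUnit A.det)
    (h11 : HurwitzStable (A.submatrix Fin.castSucc Fin.castSucc))
    (hnn : 0 < A (Fin.last (n+1)) (Fin.last (n+1)))
    (b₀ : Fin (n+2) → ℝ) (hb₀ : ∀ i, 0 ≤ b₀ i) (r : ℝ) (hr : 0 < r)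
    (g₀ gn u : ℝ)
    (hg₀ : g₀ = -((A⁻¹ *ᵥ b₀) (Fin.last (n+1))))
    (hgn : gn = -(A⁻¹ (Fin.last (n+1)) (Fin.last (n+1))))
    (hu : u = (g₀ - r) / (gn * r)) :
    HurwitzStable (A - u • Matrix.vecMulVec
        (Pi.single (Fin.last (n+1)) 1) (Pi.single (Fin.last (n+1)) 1)) ↔ g₀ < 0 := by
  classical
  set l : Fin (n+2) := Fin.last (n+1) with hl
  set A11 : Matrix (Fin (n+1)) (Fin (n+1)) ℝ := A.submatrix Fin.castSucc Fin.castSucc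
    with hA11def
  have hA11off : ∀ i j, i ≠ j → 0 ≤ A11 i j := fun i j hij =>
    hMetz _ _ fun hc => hij (Fin.castSucc_injective _ hc)
  obtain ⟨hA11det, hA11neg⟩ := Stmt14Aux.inv_entries_nonpos hA11off h11
  have hA11r : A11 * A11⁻¹ = 1 := Matrix.mul_nonsing_inv _ hA11det
  have hA11l : A11⁻¹ * A11 = 1 := Matrix.nonsing_inv_mul _ hA11det
  have hcl : ∀ i : Fin (n+1), i.castSucc ≠ l := fun i => (Fin.castSucc_lt_last i).ne
  set b : Fin (n+1) → ℝ := fun i => A i.castSucc l with hbdef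
  set c : Fin (n+1) → ℝ := fun j => A l j.castSucc with hcdef
  set d : ℝ := A l l with hddef
  have hb0 : ∀ i, 0 ≤ b i := fun i => hMetz _ _ (hcl i)
  have hc0 : ∀ j, 0 ≤ c j := fun j => hMetz _ _ (hcl j).symm
  set cc : Fin (n+1) → ℝ := fun j => ∑ k, c k * A11⁻¹ k j with hccdef
  have hcc0 : ∀ j, cc j ≤ 0 := by
    intro j
    exact Finset.sum_nonpos fun k _ => mul_nonpos_of_nonneg_of_nonpos (hc0 k) (hA11neg k j)
  set s : ℝ := d - ∑ i, cc i * b i with hsdef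
  have hcb : ∑ i, cc i * b i ≤ 0 :=
    Finset.sum_nonpos fun i _ => mul_nonpos_of_nonpos_of_nonneg (hcc0 i) (hb0 i)
  have hs_pos : 0 < s := by
    have : 0 < d := hnn
    simp only [hsdef]; linarith
  -- the last row of A⁻¹
  have hAl : A⁻¹ * A = 1 := Matrix.nonsing_inv_mul _ hInv
  set p : Fin (n+1) → ℝ := fun i => A⁻¹ l i.castSucc with hpdef
  set q : ℝ := A⁻¹ l l with hqdef
  have E1 : ∀ j' : Fin (n+1), (∑ i, p i * A11 i j') + q * c j' = 0 := by
    intro j'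
    have h2 : (A⁻¹ * A) l j'.castSucc = (1 : Matrix (Fin (n+2)) (Fin (n+2)) ℝ) l j'.castSucc := by
      rw [hAl]
    rw [Matrix.mul_apply, Fin.sum_univ_castSucc] at h2
    rw [Matrix.one_apply_ne ((hcl j').symm)] at h2
    simpa [hA11def, Matrix.submatrix_apply, hpdef, hqdef, hcdef] using h2
  have E2 : (∑ i, p i * b i) + q * d = 1 := by
    have h2 : (A⁻¹ * A) l l = (1 : Matrix (Fin (n+2)) (Fin (n+2)) ℝ) l l := by rw [hAl]
    rw [Matrix.mul_apply, Fin.sum_univ_castSucc, Matrix.one_apply_eq] at h2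
    simpa [hpdef, hqdef, hbdef, hddef] using h2
  have E3 : ∀ j', p j' = -q * cc j' := by
    intro j'
    have h1 : ∑ k, (∑ i, p i * A11 i k) * A11⁻¹ k j'
        = ∑ i, p i * ∑ k, A11 i k * A11⁻¹ k j' := by
      simp_rw [Finset.sum_mul, Finset.mul_sum, mul_assoc]
      exact Finset.sum_comm
    have h2 : ∀ i, (∑ k, A11 i k * A11⁻¹ k j') = (1 : Matrix (Fin (n+1)) (Fin (n+1)) ℝ) i j' := by
      intro i; rw [← Matrix.mul_apply, hA11r]
    have h3 : ∑ k, (∑ i, p i * A11 i k) * A11⁻¹ k j' = p j' := by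
      rw [h1]
      simp_rw [h2]
      simp [Matrix.one_apply]
    have h4 : ∑ k, (∑ i, p i * A11 i k) * A11⁻¹ k j' = ∑ k, (-(q * c k)) * A11⁻¹ k j' := by
      apply Finset.sum_congr rfl
      intro k _
      have := E1 k
      have h5 : (∑ i, p i * A11 i k) = -(q * c k) := by linarith
      rw [h5]
    rw [← h3, h4]
    simp only [hccdef, Finset.mul_sum]
    apply Finset.sum_congr rfl
    intro k _
    ring
  have hqs : q * s = 1 := by
    have h1 : ∑ i, p i * b i = -q * ∑ i, cc i * b i := by
      rw [Finset.mul_sum]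
      apply Finset.sum_congr rfl
      intro i _
      rw [E3 i]; ring
    have hE2 := E2
    rw [h1] at hE2
    rw [hsdef]
    linear_combination hE2
  have hq0 : q ≠ 0 := fun h => by rw [h, zero_mul] at hqs; exact zero_ne_one hqs
  have hq_pos : 0 < q := by
    rcases lt_or_gt_of_ne hq0 with h | h
    · nlinarith
    · exact h
  have hseq : s = 1 / q := by
    rw [eq_div_iff hq0]
    linear_combination hqs
  -- g₀ and K
  set K : ℝ := b₀ l - ∑ i, cc i * b₀ i.castSucc with hKdef
  have hK0 : 0 ≤ K := by
    have h1 : ∑ i, cc i * b₀ i.castSucc ≤ 0 :=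
      Finset.sum_nonpos fun i _ => mul_nonpos_of_nonpos_of_nonneg (hcc0 i) (hb₀ _)
    have h2 : 0 ≤ b₀ l := hb₀ l
    simp only [hKdef]; linarith
  have hg0K : g₀ = -(q * K) := by
    rw [hg₀]
    have h1 : (A⁻¹ *ᵥ b₀) l = ∑ i, p i * b₀ i.castSucc + q * b₀ l := by
      rw [Matrix.mulVec, dotProduct, Fin.sum_univ_castSucc]
    have h2 : ∑ i, p i * b₀ i.castSucc = -q * ∑ i, cc i * b₀ i.castSucc := by
      rw [Finset.mul_sum]
      apply Finset.sum_congr rfl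
      intro i _
      rw [E3 i]; ring
    rw [h1, h2, hKdef]
    ring
  have hgnq : gn = -q := by rw [hgn]
  -- u = K / r + s
  have hu2 : u = K / r + s := by
    rw [hu, hg0K, hgnq, hseq]
    field_simp
    ring
  -- the modified matrix
  set A' : Matrix (Fin (n+2)) (Fin (n+2)) ℝ :=
    A - u • Matrix.vecMulVec (Pi.single l 1) (Pi.single l 1) with hA'def
  have hA'eq : ∀ i j, ¬(i = l ∧ j = l) → A' i j = A i j := by
    intro i j hij
    simp only [hA'def, Matrix.sub_apply, Matrix.smul_apply, Matrix.vecMulVec_apply,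
      smul_eq_mul, Pi.single_apply]
    rcases not_and_or.mp hij with h | h <;> simp [h]
  have hA'll : A' l l = d - u := by
    simp [hA'def, Matrix.sub_apply, Matrix.smul_apply, Matrix.vecMulVec_apply, Pi.single_apply,
      hddef]
  have hA'off : ∀ i j, i ≠ j → 0 ≤ A' i j := by
    intro i j hij
    rw [hA'eq i j (fun hc => hij (hc.1.trans hc.2.symm))]
    exact hMetz i j hij
  -- determinant identity
  have hdetA' : A'.det = A11.det * (d - u - ∑ i, cc i * b i) := by
    haveI : Invertible A11 := A11.invertibleOfIsUnitDet hA11det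
    have hEl : ∀ i : Fin (n+1), (finSumFinEquiv : Fin (n+1) ⊕ Fin 1 ≃ Fin (n+2)) (Sum.inl i)
        = i.castSucc := by
      intro i; apply Fin.ext; simp [Fin.castSucc, Fin.castAdd]
    have hEr : (finSumFinEquiv : Fin (n+1) ⊕ Fin 1 ≃ Fin (n+2)) (Sum.inr (0 : Fin 1)) = l := by
      apply Fin.ext; simp [hl]
    have hblock : A'.submatrix (finSumFinEquiv : Fin (n+1) ⊕ Fin 1 ≃ Fin (n+2))
        (finSumFinEquiv : Fin (n+1) ⊕ Fin 1 ≃ Fin (n+2)) =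
        Matrix.fromBlocks A11 (Matrix.of fun i (_ : Fin 1) => b i)
          (Matrix.of fun (_ : Fin 1) j => c j) (Matrix.of fun _ _ => d - u) := by
      ext i j
      rcases i with i | i <;> rcases j with j | j
      · rw [Matrix.submatrix_apply, hEl i, hEl j, hA'eq _ _ (by simp [hcl i])]
        simp [hA11def]
      · have hj : j = 0 := Subsingleton.elim _ _
        subst hj
        rw [Matrix.submatrix_apply, hEl i, hEr, hA'eq _ _ (by simp [hcl i])]
        simp [hbdef]
      · have hi : i = 0 := Subsingleton.elim _ _
        subst hi
        rw [Matrix.submatrix_apply, hEr, hEl j, hA'eq _ _ (by simp [hcl j])]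
        simp [hcdef]
      · have hi : i = 0 := Subsingleton.elim _ _
        have hj : j = 0 := Subsingleton.elim _ _
        subst hi; subst hj
        rw [Matrix.submatrix_apply, hEr, hA'll]
        simp
    have h1 : A'.det = (A'.submatrix (finSumFinEquiv : Fin (n+1) ⊕ Fin 1 ≃ Fin (n+2))
        (finSumFinEquiv : Fin (n+1) ⊕ Fin 1 ≃ Fin (n+2))).det :=
      (Matrix.det_submatrix_equiv_self _ _).symm
    rw [h1, hblock, Matrix.det_fromBlocks₁₁]
    congr 1
    rw [Matrix.det_fin_one]
    simp only [Matrix.sub_apply, Matrix.of_apply]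
    rw [Matrix.invOf_eq_nonsing_inv]
    congr 1
  -- equivalences
  have hKg : g₀ < 0 ↔ 0 < K := by
    constructor
    · intro h
      rcases eq_or_lt_of_le hK0 with hK | hK
      · exfalso; rw [hg0K, ← hK] at h; simp at h
      · exact hK
    · intro h
      rw [hg0K]
      nlinarith
  constructor
  · -- Hurwitz → g₀ < 0
    intro hH
    rw [hKg]
    rcases eq_or_lt_of_le hK0 with hK | hK
    · exfalso
      have hdet0 : A'.det = 0 := by
        rw [hdetA', hu2, ← hK, hsdef]
        ring
      exact Stmt14Aux.det_ne_zero_of_hurwitz hH hdet0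
    · exact hK
  · -- g₀ < 0 → Hurwitz
    intro hg0lt
    have hK : 0 < K := hKg.mp hg0lt
    set L : ℝ := -∑ j, cc j with hLdef
    have hL0 : 0 ≤ L := by
      have : ∑ j, cc j ≤ 0 := Finset.sum_nonpos fun j _ => hcc0 j
      simp only [hLdef]; linarith
    set ε : ℝ := (K / r) / (2 * (L + 1)) with hεdef
    have hKr : 0 < K / r := div_pos hK hr
    have hε : 0 < ε := by
      apply div_pos hKr
      linarith
    set x : Fin (n+1) → ℝ := fun i => ∑ j, (-(A11⁻¹ i j)) * (b j + ε) with hxdef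
    have hx_pos : ∀ i, 0 < x i := by
      intro i
      obtain ⟨j0, hj0⟩ : ∃ j, A11⁻¹ i j ≠ 0 := by
        by_contra hcon
        push_neg at hcon
        have h1 : (A11⁻¹ * A11) i i = 0 := by
          rw [Matrix.mul_apply]
          exact Finset.sum_eq_zero fun j _ => by rw [hcon j, zero_mul]
        rw [hA11l, Matrix.one_apply_eq] at h1
        exact one_ne_zero h1
      apply Finset.sum_pos'
      · intro j _
        apply mul_nonneg
        · linarith [hA11neg i j]
        · linarith [hb0 j]
      · refine ⟨j0, Finset.mem_univ _, ?_⟩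
        apply mul_pos
        · rcases lt_or_eq_of_le (hA11neg i j0) with h | h
          · linarith
          · exact absurd h hj0
        · linarith [hb0 j0]
    set v : Fin (n+2) → ℝ := Fin.lastCases 1 x with hvdef
    have hv_cast : ∀ i : Fin (n+1), v i.castSucc = x i := by
      intro i; simp [hvdef]
    have hv_last : v l = 1 := by simp [hvdef, hl]
    have hv_pos : ∀ i, 0 < v i := by
      intro i
      refine Fin.lastCases ?_ ?_ i
      · rw [← hl, hv_last]; norm_num
      · intro j; rw [hv_cast]; exact hx_pos j
    -- A11 * x = -(b + ε)
    have hA11x : ∀ i, ∑ j, A11 i j * x j = -(b i + ε) := by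
      intro i
      have h1 : ∑ j, A11 i j * x j = ∑ k, (∑ j, A11 i j * (-(A11⁻¹ j k))) * (b k + ε) := by
        simp_rw [hxdef, Finset.mul_sum, Finset.sum_mul]
        rw [Finset.sum_comm]
        apply Finset.sum_congr rfl; intro j _
        apply Finset.sum_congr rfl; intro k _
        ring
      have h2 : ∀ k, (∑ j, A11 i j * (-(A11⁻¹ j k)))
          = -((1 : Matrix (Fin (n+1)) (Fin (n+1)) ℝ) i k) := by
        intro k
        have h3 : ∑ j, A11 i j * (-(A11⁻¹ j k)) = -∑ j, A11 i j * A11⁻¹ j k := by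
          rw [← Finset.sum_neg_distrib]
          apply Finset.sum_congr rfl; intro j _; ring
        rw [h3, ← Matrix.mul_apply, hA11r]
      rw [h1]
      calc ∑ k, (∑ j, A11 i j * (-(A11⁻¹ j k))) * (b k + ε)
          = ∑ k, (-((1 : Matrix (Fin (n+1)) (Fin (n+1)) ℝ) i k)) * (b k + ε) := by
            apply Finset.sum_congr rfl; intro k _; rw [h2 k]
        _ = -(b i + ε) := by
            simp [Matrix.one_apply, ite_mul, Finset.sum_ite_eq, Finset.mem_univ]
    -- c ⬝ x
    have hcx : ∑ j, c j * x j = -(∑ k, cc k * b k) + ε * L := by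
      have h1 : ∑ j, c j * x j = ∑ k, (∑ j, c j * (-(A11⁻¹ j k))) * (b k + ε) := by
        simp_rw [hxdef, Finset.mul_sum, Finset.sum_mul]
        rw [Finset.sum_comm]
        apply Finset.sum_congr rfl; intro j _
        apply Finset.sum_congr rfl; intro k _
        ring
      have h2 : ∀ k, (∑ j, c j * (-(A11⁻¹ j k))) = -cc k := by
        intro k
        simp only [hccdef]
        rw [← Finset.sum_neg_distrib]
        apply Finset.sum_congr rfl; intro j _; ring
      rw [h1]
      calc ∑ k, (∑ j, c j * (-(A11⁻¹ j k))) * (b k + ε)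
          = ∑ k, (-cc k) * (b k + ε) := by
            apply Finset.sum_congr rfl; intro k _; rw [h2 k]
        _ = (∑ k, -(cc k * b k)) + ∑ k, -(cc k) * ε := by
            rw [← Finset.sum_add_distrib]
            apply Finset.sum_congr rfl; intro k _; ring
        _ = -(∑ k, cc k * b k) + ε * L := by
            rw [hLdef, Finset.sum_neg_distrib, ← Finset.sum_mul, Finset.sum_neg_distrib]
            ring
    -- rows of A' *ᵥ v
    have hεL : ε * L < K / r := by
      have h3 : ε * (2 * (L + 1)) = K / r := by
        have h2L : (2:ℝ) * (L + 1) ≠ 0 := by positivity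
        rw [hεdef, div_mul_cancel₀ _ h2L]
      nlinarith
    have hA'v : ∀ i, (A' *ᵥ v) i < 0 := by
      intro i0
      refine Fin.lastCases ?_ ?_ i0
      · have hsum_eq : ∑ j : Fin (n+1), A' l j.castSucc * v j.castSucc
            = ∑ j, c j * x j := by
          apply Finset.sum_congr rfl
          intro j _
          rw [hv_cast, hA'eq _ _ (by simp [hcl j])]
        have h1 : (A' *ᵥ v) l = ∑ j, c j * x j + (d - u) := by
          rw [Matrix.mulVec, dotProduct, Fin.sum_univ_castSucc, hv_last, mul_one,
            hA'll, hsum_eq]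
        rw [h1, hcx]
        have hgoal : -∑ k : Fin (n+1), cc k * b k + ε * L + (d - u) = ε * L - K / r := by
          rw [hu2, hsdef]; ring
        rw [hgoal]
        linarith
      · intro i
        have hsum_eq : ∑ j : Fin (n+1), A' i.castSucc j.castSucc * v j.castSucc
            = ∑ j, A11 i j * x j := by
          apply Finset.sum_congr rfl
          intro j _
          rw [hv_cast, hA'eq _ _ (by simp [hcl i])]
          simp only [hA11def, Matrix.submatrix_apply]
        have hbl : A' i.castSucc l * v l = b i := by
          rw [hv_last, mul_one, hA'eq _ _ (by simp [hcl i])]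
        have h1 : (A' *ᵥ v) i.castSucc = ∑ j, A11 i j * x j + b i := by
          rw [Matrix.mulVec, dotProduct, Fin.sum_univ_castSucc, hsum_eq, hbl]
        rw [h1, hA11x i]
        linarith
    exact Stmt14Aux.hurwitz_of_pos_vec hA'off hv_pos hA'v
end
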